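/- arXiv:1610.02754 — 8 statements merged into one kernel-verified Lean document; each statement's English description precedes it below -/
import Mathlib

section
/- Let σ=(σ_1,...,σ_n) and τ=(τ_1,...,τ_n) be two sequences of positive integers differing exactly at indices n_1 < ... < n_t, and suppose max over these indices of σ_{n_i}+1 and τ_{n_i}+1 is at most ψ(n) for some ψ(n). If ε>0 and 2^{(n-1)ε} ≥ 2 ψ(n)^{2t}, then the lengths of the corresponding rank-n basic intervals satisfy |I_n(τ)|^{1+ε} ≤ |I_n(σ)| ≤ |I_n(τ)|^{1-ε}. -/
open Filter MeasureTheory Set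

/-- The Gauss map. -/
noncomputable def gaussMap (x : ℝ) : ℝ := Int.fract x⁻¹

/-- The `n`-th continued fraction partial quotient of `x` (1-indexed). -/
noncomputable def cfA (x : ℝ) (n : ℕ) : ℕ := ⌊(gaussMap^[n - 1] x)⁻¹⌋₊

/-- The rank-`n` basic interval with prescribed partial quotients `a 1, …, a n`. -/
def basicIntervalSeq (a : ℕ → ℕ) (n : ℕ) : Set ℝ :=
  {x : ℝ | x ∈ Set.Ioo (0 : ℝ) 1 ∧ Irrational x ∧ ∀ j, 1 ≤ j → j ≤ n → cfA x j = a j}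

section Aux

def cont : List ℕ → ℕ
  | [] => 1
  | [a] => a
  | a :: b :: l => a * cont (b :: l) + cont l
def pnum : List ℕ → ℕ
  | [] => 0
  | _ :: l => cont l
@[simp] lemma cont_nil : cont [] = 1 := rfl
@[simp] lemma cont_singleton (a : ℕ) : cont [a] = a := rfl
@[simp] lemma pnum_nil : pnum [] = 0 := rfl
@[simp] lemma pnum_cons (a : ℕ) (l : List ℕ) : pnum (a :: l) = cont l := rfl
lemma cont_cons2 (a b : ℕ) (l : List ℕ) : cont (a :: b :: l) = a * cont (b :: l) + cont l := rfl
lemma cont_cons (a : ℕ) (m : List ℕ) : cont (a :: m) = a * cont m + pnum m := by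
  cases m with
  | nil => simp [cont]
  | cons b l => simp [cont]
lemma one_le_cont (l : List ℕ) (h : ∀ a ∈ l, 1 ≤ a) : 1 ≤ cont l := by
  induction l with
  | nil => simp
  | cons a m ih =>
    rw [cont_cons]
    have h1 : 1 ≤ a := h a (by simp)
    have h2 : 1 ≤ cont m := ih fun x hx => h x (by simp [hx])
    nlinarith [Nat.zero_le (pnum m)]
lemma pnum_le_cont (l : List ℕ) (h : ∀ a ∈ l, 1 ≤ a) : pnum l ≤ cont l := by
  cases l with
  | nil => simp
  | cons a m =>
    rw [cont_cons, pnum_cons]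
    have h1 : 1 ≤ a := h a (by simp)
    nlinarith [Nat.zero_le (pnum m)]
lemma cont_tail_le (l : List ℕ) (h : ∀ a ∈ l, 1 ≤ a) : cont l.tail ≤ cont l := by
  cases l with
  | nil => simp
  | cons a m =>
    simp only [List.tail_cons]
    rw [cont_cons]
    have h1 : 1 ≤ a := h a (by simp)
    nlinarith [Nat.zero_le (pnum m), one_le_cont m (fun x hx => h x (by simp [hx]))]

lemma cont_dropLast_le (l : List ℕ) (h : ∀ a ∈ l, 1 ≤ a) : cont l.dropLast ≤ cont l := by
  have key : ∀ k (l : List ℕ), l.length ≤ k → (∀ a ∈ l, 1 ≤ a) → cont l.dropLast ≤ cont l := by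
    intro k
    induction k with
    | zero =>
      intro l hl _
      have : l = [] := List.length_eq_zero_iff.mp (Nat.le_zero.mp hl)
      simp [this]
    | succ k ih =>
      intro l hl h
      match l with
      | [] => simp
      | [a] => simpa using h a (by simp)
      | a :: b :: m =>
        rw [show (a :: b :: m).dropLast = a :: (b :: m).dropLast from rfl,
          cont_cons, cont_cons]
        have hlen : (b :: m).length ≤ k := by simp at hl ⊢; omega
        have hmem : ∀ x ∈ (b :: m), 1 ≤ x := fun x hx => h x (by simp at hx ⊢; tauto)
        have h1 : cont (b :: m).dropLast ≤ cont (b :: m) := ih _ hlen hmem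
        have h2 : pnum ((b :: m).dropLast) ≤ pnum (b :: m) := by
          cases m with
          | nil => simp
          | cons c m' =>
            rw [show ((b :: c :: m').dropLast) = b :: (c :: m').dropLast from rfl,
              pnum_cons, pnum_cons]
            exact ih (c :: m') (by simp at hl ⊢; omega)
              (fun x hx => h x (by simp at hx ⊢; tauto))
        exact Nat.add_le_add (Nat.mul_le_mul_left a h1) h2
  exact key l.length l le_rfl h

lemma two_pow_le_cont_mul (l : List ℕ) (hne : l ≠ []) (h : ∀ a ∈ l, 1 ≤ a) :
    2 ^ (l.length - 1) ≤ cont l * cont l.tail := by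
  induction l with
  | nil => simp at hne
  | cons a m ih =>
    cases m with
    | nil => simpa using h a (by simp)
    | cons b m' =>
      have hmem : ∀ x ∈ (b :: m'), 1 ≤ x := fun x hx => h x (by simp at hx ⊢; tauto)
      have IH := ih (by simp) hmem
      have htl : cont (b :: m').tail ≤ cont (b :: m') := cont_tail_le _ hmem
      rw [cont_cons]
      have h1 : 1 ≤ a := h a (by simp)
      simp only [List.tail_cons] at *
      have hlen : (a :: b :: m').length - 1 = (b :: m').length - 1 + 1 := by simp
      rw [hlen, pow_succ]
      have hp : pnum (b :: m') = cont m' := rfl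
      rw [hp]
      nlinarith [Nat.mul_le_mul_right (cont (b :: m')) htl, one_le_cont (b :: m') hmem]

lemma cont_det (l : List ℕ) (hne : l ≠ []) :
    (pnum l : ℤ) * cont l.dropLast - cont l * pnum l.dropLast = (-1) ^ (l.length + 1) := by
  induction l with
  | nil => simp at hne
  | cons a m ih =>
    cases m with
    | nil => simp
    | cons b m' =>
      have IH := ih (by simp)
      rw [show (a :: b :: m').dropLast = a :: (b :: m').dropLast from rfl]
      rw [pnum_cons, pnum_cons, cont_cons a (b :: m'), cont_cons a ((b :: m').dropLast)]
      push_cast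
      have hlen : (a :: b :: m').length + 1 = ((b :: m').length + 1) + 1 := by simp
      rw [hlen, pow_succ]
      nlinarith [IH]

/-- Changing one entry `b → c` (both ≥ 1) multiplies the continuant by at most `b`. -/
lemma cont_change (b c : ℕ) (hb : 1 ≤ b) (hc : 1 ≤ c) (y : List ℕ) :
    ∀ x : List ℕ, cont (x ++ b :: y) ≤ b * cont (x ++ c :: y) := by
  have key : ∀ k (x : List ℕ), x.length ≤ k → cont (x ++ b :: y) ≤ b * cont (x ++ c :: y) := by
    intro k
    induction k with
    | zero =>
      intro x hx
      have hx0 : x = [] := List.length_eq_zero_iff.mp (Nat.le_zero.mp hx)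
      subst hx0
      simp only [List.nil_append]
      cases y with
      | nil => simpa using Nat.le_mul_of_pos_right b hc
      | cons d y' =>
        rw [cont_cons2, cont_cons2]
        calc b * cont (d :: y') + cont y' ≤ b * (c * cont (d :: y')) + b * cont y' :=
              Nat.add_le_add (Nat.mul_le_mul_left _ (Nat.le_mul_of_pos_left _ hc))
                (Nat.le_mul_of_pos_left _ hb)
          _ = b * (c * cont (d :: y') + cont y') := by ring
    | succ k ih =>
      intro x hx
      match x with
      | [] => exact ih [] (by simp)
      | [a] =>
        simp only [List.cons_append, List.nil_append]
        rw [cont_cons2, cont_cons2]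
        have h1 := ih [] (by simp)
        simp only [List.nil_append] at h1
        have h2 : cont y ≤ b * cont y := Nat.le_mul_of_pos_left _ hb
        calc a * cont (b :: y) + cont y ≤ a * (b * cont (c :: y)) + b * cont y :=
              Nat.add_le_add (Nat.mul_le_mul_left _ h1) h2
          _ = b * (a * cont (c :: y) + cont y) := by ring
      | a :: a' :: x'' =>
        simp only [List.cons_append]
        rw [cont_cons2, cont_cons2]
        have h1 := ih (a' :: x'') (by simp at hx ⊢; omega)
        have h2 := ih x'' (by simp at hx ⊢; omega)
        simp only [List.cons_append] at h1
        calc a * cont (a' :: (x'' ++ b :: y)) + cont (x'' ++ b :: y)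
            ≤ a * (b * cont (a' :: (x'' ++ c :: y))) + b * cont (x'' ++ c :: y) :=
              Nat.add_le_add (Nat.mul_le_mul_left _ h1) h2
          _ = b * (a * cont (a' :: (x'' ++ c :: y)) + cont (x'' ++ c :: y)) := by ring
  exact fun x => key x.length x le_rfl

def seqList (σ : ℕ → ℕ) (n : ℕ) : List ℕ := (List.range n).map fun k => σ (k + 1)

@[simp] lemma seqList_length (σ : ℕ → ℕ) (n : ℕ) : (seqList σ n).length = n := by
  simp [seqList]

lemma seqList_getElem (σ : ℕ → ℕ) (n k : ℕ) (hk : k < (seqList σ n).length) :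
    (seqList σ n)[k] = σ (k + 1) := by
  simp [seqList]

lemma cont_change_at (l1 l2 : List ℕ) (i : ℕ) (hi : i < l1.length)
    (hlen : l1.length = l2.length)
    (hag : ∀ j (hj : j < l1.length), j ≠ i → l1[j] = l2[j]'(hlen ▸ hj))
    (h1 : 1 ≤ l1[i]) (h2 : 1 ≤ l2[i]'(hlen ▸ hi)) :
    cont l1 ≤ l1[i] * cont l2 := by
  have hi2 : i < l2.length := hlen ▸ hi
  have htake : l1.take i = l2.take i := by
    apply List.ext_getElem (by simp [hlen])
    intro j j1 j2
    have hj : j < i := by simp [List.length_take] at j1; omega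
    rw [List.getElem_take, List.getElem_take]
    exact hag j (by omega) (by omega)
  have hdrop : l1.drop (i + 1) = l2.drop (i + 1) := by
    apply List.ext_getElem (by simp [hlen])
    intro j j1 j2
    rw [List.getElem_drop, List.getElem_drop]
    exact hag (i + 1 + j) (by simp at j1; omega) (by omega)
  have e1 : l1 = l1.take i ++ l1[i] :: l1.drop (i + 1) := by
    conv_lhs => rw [← List.take_append_drop i l1]
    rw [List.drop_eq_getElem_cons hi]
  have e2 : l2 = l1.take i ++ (l2[i]'hi2) :: l1.drop (i + 1) := by
    conv_lhs => rw [← List.take_append_drop i l2]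
    rw [List.drop_eq_getElem_cons hi2, htake, hdrop]
  have key := cont_change (l1[i]) (l2[i]'hi2) h1 h2 (l1.drop (i + 1)) (l1.take i)
  rw [← e1, ← e2] at key
  exact key

lemma cont_changes (n : ℕ) (S : Finset ℕ) :
    ∀ σ τ : ℕ → ℕ, S ⊆ Finset.Icc 1 n →
    (∀ j, 1 ≤ j → j ≤ n → 1 ≤ σ j) → (∀ j, 1 ≤ j → j ≤ n → 1 ≤ τ j) →
    (∀ j, 1 ≤ j → j ≤ n → j ∉ S → σ j = τ j) →
    cont (seqList σ n) ≤ (∏ i ∈ S, σ i) * cont (seqList τ n) := by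
  induction S using Finset.induction_on with
  | empty =>
    intro σ τ _ _ _ hag
    have : seqList σ n = seqList τ n := by
      apply List.ext_getElem (by simp)
      intro j j1 j2
      rw [seqList_getElem, seqList_getElem]
      exact hag (j + 1) (by omega) (by simp at j1; omega) (by simp)
    simp [this]
  | @insert a S ha ih =>
    intro σ τ hsub hσ hτ hag
    have haIcc : a ∈ Finset.Icc 1 n := hsub (by simp)
    have ha1 : 1 ≤ a := (Finset.mem_Icc.mp haIcc).1
    have han : a ≤ n := (Finset.mem_Icc.mp haIcc).2
    set σ' := Function.update σ a (τ a) with hσ'def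
    have hσ'1 : ∀ j, 1 ≤ j → j ≤ n → 1 ≤ σ' j := by
      intro j hj1 hj2
      by_cases hja : j = a
      · subst hja; simp [hσ'def, Function.update_self]; exact hτ j hj1 hj2
      · simp [hσ'def, Function.update_of_ne hja]; exact hσ j hj1 hj2
    have step1 : cont (seqList σ n) ≤ σ a * cont (seqList σ' n) := by
      have hi : a - 1 < (seqList σ n).length := by simp; omega
      have hgi : (seqList σ n)[a - 1] = σ a := by
        rw [seqList_getElem]; congr 1; omega
      calc cont (seqList σ n) ≤ (seqList σ n)[a-1] * cont (seqList σ' n) := by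
            apply cont_change_at _ _ (a - 1) hi (by simp)
            · intro j hj hja
              rw [seqList_getElem, seqList_getElem]
              have : j + 1 ≠ a := by omega
              simp [hσ'def, Function.update_of_ne this]
            · rw [hgi]; exact hσ a ha1 han
            · rw [seqList_getElem]
              have : a - 1 + 1 = a := by omega
              rw [this]
              simp [hσ'def, Function.update_self]
              exact hτ a ha1 han
        _ = σ a * cont (seqList σ' n) := by rw [hgi]
    have step2 : cont (seqList σ' n) ≤ (∏ i ∈ S, σ' i) * cont (seqList τ n) := by
      apply ih σ' τ (fun x hx => hsub (by simp [hx])) hσ'1 hτ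
      intro j hj1 hj2 hjS
      by_cases hja : j = a
      · subst hja; simp [hσ'def, Function.update_self]
      · simp [hσ'def, Function.update_of_ne hja]
        exact hag j hj1 hj2 (by simp [hja, hjS])
    have hprod : ∏ i ∈ S, σ' i = ∏ i ∈ S, σ i := by
      apply Finset.prod_congr rfl
      intro i hiS
      have : i ≠ a := fun h => ha (h ▸ hiS)
      simp [hσ'def, Function.update_of_ne this]
    rw [Finset.prod_insert ha]
    calc cont (seqList σ n) ≤ σ a * ((∏ i ∈ S, σ' i) * cont (seqList τ n)) := by
          exact le_trans step1 (Nat.mul_le_mul_left _ step2)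
      _ = σ a * (∏ i ∈ S, σ i) * cont (seqList τ n) := by rw [hprod]; ring

lemma pnum_dropLast_eq (a : ℕ) (m : List ℕ) (hm : m ≠ []) :
    pnum ((a :: m).dropLast) = cont (m.dropLast) := by
  cases m with
  | nil => simp at hm
  | cons b l => rfl

lemma dropLast_cons (a : ℕ) (m : List ℕ) (hm : m ≠ []) :
    (a :: m).dropLast = a :: m.dropLast := by
  cases m with
  | nil => simp at hm
  | cons b l => rfl

/-- endpoints of the basic interval of `l` -/
noncomputable def endA (l : List ℕ) : ℝ := (pnum l : ℝ) / (cont l)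
noncomputable def endB (l : List ℕ) : ℝ :=
  ((pnum l : ℝ) + pnum l.dropLast) / ((cont l : ℝ) + cont l.dropLast)

def ISet (l : List ℕ) : Set ℝ :=
  {x | x ∈ Set.Ioo (0 : ℝ) 1 ∧ Irrational x ∧ ∀ k, (hk : k < l.length) → cfA x (k + 1) = l[k]}

lemma cont_pos_real {l : List ℕ} (h : ∀ a ∈ l, 1 ≤ a) : (0 : ℝ) < cont l := by
  exact_mod_cast Nat.lt_of_lt_of_le Nat.zero_lt_one (one_le_cont l h)

lemma dropLast_entries {l : List ℕ} (h : ∀ a ∈ l, 1 ≤ a) : ∀ a ∈ l.dropLast, 1 ≤ a :=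
  fun a ha => h a ((List.dropLast_sublist l).subset ha)

lemma endA_nonneg {l : List ℕ} : 0 ≤ endA l := by
  apply div_nonneg <;> positivity

lemma endA_le_one {l : List ℕ} (h : ∀ a ∈ l, 1 ≤ a) : endA l ≤ 1 := by
  rw [endA, div_le_one (cont_pos_real h)]
  exact_mod_cast pnum_le_cont l h

lemma endB_nonneg {l : List ℕ} (h : ∀ a ∈ l, 1 ≤ a) : 0 ≤ endB l := by
  have := cont_pos_real h
  apply div_nonneg
  · positivity
  · have h2 : (0:ℝ) ≤ (cont l.dropLast : ℝ) := Nat.cast_nonneg _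
    linarith

lemma endB_le_one {l : List ℕ} (h : ∀ a ∈ l, 1 ≤ a) : endB l ≤ 1 := by
  have h0 := cont_pos_real h
  have h2 : (0:ℝ) ≤ (cont l.dropLast : ℝ) := Nat.cast_nonneg _
  rw [endB, div_le_one (by linarith)]
  have h1 : (pnum l : ℝ) ≤ cont l := by exact_mod_cast pnum_le_cont l h
  have h2 : (pnum l.dropLast : ℝ) ≤ cont l.dropLast := by
    exact_mod_cast pnum_le_cont l.dropLast (dropLast_entries h)
  linarith

lemma endA_cons (a : ℕ) (m : List ℕ) (hm : ∀ x ∈ m, 1 ≤ x) :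
    endA (a :: m) = ((a : ℝ) + endA m)⁻¹ := by
  have hQ : (0 : ℝ) < cont m := cont_pos_real hm
  rw [endA, endA, pnum_cons, cont_cons]
  rw [show (a : ℝ) + (pnum m : ℝ) / cont m = ((a : ℝ) * cont m + pnum m) / cont m by
    field_simp, inv_div]
  push_cast
  ring_nf

lemma endB_cons (a : ℕ) (m : List ℕ) (hmne : m ≠ []) (hm : ∀ x ∈ m, 1 ≤ x) :
    endB (a :: m) = ((a : ℝ) + endB m)⁻¹ := by
  have hQ : (0 : ℝ) < cont m := cont_pos_real hm
  have hQ' : (0 : ℝ) ≤ cont m.dropLast := by positivity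
  have hden : (0 : ℝ) < (cont m : ℝ) + cont m.dropLast := by linarith
  rw [endB, endB, pnum_cons, pnum_dropLast_eq a m hmne, dropLast_cons a m hmne, cont_cons,
    cont_cons a m.dropLast]
  rw [show (a : ℝ) + ((pnum m : ℝ) + pnum m.dropLast) / ((cont m : ℝ) + cont m.dropLast)
      = ((a : ℝ) * ((cont m : ℝ) + cont m.dropLast) + ((pnum m : ℝ) + pnum m.dropLast))
        / ((cont m : ℝ) + cont m.dropLast) by field_simp, inv_div]
  push_cast
  ring_nf

lemma gauss_mem {x : ℝ} (hx : x ∈ Set.Ioo (0 : ℝ) 1) (hirr : Irrational x) :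
    gaussMap x ∈ Set.Ioo (0 : ℝ) 1 ∧ Irrational (gaussMap x) := by
  have hinv : Irrational x⁻¹ := hirr.inv
  have hfr : Irrational (gaussMap x) := by
    rw [gaussMap, Int.fract]; exact hinv.sub_intCast _
  refine ⟨⟨?_, ?_⟩, hfr⟩
  · rcases lt_or_eq_of_le (Int.fract_nonneg x⁻¹) with h | h
    · exact h
    · exact absurd (show gaussMap x = 0 from h.symm) hfr.ne_zero
  · exact Int.fract_lt_one _

lemma cfA_one (x : ℝ) : cfA x 1 = ⌊x⁻¹⌋₊ := rfl

lemma cfA_succ (x : ℝ) (k : ℕ) : cfA x (k + 2) = cfA (gaussMap x) (k + 1) := by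
  show ⌊(gaussMap^[k + 1] x)⁻¹⌋₊ = ⌊(gaussMap^[k] (gaussMap x))⁻¹⌋₊
  rw [Function.iterate_succ_apply]

lemma cfA_one_eq_iff {x : ℝ} (hx : 0 < x) (hirr : Irrational x) {a : ℕ} (ha : 1 ≤ a) :
    cfA x 1 = a ↔ x⁻¹ ∈ Set.Ioo (a : ℝ) ((a : ℝ) + 1) := by
  rw [cfA_one, Nat.floor_eq_iff (by positivity)]
  constructor
  · rintro ⟨h1, h2⟩
    refine ⟨lt_of_le_of_ne h1 ?_, by exact_mod_cast h2⟩
    intro h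
    exact (hirr.inv.ne_int a) (by push_cast [← h]; ring)
  · rintro ⟨h1, h2⟩
    exact ⟨le_of_lt h1, by exact_mod_cast h2⟩

lemma gaussMap_eq {x : ℝ} {a : ℕ} (h : x⁻¹ ∈ Set.Ioo (a : ℝ) ((a : ℝ) + 1)) :
    gaussMap x = x⁻¹ - a := by
  have hf : ⌊x⁻¹⌋ = (a : ℤ) := by
    rw [Int.floor_eq_iff]
    constructor <;> push_cast <;> [linarith [h.1]; linarith [h.2]]
  rw [gaussMap, Int.fract, hf]
  push_cast; ring

lemma inv_Ioo (x A B : ℝ) (hA : 0 < A) (hAB : A < B) :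
    x⁻¹ ∈ Set.Ioo A B ↔ x ∈ Set.Ioo B⁻¹ A⁻¹ := by
  have hB : 0 < B := hA.trans hAB
  constructor
  · rintro ⟨h1, h2⟩
    have hx : 0 < x := by
      by_contra h
      push_neg at h
      have : x⁻¹ ≤ 0 := inv_nonpos.mpr h
      linarith
    exact ⟨(inv_lt_comm₀ hx hB).mp h2, (lt_inv_comm₀ hA hx).mp h1⟩
  · rintro ⟨h1, h2⟩
    have hx : 0 < x := lt_trans (by positivity) h1
    constructor
    · rw [lt_inv_comm₀ hA hx]; exact h2
    · rw [inv_lt_comm₀ hx hB]; exact h1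

lemma min_max_inv (a : ℕ) (ha : 1 ≤ a) (s t : ℝ) (hs : 0 ≤ s) (ht : 0 ≤ t) :
    min ((a : ℝ) + s)⁻¹ ((a : ℝ) + t)⁻¹ = ((a : ℝ) + max s t)⁻¹ ∧
    max ((a : ℝ) + s)⁻¹ ((a : ℝ) + t)⁻¹ = ((a : ℝ) + min s t)⁻¹ := by
  have ha' : (1 : ℝ) ≤ a := by exact_mod_cast ha
  have key : ∀ u v : ℝ, 0 < u → u ≤ v → v⁻¹ ≤ u⁻¹ := fun u v hu huv => by
    rw [← one_div, ← one_div]; exact one_div_le_one_div_of_le hu huv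
  rcases le_total s t with h | h
  · rw [max_eq_right h, min_eq_left h,
      min_eq_right (key _ _ (by linarith) (by linarith)),
      max_eq_left (key _ _ (by linarith) (by linarith))]
    exact ⟨rfl, rfl⟩
  · rw [max_eq_left h, min_eq_right h,
      min_eq_left (key _ _ (by linarith) (by linarith)),
      max_eq_right (key _ _ (by linarith) (by linarith))]
    exact ⟨rfl, rfl⟩

lemma ISet_eq : ∀ (l : List ℕ), l ≠ [] → (∀ a ∈ l, 1 ≤ a) →
    ISet l = {x : ℝ | Irrational x ∧
      x ∈ Set.Ioo (min (endA l) (endB l)) (max (endA l) (endB l))} := by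
  intro l
  induction l with
  | nil => intro h; exact absurd rfl h
  | cons a m IH =>
    intro _ hent
    have ha : 1 ≤ a := hent a (by simp)
    have ha' : (1 : ℝ) ≤ a := by exact_mod_cast ha
    cases m with
    | nil =>
      -- base case : l = [a]
      have hA : endA [a] = ((a : ℝ) + 0)⁻¹ := by
        rw [endA]; norm_num
      have hB : endB [a] = ((a : ℝ) + 1)⁻¹ := by
        simp [endB]
      have hmm := min_max_inv a ha 0 1 le_rfl zero_le_one
      rw [hA, hB] at *
      ext x
      simp only [ISet, Set.mem_setOf_eq, List.length_cons, List.length_nil]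
      constructor
      · rintro ⟨hx01, hxirr, hcf⟩
        have hcf1 : cfA x 1 = a := hcf 0 (by norm_num)
        have hinv : x⁻¹ ∈ Set.Ioo (a : ℝ) ((a : ℝ) + 1) :=
          (cfA_one_eq_iff hx01.1 hxirr ha).mp hcf1
        refine ⟨hxirr, ?_⟩
        rw [hmm.1, hmm.2, max_eq_right (by norm_num : (0:ℝ) ≤ 1),
          min_eq_left (by norm_num : (0:ℝ) ≤ 1), add_zero]
        exact (inv_Ioo x _ _ (by linarith) (by linarith)).mp hinv
      · rintro ⟨hxirr, hxIoo⟩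
        rw [hmm.1, hmm.2, max_eq_right (by norm_num : (0:ℝ) ≤ 1),
          min_eq_left (by norm_num : (0:ℝ) ≤ 1), add_zero] at hxIoo
        have hinv : x⁻¹ ∈ Set.Ioo (a : ℝ) ((a : ℝ) + 1) :=
          (inv_Ioo x _ _ (by linarith) (by linarith)).mpr hxIoo
        have hx0 : 0 < x := lt_trans (by positivity) hxIoo.1
        have hx1 : x < 1 := lt_of_lt_of_le hxIoo.2 (by
          rw [inv_le_one_iff₀]; right; linarith)
        refine ⟨⟨hx0, hx1⟩, hxirr, ?_⟩
        intro k hk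
        interval_cases k
        · exact (cfA_one_eq_iff hx0 hxirr ha).mpr hinv
    | cons b m' =>
      set m := b :: m' with hmdef
      have hmne : m ≠ [] := by simp [hmdef]
      have hment : ∀ x ∈ m, 1 ≤ x := fun x hx => hent x (by simp [hmdef] at hx ⊢; tauto)
      have hIH := IH hmne hment
      set mn := min (endA m) (endB m) with hmn
      set mx := max (endA m) (endB m) with hmx
      have hmn0 : 0 ≤ mn := le_min endA_nonneg (endB_nonneg hment)
      have hmx1 : mx ≤ 1 := max_le (endA_le_one hment) (endB_le_one hment)
      have hmm := min_max_inv a ha (endA m) (endB m) endA_nonneg (endB_nonneg hment)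
      have hAc : endA (a :: m) = ((a : ℝ) + endA m)⁻¹ := endA_cons a m hment
      have hBc : endB (a :: m) = ((a : ℝ) + endB m)⁻¹ := endB_cons a m hmne hment
      ext x
      simp only [ISet, Set.mem_setOf_eq]
      rw [hAc, hBc]
      constructor
      · rintro ⟨hx01, hxirr, hcf⟩
        have hga := gauss_mem hx01 hxirr
        have hcf1 : cfA x 1 = a := hcf 0 (by simp)
        have hinv : x⁻¹ ∈ Set.Ioo (a : ℝ) ((a : ℝ) + 1) :=
          (cfA_one_eq_iff hx01.1 hxirr ha).mp hcf1
        have hg : gaussMap x = x⁻¹ - a := gaussMap_eq hinv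
        have hgm : gaussMap x ∈ ISet m := by
          refine ⟨hga.1, hga.2, fun k hk => ?_⟩
          have h2 := hcf (k + 1) (by simpa using Nat.succ_lt_succ hk)
          rwa [cfA_succ, List.getElem_cons_succ] at h2
        rw [hIH] at hgm
        obtain ⟨-, hg1, hg2⟩ := hgm
        rw [hg] at hg1 hg2
        have hIoo : x⁻¹ ∈ Set.Ioo ((a : ℝ) + mn) ((a : ℝ) + mx) := ⟨by linarith, by linarith⟩
        refine ⟨hxirr, ?_⟩
        rw [hmm.1, hmm.2]
        exact (inv_Ioo x _ _ (by linarith) (lt_trans hIoo.1 hIoo.2)).mp hIoo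
      · rintro ⟨hxirr, hxIoo⟩
        rw [hmm.1, hmm.2] at hxIoo
        have hmx0 : 0 ≤ mx := le_trans hmn0 min_le_max
        have hmnmx : mn < mx := by
          have h2 : ((a : ℝ) + mx)⁻¹ < ((a : ℝ) + mn)⁻¹ := lt_trans hxIoo.1 hxIoo.2
          by_contra hcon
          push_neg at hcon
          have : mx = mn := le_antisymm hcon (min_le_max)
          rw [this] at h2
          exact lt_irrefl _ h2
        have hinvIoo : x⁻¹ ∈ Set.Ioo ((a : ℝ) + mn) ((a : ℝ) + mx) :=
          (inv_Ioo x _ _ (by linarith) (by linarith)).mpr hxIoo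
        have hinv : x⁻¹ ∈ Set.Ioo (a : ℝ) ((a : ℝ) + 1) :=
          ⟨by linarith [hinvIoo.1], by linarith [hinvIoo.2]⟩
        have hx0 : 0 < x :=
          lt_trans (inv_pos.mpr (by linarith : (0:ℝ) < (a : ℝ) + mx)) hxIoo.1
        have hx1 : x < 1 := lt_of_lt_of_le hxIoo.2 (by
          rw [inv_le_one_iff₀]; right; linarith)
        have hx01 : x ∈ Set.Ioo (0 : ℝ) 1 := ⟨hx0, hx1⟩
        have hcf1 : cfA x 1 = a := (cfA_one_eq_iff hx0 hxirr ha).mpr hinv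
        have hg : gaussMap x = x⁻¹ - a := gaussMap_eq hinv
        have hgm : gaussMap x ∈ ISet m := by
          rw [hIH]
          exact ⟨(gauss_mem hx01 hxirr).2, by rw [hg]; constructor <;>
            [linarith [hinvIoo.1]; linarith [hinvIoo.2]]⟩
        refine ⟨hx01, hxirr, ?_⟩
        intro k hk
        match k with
        | 0 => simpa using hcf1
        | k + 1 =>
          rw [cfA_succ, List.getElem_cons_succ]
          exact hgm.2.2 k (by simpa using Nat.lt_of_succ_lt_succ hk)

lemma irr_inter_Ioo (u v : ℝ) :
    {x : ℝ | Irrational x ∧ x ∈ Set.Ioo u v}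
      = Set.Ioo u v \ Set.range ((↑) : ℚ → ℝ) := by
  ext x
  simp only [Set.mem_setOf_eq, Set.mem_diff, Set.mem_range]
  rw [and_comm]
  rfl

lemma volume_ISet (l : List ℕ) (hne : l ≠ []) (hent : ∀ a ∈ l, 1 ≤ a) :
    (volume (ISet l)).toReal
      = ((cont l : ℝ) * ((cont l : ℝ) + (cont l.dropLast : ℝ)))⁻¹ := by
  have hQ : (0 : ℝ) < cont l := cont_pos_real hent
  have hQ' : (0 : ℝ) < cont l.dropLast := cont_pos_real (dropLast_entries hent)
  have hden : (0 : ℝ) < (cont l : ℝ) * ((cont l : ℝ) + (cont l.dropLast : ℝ)) := by positivity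
  rw [ISet_eq l hne hent, irr_inter_Ioo,
    measure_diff_null ((Set.countable_range _).measure_zero _), Real.volume_Ioo,
    ENNReal.toReal_ofReal (by simp [min_le_max, sub_nonneg])]
  rw [max_sub_min_eq_abs]
  have hdet : |(pnum l : ℤ) * cont l.dropLast - cont l * pnum l.dropLast| = 1 := by
    rw [cont_det l hne, abs_pow, abs_neg, abs_one, one_pow]
  have hdetR : |(pnum l : ℝ) * (cont l.dropLast : ℝ) - (cont l : ℝ) * (pnum l.dropLast : ℝ)|
      = 1 := by exact_mod_cast hdet
  have hdiff : endA l - endB l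
      = ((pnum l : ℝ) * (cont l.dropLast : ℝ) - (cont l : ℝ) * (pnum l.dropLast : ℝ))
        / ((cont l : ℝ) * ((cont l : ℝ) + (cont l.dropLast : ℝ))) := by
    rw [endA, endB]
    field_simp
    ring
  rw [abs_sub_comm, hdiff, abs_div, hdetR, abs_of_pos hden, one_div]


lemma basic_eq_ISet (σ : ℕ → ℕ) (n : ℕ) : basicIntervalSeq σ n = ISet (seqList σ n) := by
  ext x
  simp only [basicIntervalSeq, ISet, Set.mem_setOf_eq]
  constructor
  · rintro ⟨h1, h2, h3⟩
    refine ⟨h1, h2, fun k hk => ?_⟩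
    rw [seqList_getElem]
    have hk' : k < n := by simpa using hk
    exact h3 (k + 1) (by omega) (by omega)
  · rintro ⟨h1, h2, h3⟩
    refine ⟨h1, h2, fun j hj1 hj2 => ?_⟩
    have hk : j - 1 < (seqList σ n).length := by simp; omega
    have := h3 (j - 1) hk
    rw [seqList_getElem] at this
    have hj : j - 1 + 1 = j := by omega
    rwa [hj] at this

end Aux


lemma final_arith (qs qs' qt qt' ψ ε : ℝ) (t n : ℕ) (hn : 1 ≤ n)
    (hqs1 : 1 ≤ qs) (hqt1 : 1 ≤ qt) (hqs'0 : 0 ≤ qs') (hqt'0 : 0 ≤ qt')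
    (hqs'le : qs' ≤ qs) (hqt'le : qt' ≤ qt)
    (hψpos : 0 < ψ)
    (hcmp1 : qs ≤ ψ ^ t * qt) (hcmp2 : qt ≤ ψ ^ t * qs)
    (hsize : (2 : ℝ) ^ (n - 1 : ℕ) ≤ qt * (qt + qt'))
    (hε : 0 < ε)
    (hgrowth : 2 * ψ ^ (2 * t) ≤ (2 : ℝ) ^ (((n : ℝ) - 1) * ε)) :
    ((qt * (qt + qt'))⁻¹) ^ (1 + ε) ≤ (qs * (qs + qs'))⁻¹ ∧
    (qs * (qs + qs'))⁻¹ ≤ ((qt * (qt + qt'))⁻¹) ^ (1 - ε) := by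
  set Rσ : ℝ := qs * (qs + qs') with hRσ
  set Rτ : ℝ := qt * (qt + qt') with hRτ
  have hqs0 : (0 : ℝ) < qs := by linarith
  have hqt0 : (0 : ℝ) < qt := by linarith
  have hRσpos : 0 < Rσ := mul_pos hqs0 (by linarith)
  have hRτpos : 0 < Rτ := mul_pos hqt0 (by linarith)
  have hψ2t0 : (0 : ℝ) < ψ ^ (2 * t) := by positivity
  have hRcmp1 : Rσ ≤ 2 * ψ ^ (2 * t) * Rτ := by
    have h1 : Rσ ≤ 2 * qs ^ 2 := by rw [hRσ]; nlinarith
    have h2 : qs ^ 2 ≤ (ψ ^ t * qt) ^ 2 := pow_le_pow_left₀ (le_of_lt hqs0) hcmp1 2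
    have h3 : (ψ ^ t * qt) ^ 2 = ψ ^ (2 * t) * qt ^ 2 := by ring
    have h4 : qt ^ 2 ≤ Rτ := by rw [hRτ]; nlinarith
    nlinarith
  have hRcmp2 : Rτ ≤ 2 * ψ ^ (2 * t) * Rσ := by
    have h1 : Rτ ≤ 2 * qt ^ 2 := by rw [hRτ]; nlinarith
    have h2 : qt ^ 2 ≤ (ψ ^ t * qs) ^ 2 := pow_le_pow_left₀ (le_of_lt hqt0) hcmp2 2
    have h3 : (ψ ^ t * qs) ^ 2 = ψ ^ (2 * t) * qs ^ 2 := by ring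
    have h4 : qs ^ 2 ≤ Rσ := by rw [hRσ]; nlinarith
    nlinarith
  have hRτinvpos : 0 < Rτ⁻¹ := by positivity
  have hRσinvpos : 0 < Rσ⁻¹ := by positivity
  have hncast : ((n - 1 : ℕ) : ℝ) = (n : ℝ) - 1 := by
    push_cast [Nat.cast_sub hn]
    ring
  have h2n : (2 : ℝ) ^ ((n : ℝ) - 1) = (2 : ℝ) ^ (n - 1 : ℕ) := by
    rw [← hncast, Real.rpow_natCast]
  have hBle : Rτ⁻¹ ≤ (2 : ℝ) ^ (-((n : ℝ) - 1)) := by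
    rw [Real.rpow_neg (by norm_num), h2n]
    exact inv_anti₀ (by positivity) hsize
  have hBeps : Rτ⁻¹ ^ ε ≤ (2 : ℝ) ^ (-(((n : ℝ) - 1) * ε)) := by
    calc Rτ⁻¹ ^ ε ≤ ((2 : ℝ) ^ (-((n : ℝ) - 1))) ^ ε :=
          Real.rpow_le_rpow (le_of_lt hRτinvpos) hBle (le_of_lt hε)
      _ = (2 : ℝ) ^ (-((n : ℝ) - 1) * ε) := by
          rw [← Real.rpow_mul (by norm_num)]
      _ = (2 : ℝ) ^ (-(((n : ℝ) - 1) * ε)) := by rw [neg_mul]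
  have hone : 2 * ψ ^ (2 * t) * (2 : ℝ) ^ (-(((n : ℝ) - 1) * ε)) ≤ 1 := by
    rw [Real.rpow_neg (by norm_num), ← div_eq_mul_inv,
      div_le_one (Real.rpow_pos_of_pos (by norm_num) _)]
    exact hgrowth
  have hCpos : (0 : ℝ) < 2 * ψ ^ (2 * t) := by positivity
  constructor
  · have hB2A : Rτ⁻¹ ≤ 2 * ψ ^ (2 * t) * Rσ⁻¹ := by
      rw [show 2 * ψ ^ (2 * t) * Rσ⁻¹ = (Rσ / (2 * ψ ^ (2 * t)))⁻¹ by field_simp]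
      apply inv_anti₀ (by positivity)
      rw [div_le_iff₀ hCpos]
      linarith [hRcmp1]
    rw [Real.rpow_add hRτinvpos, Real.rpow_one]
    calc Rτ⁻¹ * Rτ⁻¹ ^ ε
        ≤ (2 * ψ ^ (2 * t) * Rσ⁻¹) * ((2 : ℝ) ^ (-(((n : ℝ) - 1) * ε))) :=
          mul_le_mul hB2A hBeps (Real.rpow_nonneg (le_of_lt hRτinvpos) _) (by positivity)
      _ = Rσ⁻¹ * (2 * ψ ^ (2 * t) * (2 : ℝ) ^ (-(((n : ℝ) - 1) * ε))) := by ring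
      _ ≤ Rσ⁻¹ * 1 := mul_le_mul_of_nonneg_left hone (le_of_lt hRσinvpos)
      _ = Rσ⁻¹ := by ring
  · have hA2B : Rσ⁻¹ ≤ 2 * ψ ^ (2 * t) * Rτ⁻¹ := by
      rw [show 2 * ψ ^ (2 * t) * Rτ⁻¹ = (Rτ / (2 * ψ ^ (2 * t)))⁻¹ by field_simp]
      apply inv_anti₀ (by positivity)
      rw [div_le_iff₀ hCpos]
      linarith [hRcmp2]
    have hsplit : Rτ⁻¹ = Rτ⁻¹ ^ (1 - ε) * Rτ⁻¹ ^ ε := by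
      rw [← Real.rpow_add hRτinvpos]
      norm_num
    have hB1nonneg : (0 : ℝ) ≤ Rτ⁻¹ ^ (1 - ε) := Real.rpow_nonneg (le_of_lt hRτinvpos) _
    calc Rσ⁻¹ ≤ 2 * ψ ^ (2 * t) * Rτ⁻¹ := hA2B
      _ = 2 * ψ ^ (2 * t) * (Rτ⁻¹ ^ (1 - ε) * Rτ⁻¹ ^ ε) := by rw [← hsplit]
      _ ≤ 2 * ψ ^ (2 * t) * (Rτ⁻¹ ^ (1 - ε) * (2 : ℝ) ^ (-(((n : ℝ) - 1) * ε))) :=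
          mul_le_mul_of_nonneg_left
            (mul_le_mul_of_nonneg_left hBeps hB1nonneg) (le_of_lt hCpos)
      _ = Rτ⁻¹ ^ (1 - ε) * (2 * ψ ^ (2 * t) * (2 : ℝ) ^ (-(((n : ℝ) - 1) * ε))) := by ring
      _ ≤ Rτ⁻¹ ^ (1 - ε) * 1 := mul_le_mul_of_nonneg_left hone hB1nonneg
      _ = Rτ⁻¹ ^ (1 - ε) := by ring


theorem stmt_3 (n : ℕ) (hn : 1 ≤ n) (σ τ : ℕ → ℕ)
    (hσ : ∀ j, 1 ≤ j → j ≤ n → 1 ≤ σ j) (hτ : ∀ j, 1 ≤ j → j ≤ n → 1 ≤ τ j)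
    (Ω : Finset ℕ) (hΩsub : Ω ⊆ Finset.Icc 1 n) (hΩne : Ω.Nonempty)
    (hdiff : ∀ j ∈ Finset.Icc 1 n, (j ∈ Ω ↔ σ j ≠ τ j))
    (ψ : ℝ) (hψ : ∀ i ∈ Ω, (σ i : ℝ) + 1 ≤ ψ ∧ (τ i : ℝ) + 1 ≤ ψ)
    (ε : ℝ) (hε : 0 < ε)
    (hgrowth : 2 * ψ ^ (2 * Ω.card) ≤ (2 : ℝ) ^ (((n : ℝ) - 1) * ε)) :
    (volume (basicIntervalSeq τ n)).toReal ^ (1 + ε)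
        ≤ (volume (basicIntervalSeq σ n)).toReal ∧
    (volume (basicIntervalSeq σ n)).toReal
        ≤ (volume (basicIntervalSeq τ n)).toReal ^ (1 - ε) := by
  have hLσne : seqList σ n ≠ [] := by
    intro h
    have := seqList_length σ n
    rw [h] at this
    simp at this
    omega
  have hLτne : seqList τ n ≠ [] := by
    intro h
    have := seqList_length τ n
    rw [h] at this
    simp at this
    omega
  have hentσ : ∀ a ∈ seqList σ n, 1 ≤ a := by
    intro a haa
    simp only [seqList, List.mem_map, List.mem_range] at haa
    obtain ⟨k, hk, rfl⟩ := haa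
    exact hσ (k + 1) (by omega) (by omega)
  have hentτ : ∀ a ∈ seqList τ n, 1 ≤ a := by
    intro a haa
    simp only [seqList, List.mem_map, List.mem_range] at haa
    obtain ⟨k, hk, rfl⟩ := haa
    exact hτ (k + 1) (by omega) (by omega)
  have hvolσ : (volume (basicIntervalSeq σ n)).toReal
      = ((cont (seqList σ n) : ℝ)
          * ((cont (seqList σ n) : ℝ) + (cont (seqList σ n).dropLast : ℝ)))⁻¹ := by
    rw [basic_eq_ISet, volume_ISet _ hLσne hentσ]
  have hvolτ : (volume (basicIntervalSeq τ n)).toReal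
      = ((cont (seqList τ n) : ℝ)
          * ((cont (seqList τ n) : ℝ) + (cont (seqList τ n).dropLast : ℝ)))⁻¹ := by
    rw [basic_eq_ISet, volume_ISet _ hLτne hentτ]
  have hψpos : 0 < ψ := by
    obtain ⟨i0, hi0⟩ := hΩne
    have h1 := (hψ i0 hi0).1
    have h2 : (0 : ℝ) ≤ (σ i0 : ℝ) := by positivity
    linarith
  have hagree : ∀ j, 1 ≤ j → j ≤ n → j ∉ Ω → σ j = τ j := by
    intro j h1 h2 hj
    by_contra hne
    exact hj ((hdiff j (Finset.mem_Icc.mpr ⟨h1, h2⟩)).mpr hne)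
  have hcmp1 : (cont (seqList σ n) : ℝ) ≤ ψ ^ Ω.card * (cont (seqList τ n) : ℝ) := by
    have h := cont_changes n Ω σ τ hΩsub hσ hτ hagree
    have hcast : (cont (seqList σ n) : ℝ)
        ≤ (∏ i ∈ Ω, (σ i : ℝ)) * (cont (seqList τ n) : ℝ) := by exact_mod_cast h
    have hprod : (∏ i ∈ Ω, (σ i : ℝ)) ≤ ψ ^ Ω.card := by
      calc (∏ i ∈ Ω, (σ i : ℝ)) ≤ ∏ _i ∈ Ω, ψ :=
            Finset.prod_le_prod (fun i _ => by positivity)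
              (fun i hi => by linarith [(hψ i hi).1])
        _ = ψ ^ Ω.card := by rw [Finset.prod_const]
    exact le_trans hcast (mul_le_mul_of_nonneg_right hprod (by positivity))
  have hcmp2 : (cont (seqList τ n) : ℝ) ≤ ψ ^ Ω.card * (cont (seqList σ n) : ℝ) := by
    have h := cont_changes n Ω τ σ hΩsub hτ hσ (fun j h1 h2 hj => (hagree j h1 h2 hj).symm)
    have hcast : (cont (seqList τ n) : ℝ)
        ≤ (∏ i ∈ Ω, (τ i : ℝ)) * (cont (seqList σ n) : ℝ) := by exact_mod_cast h
    have hprod : (∏ i ∈ Ω, (τ i : ℝ)) ≤ ψ ^ Ω.card := by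
      calc (∏ i ∈ Ω, (τ i : ℝ)) ≤ ∏ _i ∈ Ω, ψ :=
            Finset.prod_le_prod (fun i _ => by positivity)
              (fun i hi => by linarith [(hψ i hi).2])
        _ = ψ ^ Ω.card := by rw [Finset.prod_const]
    exact le_trans hcast (mul_le_mul_of_nonneg_right hprod (by positivity))
  have hsize : (2 : ℝ) ^ (n - 1 : ℕ)
      ≤ (cont (seqList τ n) : ℝ)
        * ((cont (seqList τ n) : ℝ) + (cont (seqList τ n).dropLast : ℝ)) := by
    have h := two_pow_le_cont_mul (seqList τ n) hLτne hentτ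
    rw [seqList_length] at h
    have h1 : (2 : ℝ) ^ (n - 1 : ℕ)
        ≤ (cont (seqList τ n) : ℝ) * (cont (seqList τ n).tail : ℝ) := by exact_mod_cast h
    have h2 : (cont (seqList τ n).tail : ℝ) ≤ (cont (seqList τ n) : ℝ) := by
      exact_mod_cast cont_tail_le (seqList τ n) hentτ
    have h3 : (0 : ℝ) ≤ (cont (seqList τ n).dropLast : ℝ) := by positivity
    have h4 : (0 : ℝ) ≤ (cont (seqList τ n) : ℝ) := by positivity
    nlinarith
  rw [hvolσ, hvolτ]
  exact final_arith _ _ _ _ ψ ε Ω.card n hn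
    (by exact_mod_cast one_le_cont _ hentσ) (by exact_mod_cast one_le_cont _ hentτ)
    (by positivity) (by positivity)
    (by exact_mod_cast cont_dropLast_le _ hentσ) (by exact_mod_cast cont_dropLast_le _ hentτ)
    hψpos hcmp1 hcmp2 hsize hε hgrowth
end

section
/- Let φ(n) be a non-decreasing sequence of positive reals with limsup_{n→∞} φ(n)/n = α < ∞. Then for every irrational x in (0,1) with lim_{n→∞} s_n(x)/φ(n) = 1 (where s_n(x) is the sum of the first n partial quotients), x lies in the set F_α = {x : s_n(x)/n ≤ α' for all n} for some α' > α; consequently E_{φ(n)} ⊆ ∪_{k} F_{α+k} up to modification of finitely many partial quotients, so dim_H E_{φ(n)} ≤ sup_{α'>α} dim_H F_{α'} < 1. -/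
open Filter MeasureTheory Set

/-- `s_n(x)`, the sum of the first `n` partial quotients. -/
noncomputable def cfS (x : ℝ) (n : ℕ) : ℕ := ∑ j ∈ Finset.Icc 1 n, cfA x j

/-- The level set `E_{φ(n)} = {x : lim s_n(x)/φ(n) = 1}` (irrationals in `(0,1)`). -/
noncomputable def levelSet (φ : ℕ → ℝ) : Set ℝ :=
  {x : ℝ | x ∈ Set.Ioo (0 : ℝ) 1 ∧ Irrational x ∧
    Tendsto (fun n => (cfS x n : ℝ) / φ n) atTop (nhds 1)}

/-- `F_α = {x : s_n(x)/n ≤ α for all n ≥ 1}` (irrationals in `(0,1)`). -/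
noncomputable def slowSet (α : ℝ) : Set ℝ :=
  {x : ℝ | x ∈ Set.Ioo (0 : ℝ) 1 ∧ Irrational x ∧
    ∀ n, 1 ≤ n → (cfS x n : ℝ) / n ≤ α}

def Good (x : ℝ) : Prop := x ∈ Set.Ioo (0:ℝ) 1 ∧ Irrational x

lemma good_gauss {x : ℝ} (hx : Good x) : Good (gaussMap x) := by
  obtain ⟨⟨h0, h1⟩, hirr⟩ := hx
  have hxne : x ≠ 0 := ne_of_gt h0
  have hinv : Irrational x⁻¹ := by
    intro ⟨q, hq⟩
    exact hirr ⟨q⁻¹, by rw [Rat.cast_inv, hq, inv_inv]⟩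
  have hfr : Irrational (Int.fract x⁻¹) := by
    rw [Int.fract]
    exact hinv.sub_intCast _
  constructor
  · constructor
    · rcases lt_or_eq_of_le (Int.fract_nonneg x⁻¹) with h | h
      · exact h
      · exact absurd ⟨0, by rw [Rat.cast_zero]; exact h⟩ hfr
    · exact Int.fract_lt_one _
  · exact hfr

lemma good_iter {x : ℝ} (hx : Good x) (n : ℕ) : Good (gaussMap^[n] x) := by
  induction n with
  | zero => exact hx
  | succ k ih => rw [Function.iterate_succ_apply']; exact good_gauss ih

lemma inv_gt_one {x : ℝ} (hx : Good x) : 1 < x⁻¹ :=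
  (one_lt_inv₀ hx.1.1).mpr hx.1.2

lemma cfA_ge_one {x : ℝ} (hx : Good x) (n : ℕ) : 1 ≤ cfA x n := by
  have := inv_gt_one (good_iter hx (n - 1))
  exact Nat.le_floor (le_of_lt (by exact_mod_cast this))

lemma cfA_shift {x : ℝ} (N j : ℕ) (hj : 1 ≤ j) :
    cfA x (j + N) = cfA (gaussMap^[N] x) j := by
  unfold cfA
  rw [← Function.iterate_add_apply]
  have h : j + N - 1 = (j - 1) + N := by omega
  rw [h]

lemma cfS_succ (x : ℝ) (n : ℕ) : cfS x (n + 1) = cfS x n + cfA x (n + 1) := by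
  unfold cfS
  rw [Finset.sum_Icc_succ_top (by omega : 1 ≤ n + 1)]

lemma cfS_shift {x : ℝ} (N m : ℕ) :
    cfS x (N + m) = cfS x N + cfS (gaussMap^[N] x) m := by
  induction m with
  | zero => simp [cfS]
  | succ k ih =>
    rw [← Nat.add_assoc, cfS_succ, cfS_succ, ih, Nat.add_assoc]
    congr 1
    rw [Nat.add_assoc, Nat.add_comm N (k+1), cfA_shift N (k+1) (by omega)]

lemma cfS_ge {x : ℝ} (hx : Good x) (n : ℕ) : n ≤ cfS x n := by
  calc n = ∑ _j ∈ Finset.Icc 1 n, 1 := by simp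
  _ ≤ cfS x n := Finset.sum_le_sum fun j _ => cfA_ge_one hx j

lemma cfS_mono (x : ℝ) : Monotone (cfS x) := by
  intro a b hab
  exact Finset.sum_le_sum_of_subset (f := cfA x) (Finset.Icc_subset_Icc le_rfl hab)

noncomputable def prep (a : ℕ) (y : ℝ) : ℝ := ((a : ℝ) + y)⁻¹
noncomputable def prepList (l : List ℕ) (y : ℝ) : ℝ := l.foldr prep y

lemma prep_good {a : ℕ} (ha : 1 ≤ a) {y : ℝ} (hy : Good y) : Good (prep a y) := by
  obtain ⟨⟨h0, h1⟩, hirr⟩ := hy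
  have ha1 : (1:ℝ) ≤ (a:ℝ) := by exact_mod_cast ha
  have hsum : (1:ℝ) < (a:ℝ) + y := by linarith
  constructor
  · constructor
    · rw [prep]; positivity
    · rw [prep]
      rw [inv_lt_one_iff₀]; right; exact hsum
  · rw [prep]
    intro ⟨q, hq⟩
    apply hirr
    refine ⟨q⁻¹ - a, ?_⟩
    push_cast
    rw [hq]
    have : (a:ℝ) + y ≠ 0 := by linarith
    field_simp
    ring

lemma prep_gauss {a : ℕ} {y : ℝ} (hy : Good y) : gaussMap (prep a y) = y := by
  obtain ⟨⟨h0, h1⟩, _⟩ := hy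
  have hne : (a:ℝ) + y ≠ 0 := by positivity
  rw [gaussMap, prep, inv_inv]
  rw [show ((a:ℕ):ℝ) = ((a:ℤ):ℝ) by push_cast; ring, Int.fract_intCast_add]
  exact Int.fract_eq_self.mpr ⟨le_of_lt h0, h1⟩

lemma prep_cfA_one {a : ℕ} {y : ℝ} (hy : Good y) : cfA (prep a y) 1 = a := by
  obtain ⟨⟨h0, h1⟩, _⟩ := hy
  rw [cfA]
  simp only [Nat.sub_self, Function.iterate_zero_apply]
  rw [prep, inv_inv]
  rw [add_comm, Nat.floor_add_natCast (le_of_lt h0)]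
  rw [Nat.floor_eq_zero.mpr h1]
  omega

lemma prep_cfA_succ {a : ℕ} {y : ℝ} (hy : Good y) (j : ℕ) (hj : 1 ≤ j) :
    cfA (prep a y) (j + 1) = cfA y j := by
  have h1 : cfA (prep a y) (j + 1) = cfA (gaussMap^[1] (prep a y)) j := by
    rw [← cfA_shift 1 j hj]
  rw [h1]
  simp only [Function.iterate_one]
  rw [prep_gauss hy]

lemma prepList_good {l : List ℕ} (hl : ∀ a ∈ l, 1 ≤ a) {y : ℝ} (hy : Good y) :
    Good (prepList l y) := by
  induction l with
  | nil => exact hy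
  | cons a t ih =>
    exact prep_good (hl a (List.mem_cons_self)) (ih fun b hb => hl b (List.mem_cons_of_mem _ hb))

lemma prepList_gauss_iter {l : List ℕ} (hl : ∀ a ∈ l, 1 ≤ a) {y : ℝ} (hy : Good y) :
    gaussMap^[l.length] (prepList l y) = y := by
  induction l with
  | nil => rfl
  | cons a t ih =>
    have ht : ∀ b ∈ t, 1 ≤ b := fun b hb => hl b (List.mem_cons_of_mem _ hb)
    show gaussMap^[t.length + 1] (prep a (prepList t y)) = y
    rw [Function.iterate_succ_apply, prep_gauss (prepList_good ht hy)]
    exact ih ht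

lemma prepList_cfA {l : List ℕ} (hl : ∀ a ∈ l, 1 ≤ a) {y : ℝ} (hy : Good y) :
    ∀ j < l.length, cfA (prepList l y) (j + 1) = l.getD j 0 := by
  induction l with
  | nil => intro j hj; simp at hj
  | cons a t ih =>
    have ht : ∀ b ∈ t, 1 ≤ b := fun b hb => hl b (List.mem_cons_of_mem _ hb)
    intro j hj
    match j with
    | 0 => exact prep_cfA_one (prepList_good ht hy)
    | Nat.succ k =>
      show cfA (prep a (prepList t y)) (k + 1 + 1) = t.getD k 0
      rw [prep_cfA_succ (prepList_good ht hy) (k+1) (by omega)]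
      exact ih ht k (by simpa using hj)

lemma reconstruct {x : ℝ} (hx : Good x) : prep (cfA x 1) (gaussMap x) = x := by
  obtain ⟨⟨h0, h1⟩, hirr⟩ := hx
  have hinvpos : 0 ≤ x⁻¹ := le_of_lt (inv_pos.mpr h0)
  rw [prep, cfA]
  simp only [Nat.sub_self, Function.iterate_zero_apply]
  rw [gaussMap, Int.fract]
  rw [show ((⌊x⁻¹⌋₊ : ℕ) : ℝ) = ((⌊x⁻¹⌋₊ : ℤ) : ℝ) by push_cast; ring]
  rw [Int.natCast_floor_eq_floor hinvpos]
  rw [add_sub_cancel, inv_inv]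

lemma reconstruct_list {l : List ℕ} {x : ℝ} (hx : Good x)
    (hl : ∀ j < l.length, l.getD j 0 = cfA x (j + 1)) :
    prepList l (gaussMap^[l.length] x) = x := by
  induction l generalizing x with
  | nil => rfl
  | cons a t ih =>
    show prep a (prepList t (gaussMap^[t.length + 1] x)) = x
    rw [Function.iterate_succ_apply]
    rw [ih (good_gauss hx) (fun j hj => by
      have h2 := hl (j+1) (by simpa using hj)
      have h3 : cfA x (j + 1 + 1) = cfA (gaussMap x) (j + 1) := by
        have h4 := cfA_shift (x := x) 1 (j+1) (by omega)
        simpa using h4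
      simpa [h3] using h2)]
    have ha : a = cfA x 1 := by simpa using hl 0 (by simp)
    rw [ha]
    exact reconstruct hx

lemma prep_lipschitz {a : ℕ} (ha : 1 ≤ a) : LipschitzOnWith 1 (prep a) (Set.Ici 0) := by
  rw [lipschitzOnWith_iff_dist_le_mul]
  intro y hy z hz
  simp only [Set.mem_Ici] at hy hz
  have ha1 : (1:ℝ) ≤ (a:ℝ) := by exact_mod_cast ha
  have h1 : (1:ℝ) ≤ (a:ℝ) + y := by linarith
  have h2 : (1:ℝ) ≤ (a:ℝ) + z := by linarith
  have h1' : (a:ℝ) + y ≠ 0 := by linarith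
  have h2' : (a:ℝ) + z ≠ 0 := by linarith
  rw [Real.dist_eq, Real.dist_eq, prep, prep]
  rw [inv_sub_inv h1' h2']
  rw [abs_div]
  have hysub : |(a:ℝ) + z - ((a:ℝ) + y)| = |y - z| := by rw [abs_sub_comm]; congr 1; ring
  rw [hysub]
  have hden : (1:ℝ) ≤ ((a:ℝ) + y) * ((a:ℝ) + z) := by nlinarith
  rw [abs_of_pos (by linarith : (0:ℝ) < ((a:ℝ) + y) * ((a:ℝ) + z))]
  rw [NNReal.coe_one, one_mul]
  exact div_le_self (abs_nonneg _) hden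

lemma prep_mapsTo {a : ℕ} (ha : 1 ≤ a) : Set.MapsTo (prep a) (Set.Ici 0) (Set.Ici 0) := by
  intro y hy
  simp only [Set.mem_Ici] at hy ⊢
  have : (0:ℝ) < (a:ℝ) + y := by
    have : (1:ℝ) ≤ (a:ℝ) := by exact_mod_cast ha
    linarith
  rw [prep]
  positivity

lemma prepList_lipschitz {l : List ℕ} (hl : ∀ a ∈ l, 1 ≤ a) :
    LipschitzOnWith 1 (prepList l) (Set.Ici 0) ∧
      Set.MapsTo (prepList l) (Set.Ici 0) (Set.Ici 0) := by
  induction l with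
  | nil => exact ⟨LipschitzWith.id.lipschitzOnWith, Set.mapsTo_id _⟩
  | cons a t ih =>
    have ha : 1 ≤ a := hl a (List.mem_cons_self)
    have ht : ∀ b ∈ t, 1 ≤ b := fun b hb => hl b (List.mem_cons_of_mem _ hb)
    obtain ⟨ihl, ihm⟩ := ih ht
    constructor
    · have := (prep_lipschitz ha).comp ihl ihm
      rw [one_mul] at this
      exact this
    · exact (prep_mapsTo ha).comp ihm

/-- Points in the `1,1,...,1` cylinder of length `N`. -/
def cylOnes2 (N : ℕ) : Set ℝ := {y | Good y ∧ ∀ j < N, cfA y (j+1) = 1}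

lemma mem_half {y : ℝ} (hy : Good y) (h1 : cfA y 1 = 1) : 2⁻¹ < y ∧ y < 1 := by
  obtain ⟨⟨h0, hlt⟩, _⟩ := hy
  refine ⟨?_, hlt⟩
  have : (gaussMap^[0] y) = y := rfl
  rw [cfA] at h1
  simp only [Nat.sub_self, Function.iterate_zero_apply] at h1
  have hinv : y⁻¹ < 2 := by
    by_contra h
    push_neg at h
    have : 2 ≤ ⌊y⁻¹⌋₊ := Nat.le_floor (by exact_mod_cast h)
    omega
  have hy0 : 0 < y := h0
  calc 2⁻¹ = (2:ℝ)⁻¹ := rfl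
  _ < y := by
    rw [inv_lt_iff_one_lt_mul₀ (by norm_num)]
    nlinarith [inv_pos.mpr hy0, mul_inv_cancel₀ (ne_of_gt hy0)]

lemma gauss_eq_on_cyl {y : ℝ} (hy : Good y) (h1 : cfA y 1 = 1) : gaussMap y = y⁻¹ - 1 := by
  obtain ⟨hhalf, hlt1⟩ := mem_half hy h1
  have h0 : 0 < y := lt_trans (by norm_num) hhalf
  have hgt : 1 < y⁻¹ := inv_gt_one hy
  have hlt2 : y⁻¹ < 2 := by
    rw [inv_lt_iff_one_lt_mul₀ h0]
    nlinarith
  rw [gaussMap, Int.fract]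
  have : ⌊y⁻¹⌋ = 1 := by
    rw [Int.floor_eq_iff]
    constructor
    · exact_mod_cast hgt.le
    · push_cast; linarith
  rw [this]
  norm_num

lemma gauss_lipschitz_cyl : LipschitzOnWith 4 gaussMap (cylOnes2 1) := by
  rw [lipschitzOnWith_iff_dist_le_mul]
  rintro y ⟨hy, hy1⟩ z ⟨hz, hz1⟩
  have hy1' := hy1 0 (by norm_num)
  have hz1' := hz1 0 (by norm_num)
  obtain ⟨hyh, hyl⟩ := mem_half hy hy1'
  obtain ⟨hzh, hzl⟩ := mem_half hz hz1'
  have hy0 : (0:ℝ) < y := by linarith [hyh]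
  have hz0 : (0:ℝ) < z := by linarith [hzh]
  rw [gauss_eq_on_cyl hy hy1', gauss_eq_on_cyl hz hz1']
  rw [Real.dist_eq, Real.dist_eq]
  have hyz : y⁻¹ - 1 - (z⁻¹ - 1) = y⁻¹ - z⁻¹ := by ring
  rw [hyz, inv_sub_inv (ne_of_gt hy0) (ne_of_gt hz0), abs_div]
  have hc : ((4:NNReal):ℝ) = 4 := by norm_num
  rw [hc]
  have hd : (1:ℝ) ≤ 4 * |y * z| := by
    rw [abs_of_pos (by positivity)]; nlinarith
  rw [div_le_iff₀ (by positivity)]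
  rw [abs_sub_comm z y]
  calc |y - z| = 1 * |y - z| := by ring
  _ ≤ (4 * |y * z|) * |y - z| := mul_le_mul_of_nonneg_right hd (abs_nonneg _)
  _ = 4 * |y - z| * |y * z| := by ring

lemma gauss_mapsTo_cyl (N : ℕ) : Set.MapsTo gaussMap (cylOnes2 (N+1)) (cylOnes2 N) := by
  rintro y ⟨hy, hy1⟩
  refine ⟨good_gauss hy, fun j hj => ?_⟩
  have := cfA_shift (x := y) 1 (j+1) (by omega)
  simp only [Function.iterate_one] at this
  rw [← this]
  exact hy1 (j+1) (by omega)

lemma cyl_subset (N : ℕ) : cylOnes2 (N+1) ⊆ cylOnes2 1 := by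
  rintro y ⟨hy, hy1⟩
  exact ⟨hy, fun j hj => hy1 j (by omega)⟩

lemma gauss_iter_lipschitz (N : ℕ) :
    LipschitzOnWith (4^N) (gaussMap^[N]) (cylOnes2 N) ∧
      Set.MapsTo (gaussMap^[N]) (cylOnes2 N) {y | Good y} := by
  induction N with
  | zero =>
    refine ⟨by simpa using (LipschitzWith.id.lipschitzOnWith (s := cylOnes2 0)), ?_⟩
    rintro y ⟨hy, _⟩
    exact hy
  | succ k ih =>
    obtain ⟨ihl, ihm⟩ := ih
    constructor
    · have hcomp := ihl.comp (gauss_lipschitz_cyl.mono (cyl_subset k)) (gauss_mapsTo_cyl k)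
      have : (gaussMap^[k]) ∘ gaussMap = gaussMap^[k+1] := by
        funext t; exact (Function.iterate_succ_apply gaussMap k t).symm
      rw [this] at hcomp
      rw [show (4:NNReal)^(k+1) = 4^k * 4 from pow_succ 4 k]
      exact hcomp
    · intro y hy
      rw [Function.iterate_succ_apply]
      exact ihm (gauss_mapsTo_cyl k hy)

lemma cfS_of_ones {y : ℝ} {n : ℕ} (h : ∀ j, 1 ≤ j → j ≤ n → cfA y j = 1) :
    cfS y n = n := by
  unfold cfS
  have hc : ∀ j ∈ Finset.Icc 1 n, cfA y j = 1 := by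
    intro j hj
    rw [Finset.mem_Icc] at hj
    exact h j hj.1 hj.2
  rw [Finset.sum_congr rfl hc, Finset.sum_const, Nat.card_Icc]
  simp

/-- The pieces of the decomposition. -/
noncomputable def piece (β : ℝ) (l : List ℕ) : Set ℝ :=
  {x | Good x ∧ (∀ n, l.length ≤ n → (cfS x n : ℝ) ≤ β * n) ∧
    ∀ j < l.length, l.getD j 0 = cfA x (j + 1)}

lemma piece_dimH_le {β : ℝ} (hβ : 1 ≤ β) (l : List ℕ) :
    dimH (piece β l) ≤ dimH (slowSet β) := by
  rcases Set.eq_empty_or_nonempty (piece β l) with hemp | ⟨x₀, hx₀⟩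
  · rw [hemp, dimH_empty]; exact zero_le
  -- the entries of l are at least 1
  have hl : ∀ a ∈ l, 1 ≤ a := by
    intro a ha
    obtain ⟨i, hi, hia⟩ := List.mem_iff_getElem.mp ha
    have h2 := hx₀.2.2 i hi
    rw [List.getD_eq_getElem l 0 hi, hia] at h2
    rw [h2]
    exact cfA_ge_one hx₀.1 _
  set N := l.length with hN
  set ones : List ℕ := List.replicate N 1 with hones
  have hones_len : ones.length = N := List.length_replicate
  have hones_mem : ∀ a ∈ ones, 1 ≤ a := by
    intro a ha
    rw [hones, List.mem_replicate] at ha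
    omega
  set f : ℝ → ℝ := fun x => prepList ones (gaussMap^[N] x) with hf
  set g : ℝ → ℝ := fun y => prepList l (gaussMap^[N] y) with hg
  -- main claims about f on the piece
  have key : ∀ x ∈ piece β l, g (f x) = x ∧ f x ∈ slowSet β ∩ cylOnes2 N := by
    rintro x ⟨hxg, hxs, hxl⟩
    have hGx : Good (gaussMap^[N] x) := good_iter hxg N
    have hfxg : Good (f x) := prepList_good hones_mem hGx
    have hfx_iter : gaussMap^[N] (f x) = gaussMap^[N] x := by
      have := prepList_gauss_iter hones_mem hGx
      rw [hones_len] at this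
      exact this
    have hfx_cfA : ∀ j < N, cfA (f x) (j + 1) = 1 := by
      intro j hj
      have := prepList_cfA hones_mem hGx j (by rw [hones_len]; exact hj)
      rw [this, hones, List.getD_eq_getElem _ 0 (by simpa [hones_len] using hj)]
      simp
    constructor
    · -- reconstruction
      rw [hg, hf]
      show prepList l (gaussMap^[N] (prepList ones (gaussMap^[N] x))) = x
      rw [show gaussMap^[N] (prepList ones (gaussMap^[N] x)) = gaussMap^[N] x from hfx_iter]
      exact reconstruct_list hxg hxl
    constructor
    · -- f x ∈ slowSet β
      refine ⟨hfxg.1, hfxg.2, ?_⟩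
      intro n hn
      have hnpos : (0:ℝ) < n := by exact_mod_cast hn
      rw [div_le_iff₀ hnpos]
      rcases le_or_gt n N with hle | hgt
      · have : cfS (f x) n = n := cfS_of_ones (fun j hj1 hj2 => by
          have := hfx_cfA (j - 1) (by omega)
          rwa [show j - 1 + 1 = j by omega] at this)
        rw [this]
        nlinarith
      · obtain ⟨m, rfl⟩ : ∃ m, n = N + m := ⟨n - N, by omega⟩
        have h1 : cfS (f x) (N + m) = cfS (f x) N + cfS (gaussMap^[N] (f x)) m :=
          cfS_shift N m
        have h2 : cfS x (N + m) = cfS x N + cfS (gaussMap^[N] x) m := cfS_shift N m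
        have h3 : cfS (f x) N = N := cfS_of_ones (fun j hj1 hj2 => by
          have := hfx_cfA (j - 1) (by omega)
          rwa [show j - 1 + 1 = j by omega] at this)
        have h4 : (N:ℝ) ≤ cfS x N := by exact_mod_cast cfS_ge hxg N
        have h5 : (cfS x (N + m) : ℝ) ≤ β * (N + m) := by
          have := hxs (N + m) (by omega)
          simpa using this
        have h6 : (cfS (gaussMap^[N] x) m : ℝ) = (cfS x (N+m) : ℝ) - cfS x N := by
          rw [h2]; push_cast; ring
        rw [h1, h3, hfx_iter]
        push_cast [h6]
        push_cast at h5 ⊢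
        linarith
    · -- f x ∈ cylOnes2 N
      exact ⟨hfxg, hfx_cfA⟩
  -- now the dimension estimate
  have hsub : piece β l ⊆ g '' (f '' piece β l) := by
    intro x hx
    exact ⟨f x, Set.mem_image_of_mem f hx, (key x hx).1⟩
  have himg : f '' piece β l ⊆ slowSet β ∩ cylOnes2 N := by
    rintro y ⟨x, hx, rfl⟩
    exact (key x hx).2
  -- g is Lipschitz on cylOnes2 N
  obtain ⟨hGlip, hGmaps⟩ := gauss_iter_lipschitz N
  have hQlip := (prepList_lipschitz hl).1
  have hGood_sub : {y : ℝ | Good y} ⊆ Set.Ici 0 := by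
    rintro y ⟨⟨h0, _⟩, _⟩
    exact le_of_lt h0
  have hglip : LipschitzOnWith (1 * 4^N) g (cylOnes2 N) :=
    hQlip.comp hGlip (fun y hy => hGood_sub (hGmaps hy))
  calc dimH (piece β l) ≤ dimH (g '' (f '' piece β l)) := dimH_mono hsub
  _ ≤ dimH (f '' piece β l) :=
      (hglip.mono (himg.trans Set.inter_subset_right)).dimH_image_le
  _ ≤ dimH (slowSet β) := dimH_mono (himg.trans Set.inter_subset_left)

theorem stmt_5 (φ : ℕ → ℝ) (hpos : ∀ n, 0 < φ n) (hmono : Monotone φ) (α : ℝ)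
    (hα : Filter.limsup (fun n => ((φ n / n : ℝ) : EReal)) atTop = (α : EReal))
    (hCV : ∀ α' : ℝ, dimH (slowSet α') < 1) :
    (∀ x ∈ levelSet φ, ∃ α' > α, x ∈ slowSet α') ∧ dimH (levelSet φ) < 1 := by
  set β : ℝ := max 1 (2 * (α + 1)) with hβdef
  have hβ1 : (1:ℝ) ≤ β := le_max_left _ _
  have hβ2 : 2 * (α + 1) ≤ β := le_max_right _ _
  -- eventual bound on φ n / n
  have hφev : ∀ᶠ n in atTop, φ n / n < α + 1 := by
    have h1 : ∀ᶠ n in atTop, ((φ n / n : ℝ) : EReal) < ((α + 1 : ℝ) : EReal) := by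
      refine eventually_lt_of_limsup_lt ?_ (by isBoundedDefault)
      rw [hα]
      exact_mod_cast lt_add_one α
    filter_upwards [h1] with n hn
    exact_mod_cast hn
  -- key: every point of the level set has an eventual linear bound
  have hbound : ∀ x ∈ levelSet φ, ∃ N, 1 ≤ N ∧ ∀ n, N ≤ n → (cfS x n : ℝ) ≤ β * n := by
    rintro x ⟨hIoo, hirr, htend⟩
    have h2 : ∀ᶠ n in atTop, (cfS x n : ℝ) / φ n < 2 :=
      htend.eventually_lt_const (by norm_num)
    have h3 := (hφev.and (h2.and (eventually_ge_atTop 1))).exists_forall_of_atTop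
    obtain ⟨N, hN⟩ := h3
    refine ⟨max N 1, le_max_right _ _, fun n hn => ?_⟩
    obtain ⟨ha, hb, hc⟩ := hN n (le_trans (le_max_left _ _) hn)
    have hn1 : (1:ℝ) ≤ (n:ℝ) := by exact_mod_cast hc
    have hφn : 0 < φ n := hpos n
    have hb' : (cfS x n : ℝ) < 2 * φ n := by
      rw [div_lt_iff₀ hφn] at hb
      linarith
    have ha' : φ n < (α + 1) * n := by
      rw [div_lt_iff₀ (by linarith : (0:ℝ) < (n:ℝ))] at ha
      linarith
    have : (cfS x n : ℝ) < 2 * (α + 1) * n := by nlinarith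
    nlinarith
  constructor
  · -- part 1
    rintro x hx
    obtain ⟨N, hN1, hNb⟩ := hbound x hx
    obtain ⟨hIoo, hirr, _⟩ := hx
    refine ⟨max (β * N) (α + 1), lt_of_lt_of_le (lt_add_one α) (le_max_right _ _), hIoo, hirr, ?_⟩
    intro n hn
    have hn1 : (1:ℝ) ≤ (n:ℝ) := by exact_mod_cast hn
    have hN1' : (1:ℝ) ≤ (N:ℝ) := by exact_mod_cast hN1
    rcases le_or_gt N n with hle | hgt
    · have := hNb n hle
      have h1 : (cfS x n : ℝ) / n ≤ β := by
        rw [div_le_iff₀ (by linarith : (0:ℝ) < (n:ℝ))]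
        linarith [this]
      calc (cfS x n : ℝ) / n ≤ β := h1
      _ ≤ β * N := by nlinarith
      _ ≤ max (β * N) (α + 1) := le_max_left _ _
    · have hmon : cfS x n ≤ cfS x N := cfS_mono x (le_of_lt hgt)
      have h2 : (cfS x n : ℝ) ≤ cfS x N := by exact_mod_cast hmon
      have h3 : (cfS x N : ℝ) ≤ β * N := hNb N le_rfl
      calc (cfS x n : ℝ) / n ≤ (cfS x n : ℝ) := div_le_self (by positivity) hn1
      _ ≤ β * N := by linarith
      _ ≤ max (β * N) (α + 1) := le_max_left _ _
  · -- part 2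
    have hcover : levelSet φ ⊆ ⋃ (l : List ℕ), piece β l := by
      intro x hx
      obtain ⟨N, hN1, hNb⟩ := hbound x hx
      obtain ⟨hIoo, hirr, _⟩ := hx
      refine Set.mem_iUnion.mpr ⟨(List.range N).map (fun j => cfA x (j+1)), ⟨hIoo, hirr⟩, ?_, ?_⟩
      · intro n hn
        simp only [List.length_map, List.length_range] at hn
        exact hNb n hn
      · intro j hj
        simp only [List.length_map, List.length_range] at hj
        rw [List.getD_eq_getElem _ 0 (by simpa using hj)]
        simp
    calc dimH (levelSet φ) ≤ dimH (⋃ (l : List ℕ), piece β l) := dimH_mono hcover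
    _ = ⨆ (l : List ℕ), dimH (piece β l) := dimH_iUnion _
    _ ≤ dimH (slowSet β) := iSup_le fun l => piece_dimH_le hβ1 l
    _ < 1 := hCV β
end

section
/- If φ(n) is a non-decreasing sequence of positive reals such that dim_H E_{φ(n)} = 1, where E_{φ(n)} = {x in (0,1)\Q : lim_{n→∞} s_n(x)/φ(n) = 1}, then liminf_{n→∞} (log φ(n))/n = 0. -/
open Filter MeasureTheory Set

theorem stmt_7 (φ : ℕ → ℝ) (hpos : ∀ n, 0 < φ n) (hmono : Monotone φ)
    -- Wang–Wu: the set of `x` with `a_n(x) ≥ B^n` infinitely often has dimension `< 1`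
    (hWW : ∀ B : ℝ, 1 < B →
      dimH {x : ℝ | x ∈ Set.Ioo (0 : ℝ) 1 ∧ Irrational x ∧
        ∃ᶠ n in atTop, B ^ n ≤ (cfA x n : ℝ)} < 1)
    -- Fan–Liao–Wang–Wu: sets with `s_n ≤ a_n(x) ≤ N s_n`, `s_n → ∞`, have dimension `≤ 1/2`
    (hFLWW : ∀ s : ℕ → ℕ, (∀ n, 3 ≤ s n) → Tendsto s atTop atTop → ∀ N : ℕ, 2 ≤ N →
      dimH {x : ℝ | x ∈ Set.Ioo (0 : ℝ) 1 ∧ Irrational x ∧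
        ∀ n, 1 ≤ n → s n ≤ cfA x n ∧ cfA x n ≤ N * s n} ≤ 1 / 2)
    (hdim : dimH (levelSet φ) = 1) :
    Filter.liminf (fun n => ((Real.log (φ n) / n : ℝ) : EReal)) atTop = (0 : EReal) := by
  by_contra hne
  -- Step 1: the liminf is ≥ 0.
  set c : ℝ := min (Real.log (φ 1)) 0 with hc
  have hclim : Tendsto (fun n : ℕ => ((c / n : ℝ) : EReal)) atTop (nhds ((0 : ℝ) : EReal)) :=
    EReal.tendsto_coe.mpr (tendsto_const_div_atTop_nhds_zero_nat c)
  have h0 : (0 : EReal) ≤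
      Filter.liminf (fun n => ((Real.log (φ n) / n : ℝ) : EReal)) atTop := by
    have hle : ∀ᶠ n : ℕ in atTop,
        ((c / n : ℝ) : EReal) ≤ ((Real.log (φ n) / n : ℝ) : EReal) := by
      filter_upwards [eventually_ge_atTop 1] with n hn
      have hnpos : (0 : ℝ) < n := by exact_mod_cast hn
      have h1 : c ≤ Real.log (φ n) := by
        have := Real.log_le_log (hpos 1) (hmono hn)
        exact le_trans (min_le_left _ _) this
      have : c / n ≤ Real.log (φ n) / n := by gcongr
      exact_mod_cast this
    have hlim := liminf_le_liminf hle
    have h2 : Filter.liminf (fun n : ℕ => ((c / n : ℝ) : EReal)) atTop = ((0:ℝ) : EReal) :=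
      hclim.liminf_eq
    rw [h2] at hlim
    exact_mod_cast hlim
  have hL : (0 : EReal) <
      Filter.liminf (fun n => ((Real.log (φ n) / n : ℝ) : EReal)) atTop :=
    h0.lt_of_ne (Ne.symm hne)
  -- Step 2: get r > 0 with φ n ≥ exp (r n) eventually.
  obtain ⟨r, hr0, hrL⟩ := EReal.exists_between_coe_real hL
  have hr0' : (0 : ℝ) < r := by exact_mod_cast hr0
  have hev : ∀ᶠ n : ℕ in atTop, ((r : ℝ) : EReal) < ((Real.log (φ n) / n : ℝ) : EReal) :=
    eventually_lt_of_lt_liminf hrL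
  have hφ : ∀ᶠ n : ℕ in atTop, Real.exp (r * n) ≤ φ n := by
    filter_upwards [hev, eventually_ge_atTop 1] with n hn hn1
    have hnpos : (0 : ℝ) < n := by exact_mod_cast hn1
    have h1 : r < Real.log (φ n) / n := by exact_mod_cast hn
    have h2 : r * n ≤ Real.log (φ n) := ((lt_div_iff₀ hnpos).mp h1).le
    calc Real.exp (r * n) ≤ Real.exp (Real.log (φ n)) := Real.exp_le_exp.mpr h2
      _ = φ n := Real.exp_log (hpos n)
  -- Step 3: the level set is contained in the Wang–Wu set with B = exp (r/2).
  set B : ℝ := Real.exp (r / 2) with hBdef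
  have hB : 1 < B := by
    rw [hBdef, ← Real.exp_zero]
    exact Real.exp_lt_exp.mpr (by linarith)
  have hB0 : (0 : ℝ) < B - 1 := by linarith
  have key : levelSet φ ⊆ {x : ℝ | x ∈ Set.Ioo (0 : ℝ) 1 ∧ Irrational x ∧
      ∃ᶠ n in atTop, B ^ n ≤ (cfA x n : ℝ)} := by
    rintro x ⟨hx1, hx2, hx3⟩
    refine ⟨hx1, hx2, ?_⟩
    by_contra hfreq
    rw [not_frequently] at hfreq
    have hfreq' : ∀ᶠ n : ℕ in atTop, (cfA x n : ℝ) < B ^ n := by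
      filter_upwards [hfreq] with n hn; exact lt_of_not_ge hn
    obtain ⟨N₁, hN₁⟩ := eventually_atTop.mp hfreq'
    set C : ℝ := (cfS x N₁ : ℝ) with hCdef
    set D : ℝ := B / (B - 1) with hDdef
    have hC0 : (0 : ℝ) ≤ C := by rw [hCdef]; positivity
    have hD0 : (0 : ℝ) < D := by rw [hDdef]; positivity
    -- upper bound on s_n
    have hs_bound : ∀ n, N₁ ≤ n → (cfS x n : ℝ) ≤ C + D * B ^ n := by
      intro n hn
      have hsplit : (cfS x n : ℝ) = C + ∑ j ∈ Finset.Ioc N₁ n, (cfA x j : ℝ) := by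
        rw [hCdef]
        have hcons := Finset.sum_Ioc_consecutive (fun j => ((cfA x j : ℕ) : ℝ))
          (Nat.zero_le N₁) hn
        simp only [cfS]
        push_cast
        rw [show Finset.Icc 1 n = Finset.Ioc 0 n from Finset.Icc_add_one_left_eq_Ioc 0 n,
          show Finset.Icc 1 N₁ = Finset.Ioc 0 N₁ from Finset.Icc_add_one_left_eq_Ioc 0 N₁]
        linarith [hcons]
      rw [hsplit]
      have h1 : ∑ j ∈ Finset.Ioc N₁ n, (cfA x j : ℝ) ≤ ∑ j ∈ Finset.Ioc N₁ n, B ^ j := by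
        refine Finset.sum_le_sum fun j hj => ?_
        exact (hN₁ j (le_of_lt (Finset.mem_Ioc.mp hj).1)).le
      have h2 : ∑ j ∈ Finset.Ioc N₁ n, B ^ j ≤ ∑ j ∈ Finset.range (n + 1), B ^ j := by
        refine Finset.sum_le_sum_of_subset_of_nonneg ?_ (fun j _ _ => by positivity)
        intro j hj
        exact Finset.mem_range.mpr (Nat.lt_succ_of_le (Finset.mem_Ioc.mp hj).2)
      have h3 : ∑ j ∈ Finset.range (n + 1), B ^ j ≤ D * B ^ n := by
        have hD : D * (B - 1) = B := div_mul_cancel₀ B hB0.ne'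
        have hcalc : D * B ^ n * (B - 1) = B ^ (n + 1) := by
          rw [pow_succ, mul_comm D (B ^ n), mul_assoc, hD]
        rw [geom_sum_eq hB.ne' (n + 1), div_le_iff₀ hB0]
        linarith [hcalc]
      linarith
    -- lower bound on s_n eventually
    have hhalf : ∀ᶠ n : ℕ in atTop, φ n / 2 < (cfS x n : ℝ) := by
      have h12 : ∀ᶠ y : ℝ in nhds 1, (1 : ℝ) / 2 < y := eventually_gt_nhds (by norm_num)
      filter_upwards [hx3.eventually h12] with n hn
      have hφn := hpos n
      rw [lt_div_iff₀ hφn] at hn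
      linarith
    have hbig : ∀ᶠ n : ℕ in atTop, 2 * (C + D) + 1 ≤ B ^ n :=
      (tendsto_pow_atTop_atTop_of_one_lt hB).eventually_ge_atTop _
    have hcontr : ∀ᶠ n : ℕ in atTop, False := by
      filter_upwards [hφ, hhalf, hbig, eventually_ge_atTop N₁] with n h1 h2 h3 h4
      have hexp : Real.exp (r * n) = B ^ n * B ^ n := by
        rw [hBdef, ← Real.exp_nat_mul, ← Real.exp_add]
        congr 1
        push_cast
        ring
      have hub := hs_bound n h4
      have hBn1 : (1 : ℝ) ≤ B ^ n := one_le_pow₀ hB.le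
      have hprod1 : (2 * (C + D) + 1) * B ^ n ≤ B ^ n * B ^ n :=
        mul_le_mul_of_nonneg_right h3 (by positivity)
      have hprod2 : C * 1 ≤ C * B ^ n := mul_le_mul_of_nonneg_left hBn1 hC0
      nlinarith [hub, h1, h2, hexp, hBn1, hprod1, hprod2]
    obtain ⟨n, hn⟩ := hcontr.exists
    exact hn
  -- Step 4: dimension contradiction.
  have h1 : (1 : ENNReal) ≤ dimH {x : ℝ | x ∈ Set.Ioo (0 : ℝ) 1 ∧ Irrational x ∧
      ∃ᶠ n in atTop, B ^ n ≤ (cfA x n : ℝ)} := hdim ▸ dimH_mono key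
  exact absurd (lt_of_le_of_lt h1 (hWW B hB)) (lt_irrefl _)
end

section
/- Let B > 1 and suppose x is an irrational in (0,1) such that a_i(x) ≤ B^i for all i ≥ 2 and s_n(x) > Σ_{k=1}^n B^k for all sufficiently large n. Then there are at most finitely many indices i with a_i(x) < (1/2) B^i; equivalently, there exists N* such that (1/2)B^i ≤ a_i(x) ≤ B^i for all i > N*. -/
open Filter MeasureTheory Set

theorem stmt_9 (B : ℝ) (hB : 1 < B)
    (x : ℝ) (hx : x ∈ Set.Ioo (0 : ℝ) 1) (hirr : Irrational x)
    (hupper : ∀ i, 2 ≤ i → (cfA x i : ℝ) ≤ B ^ i)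
    (hsum : ∃ N, ∀ n, N ≤ n → (∑ k ∈ Finset.Icc 1 n, B ^ k) < (cfS x n : ℝ)) :
    ∃ Nstar : ℕ, ∀ i, Nstar < i → (1 / 2) * B ^ i ≤ (cfA x i : ℝ) ∧ (cfA x i : ℝ) ≤ B ^ i := by
  obtain ⟨N, hN⟩ := hsum
  obtain ⟨M, hM⟩ := Filter.eventually_atTop.mp
    ((tendsto_pow_atTop_atTop_of_one_lt hB).eventually_ge_atTop (2 * (cfA x 1 : ℝ)))
  refine ⟨max 1 (max N M), fun i hi => ?_⟩
  have hi2 : 2 ≤ i := by omega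
  have hNi : N ≤ i := by omega
  have hMi : M ≤ i := by omega
  refine ⟨?_, hupper i hi2⟩
  by_contra h
  push_neg at h
  have key := hN i hNi
  have hsplit : (cfS x i : ℝ) = (cfA x 1 : ℝ) + ∑ k ∈ Finset.Ioc 1 i, (cfA x k : ℝ) := by
    rw [cfS]
    push_cast
    rw [Finset.Icc_eq_cons_Ioc (by omega : 1 ≤ i), Finset.sum_cons]
  have hsingle : B ^ i - (cfA x i : ℝ) ≤ ∑ k ∈ Finset.Ioc 1 i, (B ^ k - (cfA x k : ℝ)) := by
    refine Finset.single_le_sum (f := fun k => B ^ k - (cfA x k : ℝ)) (fun k hk => ?_) (Finset.mem_Ioc.mpr ⟨lt_of_lt_of_le one_lt_two hi2, le_rfl⟩)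
    have hk2 : 2 ≤ k := by simp at hk; omega
    have := hupper k hk2
    show (0:ℝ) ≤ B ^ k - (cfA x k : ℝ)
    linarith
  rw [Finset.sum_sub_distrib] at hsingle
  have ha1 : (cfA x 1 : ℝ) ≤ (1/2) * B ^ i := by
    have h2 := hM i hMi
    linarith
  have hBsum : ∑ k ∈ Finset.Ioc 1 i, B ^ k ≤ ∑ k ∈ Finset.Icc 1 i, B ^ k := by
    refine Finset.sum_le_sum_of_subset_of_nonneg Finset.Ioc_subset_Icc_self (fun k _ _ => by positivity)
  linarith
end

section
/- For a non-decreasing sequence φ(n) with dim_H E_{φ(n)} = 1, where E_{φ(n)} = {x : lim s_n(x)/φ(n) = 1}, both limsup_{n→∞} φ(n)/n = ∞ and liminf_{n→∞} (log φ(n))/n = 0 hold. -/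
open Filter MeasureTheory Set

/-- the inverse branch of the Gauss map prepending digit 1 -/
noncomputable def psiCF (y : ℝ) : ℝ := (1 + y)⁻¹

lemma psiCF_mem {x : ℝ} (hx : x ∈ Set.Ioo (0:ℝ) 1) : psiCF x ∈ Set.Ioo (2⁻¹ : ℝ) 1 := by
  obtain ⟨h0, h1⟩ := hx
  constructor
  · rw [psiCF, show ((2:ℝ)⁻¹ = 2⁻¹) from rfl]
    rw [inv_lt_inv₀ (by norm_num : (0:ℝ) < 2) (by linarith : (0:ℝ) < 1 + x)]
    linarith
  · rw [psiCF]
    rw [inv_lt_one_iff₀]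
    right; linarith

lemma psiCF_mem' {x : ℝ} (hx : x ∈ Set.Ioo (0:ℝ) 1) : psiCF x ∈ Set.Ioo (0:ℝ) 1 := by
  have := psiCF_mem hx
  exact ⟨lt_trans (by norm_num) this.1, this.2⟩

lemma psiCF_irrational {x : ℝ} (hx : Irrational x) : Irrational (psiCF x) := by
  have h1 : Irrational (1 + x) := by
    have := hx.ratCast_add 1
    simpa using this
  exact h1.inv

lemma psiCF_inv {x : ℝ} (hx : x ∈ Set.Ioo (0:ℝ) 1) : (psiCF x)⁻¹ = 1 + x := by
  rw [psiCF, inv_inv]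

lemma gaussMap_psiCF {x : ℝ} (hx : x ∈ Set.Ioo (0:ℝ) 1) : gaussMap (psiCF x) = x := by
  rw [gaussMap, psiCF_inv hx]
  have : (1:ℝ) + x = ((1:ℤ):ℝ) + x := by norm_num
  rw [this, Int.fract_intCast_add]
  exact Int.fract_eq_self.2 ⟨le_of_lt hx.1, hx.2⟩

lemma cfA_psiCF_one {x : ℝ} (hx : x ∈ Set.Ioo (0:ℝ) 1) : cfA (psiCF x) 1 = 1 := by
  rw [cfA]
  norm_num
  rw [psiCF_inv hx]
  rw [Nat.floor_eq_iff (by linarith [hx.1] : (0:ℝ) ≤ 1 + x)]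
  constructor
  · push_cast; linarith [hx.1]
  · push_cast; linarith [hx.2]

lemma cfA_psiCF_succ {x : ℝ} (hx : x ∈ Set.Ioo (0:ℝ) 1) (m : ℕ) (hm : 1 ≤ m) :
    cfA (psiCF x) (m + 1) = cfA x m := by
  obtain ⟨k, rfl⟩ := Nat.exists_eq_add_of_le hm
  rw [cfA, cfA]
  congr 2
  have h1 : 1 + k + 1 - 1 = k + 1 := by omega
  have h2 : 1 + k - 1 = k := by omega
  rw [h1, h2, Function.iterate_succ_apply, gaussMap_psiCF hx]

lemma cfS_psiCF {x : ℝ} (hx : x ∈ Set.Ioo (0:ℝ) 1) (m : ℕ) :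
    cfS (psiCF x) (m + 1) = 1 + cfS x m := by
  induction m with
  | zero =>
    simp [cfS, cfA_psiCF_one hx]
  | succ k ih =>
    rw [cfS_succ, ih, cfA_psiCF_succ hx (k+1) (by omega), cfS_succ]
    ring

lemma psiCF_iter_mem {x : ℝ} (hx : x ∈ Set.Ioo (0:ℝ) 1) (L : ℕ) :
    psiCF^[L] x ∈ Set.Ioo (0:ℝ) 1 := by
  induction L with
  | zero => simpa using hx
  | succ k ih =>
    rw [Function.iterate_succ_apply']
    exact psiCF_mem' ih

lemma psiCF_iter_irrational {x : ℝ} (hx : Irrational x) (L : ℕ) :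
    Irrational (psiCF^[L] x) := by
  induction L with
  | zero => simpa using hx
  | succ k ih =>
    rw [Function.iterate_succ_apply']
    exact psiCF_irrational ih

lemma cfS_psiCF_iter {x : ℝ} (hx : x ∈ Set.Ioo (0:ℝ) 1) (L : ℕ) :
    ∀ m, cfS (psiCF^[L] x) m = min m L + cfS x (m - L) := by
  induction L with
  | zero =>
    intro m; simp
  | succ k ih =>
    intro m
    rw [Function.iterate_succ_apply']
    match m with
    | 0 => simp [cfS]
    | (m' + 1) =>
      rw [cfS_psiCF (psiCF_iter_mem hx k) m', ih m']
      have h1 : min (m' + 1) (k + 1) = min m' k + 1 := by omega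
      have h2 : m' + 1 - (k + 1) = m' - k := by omega
      rw [h1, h2]
      ring

lemma gaussMap_lipschitz_on {S : Set ℝ} (hS : S ⊆ Set.Ioo (2⁻¹:ℝ) 1) :
    LipschitzOnWith 4 gaussMap S := by
  rw [lipschitzOnWith_iff_dist_le_mul]
  intro y hy z hz
  obtain ⟨hy1, hy2⟩ := hS hy
  obtain ⟨hz1, hz2⟩ := hS hz
  have hy0 : (0:ℝ) < y := by linarith [inv_pos.2 (zero_lt_two (α := ℝ))]
  have hz0 : (0:ℝ) < z := by linarith [inv_pos.2 (zero_lt_two (α := ℝ))]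
  have hyv : gaussMap y = y⁻¹ - 1 := by
    rw [gaussMap]
    have h1 : (1:ℝ) ≤ y⁻¹ := by
      rw [le_inv_comm₀ one_pos hy0]; simpa using le_of_lt hy2
    have h2 : y⁻¹ < 2 := by
      rw [inv_lt_comm₀ hy0 zero_lt_two]
      simpa [one_div] using hy1
    rw [Int.fract]
    have : ⌊y⁻¹⌋ = 1 := by
      rw [Int.floor_eq_iff]
      push_cast; exact ⟨h1, by linarith⟩
    rw [this]; push_cast; ring
  have hzv : gaussMap z = z⁻¹ - 1 := by
    rw [gaussMap]
    have h1 : (1:ℝ) ≤ z⁻¹ := by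
      rw [le_inv_comm₀ one_pos hz0]; simpa using le_of_lt hz2
    have h2 : z⁻¹ < 2 := by
      rw [inv_lt_comm₀ hz0 zero_lt_two]
      simpa [one_div] using hz1
    rw [Int.fract]
    have : ⌊z⁻¹⌋ = 1 := by
      rw [Int.floor_eq_iff]
      push_cast; exact ⟨h1, by linarith⟩
    rw [this]; push_cast; ring
  rw [hyv, hzv]
  rw [Real.dist_eq, Real.dist_eq]
  have key : y⁻¹ - 1 - (z⁻¹ - 1) = (z - y) / (y * z) := by
    field_simp
    ring
  rw [key]
  rw [abs_div]
  have hyz : (4:ℝ) * |y * z| ≥ 1 := by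
    rw [abs_of_pos (mul_pos hy0 hz0)]
    nlinarith [inv_pos.2 (zero_lt_two (α := ℝ))]
  rw [div_le_iff₀ (by positivity)]
  have : |z - y| = |y - z| := abs_sub_comm z y
  rw [this]
  push_cast
  nlinarith [abs_nonneg (y - z)]

lemma dimH_le_psiCF_image {F : Set ℝ} (hF : F ⊆ Set.Ioo (0:ℝ) 1) :
    dimH F ≤ dimH (psiCF '' F) := by
  have himg : psiCF '' F ⊆ Set.Ioo (2⁻¹:ℝ) 1 := by
    rintro _ ⟨x, hx, rfl⟩
    exact psiCF_mem (hF hx)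
  have hlip := gaussMap_lipschitz_on himg
  have heq : gaussMap '' (psiCF '' F) = F := by
    rw [← Set.image_comp]
    ext z
    constructor
    · rintro ⟨x, hx, rfl⟩
      simpa [Function.comp, gaussMap_psiCF (hF hx)] using hx
    · intro hz
      exact ⟨z, hz, by simp [Function.comp, gaussMap_psiCF (hF hz)]⟩
  calc dimH F = dimH (gaussMap '' (psiCF '' F)) := by rw [heq]
    _ ≤ dimH (psiCF '' F) := hlip.dimH_image_le

lemma dimH_le_psiCF_iter_image {F : Set ℝ} (hF : F ⊆ Set.Ioo (0:ℝ) 1) (L : ℕ) :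
    dimH F ≤ dimH (psiCF^[L] '' F) := by
  induction L generalizing F with
  | zero => simp
  | succ k ih =>
    have h1 : psiCF '' F ⊆ Set.Ioo (0:ℝ) 1 := by
      rintro _ ⟨x, hx, rfl⟩
      exact psiCF_mem' (hF hx)
    calc dimH F ≤ dimH (psiCF '' F) := dimH_le_psiCF_image hF
      _ ≤ dimH (psiCF^[k] '' (psiCF '' F)) := ih h1
      _ = dimH (psiCF^[k+1] '' F) := by
          rw [← Set.image_comp, ← Function.iterate_succ]


lemma part_one (φ : ℕ → ℝ) (hpos : ∀ n, 0 < φ n) (hmono : Monotone φ)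
    (hCV : ∀ A : ℝ, dimH {x : ℝ | x ∈ Set.Ioo (0 : ℝ) 1 ∧ Irrational x ∧
      ∀ n, 1 ≤ n → (cfS x n : ℝ) / n ≤ A} < 1)
    (hdim : dimH (levelSet φ) = 1) :
    Filter.limsup (fun n => ((φ n / n : ℝ) : EReal)) atTop = (⊤ : EReal) := by
  by_contra htop
  set u : ℕ → EReal := fun n => ((φ n / n : ℝ) : EReal) with hu
  set C : ℝ := (Filter.limsup u atTop).toReal + 1 with hC
  have hCgt : Filter.limsup u atTop < (C : EReal) := by
    calc Filter.limsup u atTop ≤ ((Filter.limsup u atTop).toReal : EReal) :=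
          EReal.le_coe_toReal htop
      _ < (C : EReal) := by
          rw [hC]; exact_mod_cast (lt_add_one _)
  have hev : ∀ᶠ n in atTop, u n < (C : EReal) := eventually_lt_of_limsup_lt hCgt
  obtain ⟨N₀', hN₀'⟩ := eventually_atTop.1 hev
  set N₀ := max N₀' 1 with hN₀def
  have hN₀1 : 1 ≤ N₀ := le_max_right _ _
  have hφlt : ∀ n, N₀ ≤ n → φ n < C * n := by
    intro n hn
    have h1 : 1 ≤ n := le_trans hN₀1 hn
    have h2 := hN₀' n (le_trans (le_max_left _ _) hn)
    rw [hu] at h2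
    simp only [EReal.coe_lt_coe_iff] at h2
    have hn0 : (0:ℝ) < n := by exact_mod_cast h1
    calc φ n = (φ n / n) * n := by field_simp
      _ < C * n := mul_lt_mul_of_pos_right h2 hn0
  have hCpos : 0 < C := by
    have h := hφlt N₀ le_rfl
    have hn0 : (0:ℝ) < N₀ := by exact_mod_cast hN₀1
    nlinarith [hpos N₀]
  set C₁ : ℝ := C * N₀ with hC₁
  have hC₁pos : 0 < C₁ := by
    have hn0 : (0:ℝ) < N₀ := by exact_mod_cast hN₀1
    positivity
  have hφle : ∀ n, 1 ≤ n → φ n ≤ C₁ * n := by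
    intro n hn
    have hn0 : (1:ℝ) ≤ n := by exact_mod_cast hn
    rcases le_or_gt N₀ n with h | h
    · have h1 := hφlt n h
      have hN₀1' : (1:ℝ) ≤ N₀ := by exact_mod_cast hN₀1
      calc φ n ≤ C * n := le_of_lt h1
        _ ≤ C₁ * n := mul_le_mul_of_nonneg_right (by nlinarith) (by linarith)
    · have h1 : φ n ≤ φ N₀ := hmono (le_of_lt h)
      have h2 : φ N₀ < C * N₀ := hφlt N₀ le_rfl
      calc φ n ≤ C₁ := by rw [hC₁]; linarith
        _ ≤ C₁ * n := by nlinarith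
  set A : ℝ := 2 * C₁ + 2 with hA
  have hA2 : 2 ≤ A := by rw [hA]; linarith
  set F : ℕ → Set ℝ := fun N => {x : ℝ | x ∈ Set.Ioo (0:ℝ) 1 ∧ Irrational x ∧
    ∀ n, N ≤ n → (cfS x n : ℝ) ≤ A * n} with hF
  have hsub : levelSet φ ⊆ ⋃ N, F N := by
    intro x hx
    obtain ⟨hx1, hx2, hx3⟩ := hx
    have hev2 : ∀ᶠ n in atTop, (cfS x n : ℝ) / φ n < 2 := hx3.eventually_lt_const one_lt_two
    obtain ⟨N, hN⟩ := eventually_atTop.1 hev2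
    refine Set.mem_iUnion.2 ⟨N + 1, hx1, hx2, fun n hn => ?_⟩
    have h1 : 1 ≤ n := by omega
    have hn0 : (1:ℝ) ≤ n := by exact_mod_cast h1
    have h2 := hN n (by omega)
    have h3 : (cfS x n : ℝ) < 2 * φ n := by
      rw [div_lt_iff₀ (hpos n)] at h2; linarith
    have h4 := hφle n h1
    calc (cfS x n : ℝ) ≤ 2 * (C₁ * n) := by linarith
      _ ≤ A * n := by rw [hA]; nlinarith
  have hdimF : ∀ N, dimH (F N) ≤ dimH {x : ℝ | x ∈ Set.Ioo (0 : ℝ) 1 ∧ Irrational x ∧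
      ∀ n, 1 ≤ n → (cfS x n : ℝ) / n ≤ A} := by
    intro N
    set L := 2 * N + 2 with hL
    have hFsub : F N ⊆ Set.Ioo (0:ℝ) 1 := fun x hx => hx.1
    have himg : psiCF^[L] '' (F N) ⊆ {x : ℝ | x ∈ Set.Ioo (0 : ℝ) 1 ∧ Irrational x ∧
        ∀ n, 1 ≤ n → (cfS x n : ℝ) / n ≤ A} := by
      rintro _ ⟨x, hx, rfl⟩
      obtain ⟨hx1, hx2, hx3⟩ := hx
      refine ⟨psiCF_iter_mem hx1 L, psiCF_iter_irrational hx2 L, fun m hm => ?_⟩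
      have hm0 : (0:ℝ) < m := by exact_mod_cast hm
      rw [div_le_iff₀ hm0]
      rw [cfS_psiCF_iter hx1 L m]
      rcases le_or_gt m L with hcase | hcase
      · rw [min_eq_left hcase, Nat.sub_eq_zero_of_le hcase]
        have hz : cfS x 0 = 0 := by simp [cfS]
        rw [hz]
        push_cast
        nlinarith
      · have hmin : min m L = L := min_eq_right (le_of_lt hcase)
        rw [hmin]
        have hmn : m = L + (m - L) := by omega
        set n := m - L with hn
        have hn1 : 1 ≤ n := by omega
        have hcast : (m:ℝ) = (L:ℝ) + n := by rw [hmn]; push_cast; ring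
        have hnn : (1:ℝ) ≤ n := by exact_mod_cast hn1
        have hLr : (L:ℝ) = 2 * (N:ℝ) + 2 := by rw [hL]; push_cast; ring
        have hNN : (0:ℝ) ≤ N := Nat.cast_nonneg N
        have key : (L:ℝ) + (cfS x n:ℝ) ≤ A * ((L:ℝ) + (n:ℝ)) := by
          rcases le_or_gt N n with h | h
          · have h5 := hx3 n h
            nlinarith [mul_nonneg (by linarith : (0:ℝ) ≤ A - 1)
              (by positivity : (0:ℝ) ≤ (L:ℝ))]
          · have h1 : (cfS x n : ℝ) ≤ cfS x N := by exact_mod_cast cfS_mono x (le_of_lt h)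
            have h2 := hx3 N le_rfl
            nlinarith [mul_nonneg (by linarith : (0:ℝ) ≤ A - 2) hNN,
              mul_nonneg (by linarith : (0:ℝ) ≤ A) (by linarith : (0:ℝ) ≤ (n:ℝ) - 1)]
        calc ((L + cfS x n : ℕ):ℝ) = (L:ℝ) + (cfS x n:ℝ) := by push_cast; ring
          _ ≤ A * ((L:ℝ) + (n:ℝ)) := key
          _ = A * m := by rw [hcast]
    calc dimH (F N) ≤ dimH (psiCF^[L] '' (F N)) := dimH_le_psiCF_iter_image hFsub L
      _ ≤ _ := dimH_mono himg
  have hfin : (1 : ENNReal) ≤ dimH {x : ℝ | x ∈ Set.Ioo (0 : ℝ) 1 ∧ Irrational x ∧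
      ∀ n, 1 ≤ n → (cfS x n : ℝ) / n ≤ A} := by
    calc (1:ENNReal) = dimH (levelSet φ) := hdim.symm
      _ ≤ dimH (⋃ N, F N) := dimH_mono hsub
      _ = ⨆ N, dimH (F N) := dimH_iUnion F
      _ ≤ _ := iSup_le hdimF
  exact absurd (lt_of_le_of_lt hfin (hCV A)) (lt_irrefl _)


lemma liminf_nonneg_aux (φ : ℕ → ℝ) (hpos : ∀ n, 0 < φ n) (hmono : Monotone φ) :
    (0 : EReal) ≤ Filter.liminf (fun n => ((Real.log (φ n) / n : ℝ) : EReal)) atTop := by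
  by_contra h
  push_neg at h
  obtain ⟨z, hz1, hz2⟩ := exists_between h
  have hzt : z ≠ ⊤ := ne_top_of_lt hz2
  have hzb : z ≠ ⊥ := by
    rintro rfl
    exact absurd hz1 (by simp)
  set c : ℝ := z.toReal with hc
  have hcz : (c : EReal) = z := EReal.coe_toReal hzt hzb
  have hcneg : c < 0 := by
    have h2 := hz2; rw [← hcz] at h2; exact_mod_cast h2
  have hfreq : ∃ᶠ n in atTop, ((Real.log (φ n) / n : ℝ) : EReal) < z :=
    frequently_lt_of_liminf_lt (by isBoundedDefault) hz1
  have hev : ∀ᶠ n : ℕ in atTop, c < Real.log (φ 1) / n :=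
    (tendsto_const_div_atTop_nhds_zero_nat (Real.log (φ 1))).eventually_const_lt hcneg
  obtain ⟨n, hnlt, hnev, hn1⟩ :=
    (hfreq.and_eventually (hev.and (eventually_ge_atTop 1))).exists
  rw [← hcz] at hnlt
  have hnlt' : Real.log (φ n) / n < c := by exact_mod_cast hnlt
  have hlog : Real.log (φ 1) ≤ Real.log (φ n) :=
    Real.log_le_log (hpos 1) (hmono hn1)
  have hn0 : (0:ℝ) < n := by exact_mod_cast hn1
  have hdd : Real.log (φ 1) / n ≤ Real.log (φ n) / n := by gcongr
  linarith

lemma part_two (φ : ℕ → ℝ) (hpos : ∀ n, 0 < φ n) (hmono : Monotone φ)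
    (hWW : ∀ B : ℝ, 1 < B →
      dimH {x : ℝ | x ∈ Set.Ioo (0 : ℝ) 1 ∧ Irrational x ∧
        ∃ᶠ n in atTop, B ^ n ≤ (cfA x n : ℝ)} < 1)
    (hdim : dimH (levelSet φ) = 1) :
    Filter.liminf (fun n => ((Real.log (φ n) / n : ℝ) : EReal)) atTop = (0 : EReal) := by
  have hge := liminf_nonneg_aux φ hpos hmono
  by_contra hne
  have hlt : (0:EReal) < Filter.liminf (fun n => ((Real.log (φ n) / n : ℝ) : EReal)) atTop :=
    lt_of_le_of_ne hge (Ne.symm hne)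
  obtain ⟨z, hz1, hz2⟩ := exists_between hlt
  have hzt : z ≠ ⊤ := ne_top_of_lt hz2
  have hzb : z ≠ ⊥ := by
    rintro rfl
    exact absurd hz1 (by simp)
  set c : ℝ := z.toReal with hc
  have hcz : (c : EReal) = z := EReal.coe_toReal hzt hzb
  have hcpos : 0 < c := by
    have h1 := hz1; rw [← hcz] at h1; exact_mod_cast h1
  have hev : ∀ᶠ n : ℕ in atTop, (c : EReal) < ((Real.log (φ n) / n : ℝ) : EReal) :=
    eventually_lt_of_lt_liminf (hcz ▸ hz2)
  have hexp : ∀ᶠ n : ℕ in atTop, Real.exp (c * n) < φ n := by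
    filter_upwards [hev, eventually_ge_atTop 1] with n h1 h2
    have h1' : c < Real.log (φ n) / n := by exact_mod_cast h1
    have hn0 : (0:ℝ) < n := by exact_mod_cast h2
    have hcn : c * n < Real.log (φ n) := by
      rw [lt_div_iff₀ hn0] at h1'; linarith
    calc Real.exp (c * n) < Real.exp (Real.log (φ n)) := Real.exp_lt_exp.2 hcn
      _ = φ n := Real.exp_log (hpos n)
  set r : ℝ := Real.exp (c / 2) with hrdef
  have hr1 : 1 < r := by
    have := Real.add_one_lt_exp (ne_of_gt (half_pos hcpos))
    rw [hrdef]; linarith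
  have hrpos : (0:ℝ) < r := lt_trans one_pos hr1
  -- frequently, φ jumps by a factor of r
  have hfreq : ∃ᶠ n in atTop, r * φ n ≤ φ (n + 1) := by
    by_contra hcon
    rw [Filter.not_frequently] at hcon
    obtain ⟨M, hM⟩ := eventually_atTop.1 (hcon.and hexp)
    have key : ∀ k, φ (M + k) ≤ φ M * r ^ k := by
      intro k
      induction k with
      | zero => simp
      | succ j ih =>
        have h1 := (hM (M + j) (Nat.le_add_right _ _)).1
        push_neg at h1
        have hstep : φ (M + (j + 1)) < r * φ (M + j) := by
          have : M + (j + 1) = (M + j) + 1 := by omega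
          rw [this]; exact h1
        calc φ (M + (j + 1)) ≤ r * φ (M + j) := le_of_lt hstep
          _ ≤ r * (φ M * r ^ j) := by nlinarith
          _ = φ M * r ^ (j + 1) := by ring
    obtain ⟨k, hk⟩ := pow_unbounded_of_one_lt (φ M / Real.exp (c * M)) hr1
    have h1 : Real.exp (c * (M + k : ℕ)) < φ (M + k) := (hM (M + k) (Nat.le_add_right _ _)).2
    have h2 := key k
    have h3 : φ M < r ^ k * Real.exp (c * M) := by
      rw [div_lt_iff₀ (Real.exp_pos _)] at hk; linarith
    have hrk : r ^ k = Real.exp (k * (c / 2)) := by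
      rw [hrdef, ← Real.exp_nat_mul]
    have hE : Real.exp (c * ((M:ℝ) + k)) = Real.exp (c * M) * (r ^ k * r ^ k) := by
      have hee : c * ((M:ℝ) + k) = c * M + ((k:ℝ) * (c / 2) + (k:ℝ) * (c / 2)) := by ring
      rw [hee, Real.exp_add, Real.exp_add, hrk]
    have h1' : Real.exp (c * ((M:ℝ) + k)) < φ (M + k) := by
      have : ((M + k : ℕ) : ℝ) = (M:ℝ) + k := by push_cast; ring
      rw [← this]; exact h1
    nlinarith [pow_pos hrpos k, Real.exp_pos (c * (M:ℝ))]
  set δ : ℝ := (1 - r⁻¹) / 2 with hδdef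
  have hrinv1 : r⁻¹ < 1 := inv_lt_one_of_one_lt₀ hr1
  have hrinv0 : (0:ℝ) < r⁻¹ := inv_pos.2 hrpos
  have hδpos : 0 < δ := by rw [hδdef]; linarith
  set ε : ℝ := δ / 2 with hεdef
  have hεpos : 0 < ε := half_pos hδpos
  set B : ℝ := Real.exp (c / 4) with hBdef
  have hB1 : 1 < B := by
    have := Real.add_one_lt_exp (ne_of_gt (by linarith : (0:ℝ) < c / 4))
    rw [hBdef]; linarith
  -- eventual bound for the exponential comparison
  have hlast : ∀ᶠ n : ℕ in atTop, B ^ (n + 1) ≤ δ * Real.exp (c * ((n:ℝ) + 1)) := by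
    filter_upwards [eventually_ge_atTop ⌈(4 / (3 * c)) * (-Real.log δ)⌉₊] with n hn
    have hn' : (4 / (3 * c)) * (-Real.log δ) ≤ (n:ℝ) :=
      le_trans (Nat.le_ceil _) (by exact_mod_cast hn)
    have hBpow : B ^ (n + 1) = Real.exp (((n:ℝ) + 1) * (c / 4)) := by
      rw [hBdef, ← Real.exp_nat_mul]
      congr 1
      push_cast; ring
    have hδe : δ = Real.exp (Real.log δ) := (Real.exp_log hδpos).symm
    rw [hBpow]
    calc Real.exp (((n:ℝ) + 1) * (c / 4)) ≤ Real.exp (Real.log δ + c * ((n:ℝ) + 1)) := by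
          apply Real.exp_le_exp.2
          have h34 : (0:ℝ) < 3 * c / 4 := by linarith
          have := mul_le_mul_of_nonneg_left hn' (le_of_lt h34)
          have hcc : (3 * c / 4) * ((4 / (3 * c)) * (-Real.log δ)) = -Real.log δ := by
            field_simp
          rw [hcc] at this
          nlinarith
      _ = δ * Real.exp (c * ((n:ℝ) + 1)) := by rw [Real.exp_add, ← hδe]
  -- the level set is contained in the Wang–Wu set
  have hsub : levelSet φ ⊆ {x : ℝ | x ∈ Set.Ioo (0 : ℝ) 1 ∧ Irrational x ∧
      ∃ᶠ n in atTop, B ^ n ≤ (cfA x n : ℝ)} := by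
    rintro x ⟨hx1, hx2, hx3⟩
    refine ⟨hx1, hx2, ?_⟩
    have ev1 : ∀ᶠ n : ℕ in atTop, (cfS x n : ℝ) < (1 + ε) * φ n := by
      filter_upwards [hx3.eventually_lt_const (by linarith : (1:ℝ) < 1 + ε)] with n h
      rw [div_lt_iff₀ (hpos n)] at h; linarith
    have ev2 : ∀ᶠ n : ℕ in atTop, (1 - ε) * φ n < (cfS x n : ℝ) := by
      filter_upwards [hx3.eventually_const_lt (by linarith : (1:ℝ) - ε < 1)] with n h
      rw [lt_div_iff₀ (hpos n)] at h; linarith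
    have ev2' : ∀ᶠ n : ℕ in atTop, (1 - ε) * φ (n + 1) < (cfS x (n + 1) : ℝ) := by
      obtain ⟨N, hN⟩ := eventually_atTop.1 ev2
      exact eventually_atTop.2 ⟨N, fun n hn => hN (n + 1) (by omega)⟩
    have hexp' : ∀ᶠ n : ℕ in atTop, Real.exp (c * ((n:ℝ) + 1)) < φ (n + 1) := by
      obtain ⟨N, hN⟩ := eventually_atTop.1 hexp
      refine eventually_atTop.2 ⟨N, fun n hn => ?_⟩
      have := hN (n + 1) (by omega)
      have hcc : ((n + 1 : ℕ) : ℝ) = (n:ℝ) + 1 := by push_cast; ring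
      rwa [hcc] at this
    have hall := hfreq.and_eventually (ev1.and (ev2'.and (hexp'.and hlast)))
    rw [Filter.frequently_atTop] at hall ⊢
    intro N0
    obtain ⟨n, hnN, hratio, hev1, hev2', hexp'', hlast'⟩ := hall N0
    refine ⟨n + 1, by omega, ?_⟩
    have hsum : (cfS x (n + 1) : ℝ) = (cfS x n : ℝ) + (cfA x (n + 1) : ℝ) := by
      rw [cfS_succ]; push_cast; ring
    have hmul : φ n ≤ r⁻¹ * φ (n + 1) := by
      have h := mul_le_mul_of_nonneg_left hratio (le_of_lt hrinv0)
      rwa [← mul_assoc, inv_mul_cancel₀ (ne_of_gt hrpos), one_mul] at h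
    have hid : (1 - ε) - (1 + ε) * r⁻¹ = δ + δ * δ := by
      rw [hεdef, hδdef]; ring
    have haux : δ * φ (n + 1) ≤ (cfA x (n + 1) : ℝ) := by
      have h1 : (cfA x (n + 1) : ℝ) = (cfS x (n + 1) : ℝ) - (cfS x n : ℝ) := by
        linarith [hsum]
      rw [h1]
      have hφ1 := hpos (n + 1)
      have step1 : (1 + ε) * φ n ≤ (1 + ε) * (r⁻¹ * φ (n + 1)) :=
        mul_le_mul_of_nonneg_left hmul (by linarith)
      have step2 : δ * φ (n + 1) ≤ ((1 - ε) - (1 + ε) * r⁻¹) * φ (n + 1) := by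
        apply mul_le_mul_of_nonneg_right _ (le_of_lt hφ1)
        rw [hid]
        nlinarith [mul_self_nonneg δ]
      nlinarith [hev1, hev2']
    calc B ^ (n + 1) ≤ δ * Real.exp (c * ((n:ℝ) + 1)) := hlast'
      _ ≤ δ * φ (n + 1) := mul_le_mul_of_nonneg_left (le_of_lt hexp'') (le_of_lt hδpos)
      _ ≤ (cfA x (n + 1) : ℝ) := haux
  have hfin : (1 : ENNReal) ≤ dimH {x : ℝ | x ∈ Set.Ioo (0 : ℝ) 1 ∧ Irrational x ∧
      ∃ᶠ n in atTop, B ^ n ≤ (cfA x n : ℝ)} := hdim ▸ dimH_mono hsub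
  exact absurd (lt_of_le_of_lt hfin (hWW B hB1)) (lt_irrefl _)

theorem stmt_10 (φ : ℕ → ℝ) (hpos : ∀ n, 0 < φ n) (hmono : Monotone φ)
    -- Cesaratto–Vallée: `dim_H {x : s_n(x)/n ≤ A for all n} < 1` for all finite `A`
    (hCV : ∀ A : ℝ, dimH {x : ℝ | x ∈ Set.Ioo (0 : ℝ) 1 ∧ Irrational x ∧
      ∀ n, 1 ≤ n → (cfS x n : ℝ) / n ≤ A} < 1)
    -- Wang–Wu: the set of `x` with `a_n(x) ≥ B^n` infinitely often has dimension `< 1`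
    (hWW : ∀ B : ℝ, 1 < B →
      dimH {x : ℝ | x ∈ Set.Ioo (0 : ℝ) 1 ∧ Irrational x ∧
        ∃ᶠ n in atTop, B ^ n ≤ (cfA x n : ℝ)} < 1)
    -- Fan–Liao–Wang–Wu: sets with `s_n ≤ a_n(x) ≤ N s_n`, `s_n → ∞`, have dimension `≤ 1/2`
    (hFLWW : ∀ s : ℕ → ℕ, (∀ n, 3 ≤ s n) → Tendsto s atTop atTop → ∀ N : ℕ, 2 ≤ N →
      dimH {x : ℝ | x ∈ Set.Ioo (0 : ℝ) 1 ∧ Irrational x ∧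
        ∀ n, 1 ≤ n → s n ≤ cfA x n ∧ cfA x n ≤ N * s n} ≤ 1 / 2)
    (hdim : dimH (levelSet φ) = 1) :
    Filter.limsup (fun n => ((φ n / n : ℝ) : EReal)) atTop = (⊤ : EReal) ∧
    Filter.liminf (fun n => ((Real.log (φ n) / n : ℝ) : EReal)) atTop = (0 : EReal) := by
  exact ⟨part_one φ hpos hmono hCV hdim, part_two φ hpos hmono hWW hdim⟩
end

section
/- For b, c > 1 and φ(n) = Σ_{k=1}^n c^{b^k}, the set E_{φ(n)} = {x in (0,1)\Q : lim_{n→∞} s_n(x)/φ(n) = 1} has Hausdorff dimension 1/(b+1). -/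
open Filter MeasureTheory Set

set_option linter.unusedSectionVars false
set_option linter.unusedVariables false
set_option linter.unusedTactic false
set_option linter.deprecated false
set_option maxHeartbeats 1000000

open Asymptotics

lemma aux_nq (q : ℝ) (hq0 : 0 < q) (hq1 : q < 1) :
    Tendsto (fun n : ℕ => (n : ℝ) * q ^ n) atTop (nhds 0) := by
  have h1 : (1:ℝ) < q⁻¹ := (one_lt_inv₀ hq0).mpr hq1
  have h2 := (isLittleO_pow_const_const_pow_of_one_lt 1 h1).tendsto_div_nhds_zero
  have heq : (fun n : ℕ => (n:ℝ)^1 / (q⁻¹)^n) = fun n : ℕ => (n:ℝ) * q^n := by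
    funext n
    rw [pow_one, inv_pow, div_inv_eq_mul]
  rwa [heq] at h2

lemma aux_ndivpow (b : ℝ) (hb : 1 < b) :
    Tendsto (fun n : ℕ => (n : ℝ) / b ^ n) atTop (nhds 0) := by
  have h2 := (isLittleO_pow_const_const_pow_of_one_lt 1 hb).tendsto_div_nhds_zero
  simpa using h2

lemma aux_nrpow (b r : ℝ) (hb : 1 < b) (hr0 : 0 < r) (hr1 : r < 1) :
    Tendsto (fun n : ℕ => (n : ℝ) * r ^ (b ^ n)) atTop (nhds 0) := by
  set q : ℝ := r ^ (b - 1) with hqdef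
  have hq0 : 0 < q := Real.rpow_pos_of_pos hr0 _
  have hq1 : q < 1 := Real.rpow_lt_one hr0.le hr1 (by linarith)
  have hbound : ∀ n : ℕ, r ^ (b ^ n) ≤ r * q ^ n := by
    intro n
    have hber : (1 : ℝ) + (n:ℝ) * (b - 1) ≤ b ^ n := by
      have := one_add_mul_le_pow (a := b - 1) (by linarith) n
      calc (1:ℝ) + (n:ℝ)*(b-1) ≤ (1 + (b-1))^n := this
        _ = b ^ n := by ring_nf
    calc r ^ (b ^ n) ≤ r ^ ((1:ℝ) + (n:ℝ) * (b - 1)) :=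
          Real.rpow_le_rpow_of_exponent_ge hr0 hr1.le hber
      _ = r * q ^ n := by
          rw [Real.rpow_add hr0, Real.rpow_one, mul_comm ((n:ℝ)) (b-1)]
          congr 1
          rw [← Real.rpow_natCast q n, hqdef, ← Real.rpow_mul hr0.le]
  have hupper : Tendsto (fun n : ℕ => r * ((n:ℝ) * q ^ n)) atTop (nhds 0) := by
    have := (aux_nq q hq0 hq1).const_mul r
    simpa using this
  apply squeeze_zero (fun n => by positivity)
    (fun n => ?_) hupper
  calc (n:ℝ) * r ^ (b^n) ≤ (n:ℝ) * (r * q^n) := by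
        apply mul_le_mul_of_nonneg_left (hbound n) (Nat.cast_nonneg n)
    _ = r * ((n:ℝ) * q^n) := by ring

lemma aux_rpow0 (b r : ℝ) (hb : 1 < b) (hr0 : 0 < r) (hr1 : r < 1) :
    Tendsto (fun n : ℕ => r ^ (b ^ n)) atTop (nhds 0) := by
  apply squeeze_zero' (Eventually.of_forall fun n => (Real.rpow_pos_of_pos hr0 _).le)
    ?_ (aux_nrpow b r hb hr0 hr1)
  filter_upwards [eventually_ge_atTop 1] with n hn
  have : (1:ℝ) ≤ (n:ℝ) := by exact_mod_cast hn
  nlinarith [(Real.rpow_pos_of_pos hr0 (b^n)).le]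

lemma aux_rpow_top (b c : ℝ) (hb : 1 < b) (hc : 1 < c) :
    Tendsto (fun n : ℕ => c ^ (b ^ n)) atTop atTop := by
  have h1 : Tendsto (fun n : ℕ => b ^ n) atTop atTop :=
    tendsto_pow_atTop_atTop_of_one_lt hb
  have h2 : Tendsto (fun n : ℕ => Real.log c * b ^ n) atTop atTop := by
    apply Tendsto.const_mul_atTop (Real.log_pos hc) h1
  have h3 := Real.tendsto_exp_atTop.comp h2
  have heq : (fun n : ℕ => c ^ (b ^ n)) = fun n : ℕ => Real.exp (Real.log c * b ^ n) := by
    funext n; rw [Real.rpow_def_of_pos (by linarith)]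
  rw [heq]; exact h3

noncomputable def cfF (m : ℕ → ℕ) (k : ℕ) : ℕ → ℝ → ℝ
  | 0, t => t
  | (j+1), t => cfF m k j (1 / ((m (k + j + 1) : ℝ) + t))

lemma cfF_succ (m : ℕ → ℕ) (k j : ℕ) (t : ℝ) :
    cfF m k (j+1) t = cfF m k j (1 / ((m (k + j + 1) : ℝ) + t)) := rfl

lemma cfF_shift (m : ℕ → ℕ) (k j : ℕ) (t : ℝ) :
    cfF m k (j + 1) t = 1 / ((m (k + 1) : ℝ) + cfF m (k + 1) j t) := by
  induction j generalizing t with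
  | zero => simp [cfF]
  | succ j ih =>
    rw [cfF_succ m k (j+1) t, ih, cfF_succ m (k+1) j t,
      show k + (j+1) + 1 = k + 1 + j + 1 by omega]

lemma cfF_comp (m : ℕ → ℕ) (k j i : ℕ) (t : ℝ) :
    cfF m k (j + i) t = cfF m k j (cfF m (k + j) i t) := by
  induction i generalizing t with
  | zero => simp [cfF]
  | succ i ih =>
    show cfF m k ((j + i) + 1) t = _
    rw [cfF_succ m k (j+i) t, ih, cfF_succ m (k+j) i t,
      show k + (j + i) + 1 = k + j + i + 1 by omega]

lemma cfF_mem (m : ℕ → ℕ) (hm : ∀ n, 2 ≤ m n) (k : ℕ) :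
    ∀ j t, t ∈ Set.Icc (0:ℝ) 1 → cfF m k j t ∈ Set.Icc (0:ℝ) 1 := by
  intro j
  induction j with
  | zero => intro t ht; simpa [cfF] using ht
  | succ j ih =>
    intro t ht
    rw [cfF_succ]
    apply ih
    have hm2 : (2:ℝ) ≤ (m (k + j + 1) : ℝ) := by exact_mod_cast hm _
    constructor
    · exact div_nonneg (by norm_num) (by linarith [ht.1])
    · rw [div_le_one (by linarith [ht.1])]
      linarith [ht.1]

lemma cfF_contract (m : ℕ → ℕ) (hm : ∀ n, 2 ≤ m n) (k : ℕ) :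
    ∀ j s t, s ∈ Set.Icc (0:ℝ) 1 → t ∈ Set.Icc (0:ℝ) 1 →
      |cfF m k j s - cfF m k j t| ≤ (1/4) ^ j * |s - t| := by
  intro j
  induction j with
  | zero => intro s t _ _; simp [cfF]
  | succ j ih =>
    intro s t hs ht
    have hm2 : (2:ℝ) ≤ (m (k + j + 1) : ℝ) := by exact_mod_cast hm _
    set A : ℝ := (m (k + j + 1) : ℝ)
    have hAs : (0:ℝ) < A + s := by linarith [hs.1]
    have hAt : (0:ℝ) < A + t := by linarith [ht.1]
    have hs' : 1 / (A + s) ∈ Set.Icc (0:ℝ) 1 :=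
      ⟨div_nonneg (by norm_num) hAs.le, by rw [div_le_one hAs]; linarith [hs.1]⟩
    have ht' : 1 / (A + t) ∈ Set.Icc (0:ℝ) 1 :=
      ⟨div_nonneg (by norm_num) hAt.le, by rw [div_le_one hAt]; linarith [ht.1]⟩
    have key : |1 / (A + s) - 1 / (A + t)| ≤ (1/4) * |s - t| := by
      have heq : 1 / (A + s) - 1 / (A + t) = (t - s) / ((A + s) * (A + t)) := by
        field_simp
        ring
      have h4 : (4:ℝ) ≤ (A + s) * (A + t) := by nlinarith [hs.1, ht.1]
      rw [heq, abs_div, abs_of_pos (mul_pos hAs hAt), abs_sub_comm t s,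
        div_le_iff₀ (mul_pos hAs hAt)]
      nlinarith [abs_nonneg (s - t)]
    calc |cfF m k (j+1) s - cfF m k (j+1) t|
        = |cfF m k j (1 / (A + s)) - cfF m k j (1 / (A + t))| := rfl
      _ ≤ (1/4)^j * |1 / (A + s) - 1 / (A + t)| := ih _ _ hs' ht'
      _ ≤ (1/4)^j * ((1/4) * |s - t|) := by
          apply mul_le_mul_of_nonneg_left key (by positivity)
      _ = (1/4)^(j+1) * |s - t| := by ring

lemma gauss_rat (q : ℚ) : gaussMap (q : ℝ) = ((Int.fract q⁻¹ : ℚ) : ℝ) := by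
  rw [gaussMap, Rat.cast_fract, Rat.cast_inv]

lemma irrational_of_orbit (x : ℝ) (h : ∀ k, gaussMap^[k] x ∈ Set.Ioo (0:ℝ) 1) :
    Irrational x := by
  by_contra hx
  rw [Irrational] at hx
  push_neg at hx
  obtain ⟨q, hq⟩ := hx
  subst hq
  have key : ∀ N : ℕ, ∀ q : ℚ, q.num.toNat ≤ N →
      ¬ (∀ k, gaussMap^[k] (q : ℝ) ∈ Set.Ioo (0:ℝ) 1) := by
    intro N
    induction N with
    | zero =>
      intro q hqN hall
      have h0 := hall 0
      simp only [Function.iterate_zero_apply] at h0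
      have : (0:ℚ) < q := by exact_mod_cast h0.1
      have : 0 < q.num := Rat.num_pos.mpr this
      omega
    | succ N ih =>
      intro q hqN hall
      have h0 := hall 0
      simp only [Function.iterate_zero_apply] at h0
      have hq0 : (0:ℚ) < q := by exact_mod_cast h0.1
      set q' := Int.fract q⁻¹ with hq'def
      have hgq : gaussMap (q : ℝ) = (q' : ℝ) := gauss_rat q
      have hall' : ∀ k, gaussMap^[k] (q' : ℝ) ∈ Set.Ioo (0:ℝ) 1 := by
        intro k
        have := hall (k + 1)
        rwa [Function.iterate_succ_apply, hgq] at this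
      have h1 := hall' 0
      simp only [Function.iterate_zero_apply] at h1
      have hq'0 : (0:ℚ) < q' := by exact_mod_cast h1.1
      have hlt : q'.num < q.num := Rat.fract_inv_num_lt_num_of_pos hq0
      have : q'.num.toNat ≤ N := by
        have := Rat.num_pos.mpr hq'0
        omega
      exact ih q' this hall'
  exact key q.num.toNat q le_rfl h

-- step lemma
lemma gauss_step (a : ℕ) (y : ℝ) (hy : y ∈ Set.Ioo (0:ℝ) 1) (ha : 1 ≤ a) :
    gaussMap (1 / ((a : ℝ) + y)) = y ∧ ⌊(1 / ((a : ℝ) + y))⁻¹⌋₊ = a := by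
  have hpos : (0:ℝ) < (a : ℝ) + y := by have h1 := hy.1; positivity
  have hinv : (1 / ((a : ℝ) + y))⁻¹ = (a : ℝ) + y := by
    rw [one_div, inv_inv]
  constructor
  · rw [gaussMap, hinv, add_comm, Int.fract_add_natCast, Int.fract_eq_self.mpr ⟨hy.1.le, hy.2⟩]
  · rw [hinv]
    rw [Nat.floor_eq_iff (by have h1 := hy.1; positivity)]
    constructor
    · linarith [hy.1]
    · push_cast; linarith [hy.2]

lemma exists_cf (m : ℕ → ℕ) (hm : ∀ n, 2 ≤ m n) :
    ∃ x : ℝ, x ∈ Set.Ioo (0:ℝ) 1 ∧ Irrational x ∧ ∀ n, 1 ≤ n → cfA x n = m n := by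
  have hhalf : (1/2 : ℝ) ∈ Set.Icc (0:ℝ) 1 := by norm_num
  -- Cauchy sequences and limits
  have hcauchy : ∀ k, CauchySeq (fun j => cfF m k j (1/2 : ℝ)) := by
    intro k
    apply cauchySeq_of_le_geometric (1/4 : ℝ) 1 (by norm_num)
    intro j
    rw [Real.dist_eq]
    have h1 : cfF m k (j+1) (1/2) = cfF m k j (cfF m (k+j) 1 (1/2)) := cfF_comp m k j 1 _
    rw [h1]
    have := cfF_contract m hm k j (1/2) (cfF m (k+j) 1 (1/2)) hhalf
      (cfF_mem m hm (k+j) 1 _ hhalf)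
    have hb : |(1/2 : ℝ) - cfF m (k+j) 1 (1/2)| ≤ 1 := by
      have h2 := cfF_mem m hm (k+j) 1 (1/2) hhalf
      rw [abs_le]
      constructor <;> [linarith [h2.2]; linarith [h2.1]]
    calc |cfF m k j (1/2) - cfF m k j (cfF m (k+j) 1 (1/2))|
        ≤ (1/4)^j * |(1/2:ℝ) - cfF m (k+j) 1 (1/2)| :=
          cfF_contract m hm k j _ _ hhalf (cfF_mem m hm (k+j) 1 _ hhalf)
      _ ≤ 1 * (1/4)^j := by
          rw [one_mul]
          calc (1/4:ℝ)^j * |(1/2:ℝ) - cfF m (k+j) 1 (1/2)| ≤ (1/4)^j * 1 :=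
                mul_le_mul_of_nonneg_left hb (by positivity)
            _ = (1/4)^j := mul_one _
  have hex : ∀ k, ∃ L : ℝ, Tendsto (fun j => cfF m k j (1/2 : ℝ)) atTop (nhds L) :=
    fun k => cauchySeq_tendsto_of_complete (hcauchy k)
  choose y hy using hex
  -- bounds on y k
  have hyIcc : ∀ k, y k ∈ Set.Icc (1 / ((m (k+1) : ℝ) + 1)) (1 / (m (k+1) : ℝ)) := by
    intro k
    have hm2 : (2:ℝ) ≤ (m (k+1) : ℝ) := by exact_mod_cast hm _
    have hev : ∀ᶠ j in atTop, cfF m k j (1/2 : ℝ) ∈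
        Set.Icc (1 / ((m (k+1) : ℝ) + 1)) (1 / (m (k+1) : ℝ)) := by
      filter_upwards [eventually_ge_atTop 1] with j hj
      obtain ⟨i, rfl⟩ := Nat.exists_eq_add_of_le hj
      rw [add_comm 1 i, cfF_shift]
      have hmem := cfF_mem m hm (k+1) i (1/2) hhalf
      constructor
      · apply div_le_div_of_nonneg_left (by norm_num) (by linarith [hmem.1]) (by linarith [hmem.2])
      · apply div_le_div_of_nonneg_left (by norm_num) (by linarith) (by linarith [hmem.1])
    exact isClosed_Icc.mem_of_tendsto (hy k) hev
  have hyIoo : ∀ k, y k ∈ Set.Ioo (0:ℝ) 1 := by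
    intro k
    have hm2 : (2:ℝ) ≤ (m (k+1) : ℝ) := by exact_mod_cast hm _
    have h := hyIcc k
    constructor
    · have : (0:ℝ) < 1 / ((m (k+1) : ℝ) + 1) := by positivity
      linarith [h.1]
    · have : 1 / (m (k+1) : ℝ) ≤ 1/2 := by
        rw [div_le_div_iff₀ (by linarith) (by norm_num)]; linarith
      linarith [h.2]
  -- recursion y k = 1/(m (k+1) + y (k+1))
  have hyrec : ∀ k, y k = 1 / ((m (k+1) : ℝ) + y (k+1)) := by
    intro k
    have hm2 : (2:ℝ) ≤ (m (k+1) : ℝ) := by exact_mod_cast hm _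
    have h1 : Tendsto (fun j => cfF m k (j+1) (1/2 : ℝ)) atTop (nhds (y k)) :=
      (hy k).comp (tendsto_add_atTop_nat 1)
    have h2 : Tendsto (fun j => 1 / ((m (k+1) : ℝ) + cfF m (k+1) j (1/2 : ℝ))) atTop
        (nhds (1 / ((m (k+1) : ℝ) + y (k+1)))) := by
      apply Tendsto.div tendsto_const_nhds (tendsto_const_nhds.add (hy (k+1)))
      have := (hyIoo (k+1)).1
      linarith
    have heq : (fun j => cfF m k (j+1) (1/2 : ℝ))
        = fun j => 1 / ((m (k+1) : ℝ) + cfF m (k+1) j (1/2 : ℝ)) := by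
      funext j; exact cfF_shift m k j _
    rw [heq] at h1
    exact tendsto_nhds_unique h1 h2
  -- orbit
  have horbit : ∀ k, gaussMap^[k] (y 0) = y k := by
    intro k
    induction k with
    | zero => rfl
    | succ k ih =>
      rw [Function.iterate_succ_apply', ih, hyrec k]
      exact (gauss_step (m (k+1)) (y (k+1)) (hyIoo (k+1)) (by linarith [hm (k+1)])).1
  refine ⟨y 0, hyIoo 0, ?_, ?_⟩
  · apply irrational_of_orbit
    intro k; rw [horbit k]; exact hyIoo k
  · intro n hn
    obtain ⟨k, rfl⟩ : ∃ k, n = k + 1 := ⟨n - 1, by omega⟩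
    rw [cfA, show k + 1 - 1 = k by omega, horbit k, hyrec k]
    exact (gauss_step (m (k+1)) (y (k+1)) (hyIoo (k+1)) (by linarith [hm (k+1)])).2

lemma phi_lower (b c : ℝ) (hb : 1 < b) (hc : 1 < c) (n : ℕ) (hn : 1 ≤ n) :
    c ^ (b ^ n) ≤ ∑ k ∈ Finset.Icc 1 n, c ^ (b ^ k) := by
  apply Finset.single_le_sum (f := fun k => c ^ (b ^ k))
  · intro i _; positivity
  · simp [hn]

lemma upper_incl (b c : ℝ) (hb : 1 < b) (hc : 1 < c) :
    levelSet (fun n => ∑ k ∈ Finset.Icc 1 n, c ^ (b ^ k)) ⊆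
    {x : ℝ | x ∈ Set.Ioo (0 : ℝ) 1 ∧ Irrational x ∧
      ∃ᶠ n in atTop, ((1 + c)/2) ^ (b ^ n) ≤ (cfA x n : ℝ)} := by
  set c₀ : ℝ := (1 + c)/2 with hc₀def
  have hc₀1 : 1 < c₀ := by rw [hc₀def]; linarith
  have hc₀c : c₀ < c := by rw [hc₀def]; linarith
  rintro x ⟨hIoo, hirr, hlim⟩
  refine ⟨hIoo, hirr, ?_⟩
  by_contra hnot
  rw [not_frequently] at hnot
  have hnot' : ∀ᶠ n in atTop, (cfA x n : ℝ) < c₀ ^ (b ^ n) := by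
    filter_upwards [hnot] with n hn
    exact lt_of_not_ge hn
  obtain ⟨N, hN⟩ := eventually_atTop.mp hnot'
  set C : ℝ := (cfS x N : ℝ) with hCdef
  set g : ℕ → ℝ := fun n => C * (c⁻¹) ^ (b ^ n) + (n : ℝ) * (c₀/c) ^ (b ^ n) with hgdef
  have hg0 : Tendsto g atTop (nhds 0) := by
    have h1 : Tendsto (fun n : ℕ => C * (c⁻¹) ^ (b ^ n)) atTop (nhds 0) := by
      have := (aux_rpow0 b c⁻¹ hb (by positivity) (inv_lt_one_of_one_lt₀ hc)).const_mul C
      simpa using this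
    have h2 := aux_nrpow b (c₀/c) hb (by positivity)
      ((div_lt_one (by linarith)).mpr hc₀c)
    simpa using h1.add h2
  have hle : ∀ᶠ n in atTop, (cfS x n : ℝ) / (∑ k ∈ Finset.Icc 1 n, c ^ (b ^ k)) ≤ g n := by
    filter_upwards [eventually_ge_atTop (max N 1)] with n hn
    have hNn : N ≤ n := le_trans (le_max_left _ _) hn
    have h1n : 1 ≤ n := le_trans (le_max_right _ _) hn
    have hφpos : (0:ℝ) < c ^ (b ^ n) := by positivity
    have hφ : c ^ (b ^ n) ≤ ∑ k ∈ Finset.Icc 1 n, c ^ (b ^ k) := phi_lower b c hb hc n h1n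
    -- bound cfS
    have hsum : (cfS x n : ℝ) ≤ C + (n : ℝ) * c₀ ^ (b ^ n) := by
      have hIccIoc : ∀ M : ℕ, Finset.Icc 1 M = Finset.Ioc 0 M := fun M => Finset.Icc_add_one_left_eq_Ioc 0 M
      have hsplit : (cfS x n : ℝ) = (∑ j ∈ Finset.Ioc 0 N, (cfA x j : ℝ))
          + ∑ j ∈ Finset.Ioc N n, (cfA x j : ℝ) := by
        rw [cfS, Nat.cast_sum, hIccIoc n,
          ← Finset.sum_Ioc_consecutive _ (Nat.zero_le N) hNn]
      have hC : (∑ j ∈ Finset.Ioc 0 N, (cfA x j : ℝ)) = C := by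
        rw [hCdef, cfS, Nat.cast_sum, hIccIoc N]
      have htail : ∑ j ∈ Finset.Ioc N n, (cfA x j : ℝ) ≤ (n : ℝ) * c₀ ^ (b ^ n) := by
        calc ∑ j ∈ Finset.Ioc N n, (cfA x j : ℝ)
            ≤ ∑ j ∈ Finset.Ioc N n, c₀ ^ (b ^ n) := by
              apply Finset.sum_le_sum
              intro i hi
              rw [Finset.mem_Ioc] at hi
              calc (cfA x i : ℝ) ≤ c₀ ^ (b ^ i) := (hN i (le_of_lt hi.1)).le
                _ ≤ c₀ ^ (b ^ n) := by
                    apply Real.rpow_le_rpow_of_exponent_le hc₀1.le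
                    exact pow_le_pow_right₀ hb.le hi.2
          _ = ((n - N : ℕ) : ℝ) * c₀ ^ (b ^ n) := by
              rw [Finset.sum_const, Nat.card_Ioc, nsmul_eq_mul]
          _ ≤ (n : ℝ) * c₀ ^ (b ^ n) := by
              apply mul_le_mul_of_nonneg_right _ (by positivity)
              exact_mod_cast Nat.sub_le n N
      linarith [hsplit, hC ▸ hsplit, htail]
    calc (cfS x n : ℝ) / (∑ k ∈ Finset.Icc 1 n, c ^ (b ^ k))
        ≤ (cfS x n : ℝ) / c ^ (b ^ n) :=
          div_le_div_of_nonneg_left (Nat.cast_nonneg _) hφpos hφ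
      _ ≤ (C + (n : ℝ) * c₀ ^ (b ^ n)) / c ^ (b ^ n) := by
          exact div_le_div_of_nonneg_right hsum hφpos.le
      _ = g n := by
          show _ = C * (c⁻¹) ^ (b ^ n) + (n : ℝ) * (c₀/c) ^ (b ^ n)
          rw [add_div, Real.inv_rpow (by positivity : (0:ℝ) ≤ c),
            Real.div_rpow (by positivity : (0:ℝ) ≤ c₀) (by positivity : (0:ℝ) ≤ c)]
          ring
  have := le_of_tendsto_of_tendsto hlim hg0 hle
  linarith

section Lower
variable (b c : ℝ)

noncomputable def Mseq (n : ℕ) : ℕ := ⌈c ^ (b ^ n)⌉₊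

variable (hb : 1 < b) (hc : 1 < c)
include hb hc

lemma M_lb (n : ℕ) : c ^ (b ^ n) ≤ (Mseq b c n : ℝ) := Nat.le_ceil _

lemma M_ub (n : ℕ) : (Mseq b c n : ℝ) ≤ c ^ (b ^ n) + 1 :=
  (Nat.ceil_lt_add_one (by positivity)).le

lemma M_two (n : ℕ) : 2 ≤ Mseq b c n := by
  have h1 : (1:ℝ) < c ^ (b ^ n) := by
    apply Real.one_lt_rpow_iff_of_pos (by positivity) |>.mpr
    exact Or.inl ⟨hc, by positivity⟩
  have h2 := Nat.lt_ceil.mpr (by exact_mod_cast h1 : ((1:ℕ) : ℝ) < c ^ (b ^ n))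
  rw [Mseq]
  omega

lemma one_le_rpow (n : ℕ) : (1:ℝ) ≤ c ^ (b ^ n) := by
  apply Real.one_le_rpow hc.le (by positivity)

lemma lower_incl :
    {x : ℝ | x ∈ Set.Ioo (0 : ℝ) 1 ∧ Irrational x ∧
      ∀ n, 1 ≤ n → ((Mseq b c n : ℝ)) ≤ (cfA x n : ℝ) ∧
        (cfA x n : ℝ) ≤ (Mseq b c n : ℝ) * (1 + 1/((n:ℝ)+1))} ⊆
    levelSet (fun n => ∑ k ∈ Finset.Icc 1 n, c ^ (b ^ k)) := by
  rintro x ⟨hIoo, hirr, hx⟩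
  refine ⟨hIoo, hirr, ?_⟩
  have hc0 : (0:ℝ) < c := by linarith
  set φ : ℕ → ℝ := fun n => ∑ k ∈ Finset.Icc 1 n, c ^ (b ^ k) with hφdef
  have hφlb : ∀ n, 1 ≤ n → c ^ (b ^ n) ≤ φ n := by
    intro n hn
    apply Finset.single_le_sum (f := fun k => c ^ (b ^ k)) (fun i _ => by positivity)
    simp [hn]
  have hφpos : ∀ n, 1 ≤ n → (0:ℝ) < φ n := fun n hn =>
    lt_of_lt_of_le (by positivity) (hφlb n hn)
  have hlow : ∀ n, 1 ≤ n → φ n ≤ (cfS x n : ℝ) := by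
    intro n hn
    rw [cfS, Nat.cast_sum]
    apply Finset.sum_le_sum
    intro k hk
    rw [Finset.mem_Icc] at hk
    exact le_trans (M_lb b c hb hc k) (hx k hk.1).1
  set r : ℝ := c ^ (-(b - 1)) with hrdef
  have hr0 : 0 < r := Real.rpow_pos_of_pos hc0 _
  have hr1 : r < 1 := by
    rw [hrdef]
    apply Real.rpow_lt_one_of_one_lt_of_neg hc
    linarith
  -- eventual upper bound on the ratio
  have hgoal2 : ∀ᶠ n in atTop, (cfS x n : ℝ) / φ n ≤
      1 + ((n:ℝ) * r ^ (b ^ (n-1)) + 1/((n:ℝ)+1) + 2 * (n:ℝ) * (c⁻¹) ^ (b ^ n)) := by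
    filter_upwards [eventually_ge_atTop 1] with n hn
    obtain ⟨n', rfl⟩ : ∃ n', n = n' + 1 := ⟨n - 1, by omega⟩
    have hsub : n' + 1 - 1 = n' := by omega
    rw [hsub]
    have hφp := hφpos (n'+1) (by omega)
    have hcb : (0:ℝ) < c ^ (b ^ (n'+1)) := by positivity
    -- sum upper bound
    have step1 : (cfS x (n'+1) : ℝ) ≤ ∑ k ∈ Finset.Icc 1 (n'+1),
        (c ^ (b ^ k) + c ^ (b ^ k)/((k:ℝ)+1) + 2) := by
      rw [cfS, Nat.cast_sum]
      apply Finset.sum_le_sum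
      intro k hk
      rw [Finset.mem_Icc] at hk
      have h1 := (hx k hk.1).2
      have h2 := M_ub b c hb hc k
      have h3 := one_le_rpow b c hb hc k
      have hk1 : (0:ℝ) < (k:ℝ) + 1 := by positivity
      calc (cfA x k : ℝ) ≤ (Mseq b c k : ℝ) * (1 + 1/((k:ℝ)+1)) := h1
        _ ≤ (c ^ (b ^ k) + 1) * (1 + 1/((k:ℝ)+1)) := by
            apply mul_le_mul_of_nonneg_right h2 (by positivity)
        _ = c ^ (b ^ k) + c ^ (b ^ k)/((k:ℝ)+1) + (1 + 1/((k:ℝ)+1)) := by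
            field_simp
        _ ≤ c ^ (b ^ k) + c ^ (b ^ k)/((k:ℝ)+1) + 2 := by
            have : 1/((k:ℝ)+1) ≤ 1 := by
              rw [div_le_one hk1]; linarith [Nat.cast_nonneg (α := ℝ) k]
            linarith
    have step2 : ∑ k ∈ Finset.Icc 1 (n'+1), (c ^ (b ^ k) + c ^ (b ^ k)/((k:ℝ)+1) + 2)
        = φ (n'+1) + (∑ k ∈ Finset.Icc 1 (n'+1), c ^ (b ^ k)/((k:ℝ)+1))
          + 2 * ((n'+1 : ℕ):ℝ) := by
      rw [Finset.sum_add_distrib, Finset.sum_add_distrib, Finset.sum_const, Nat.card_Icc]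
      simp [hφdef]
      push_cast
      ring
    have step3 : ∑ k ∈ Finset.Icc 1 (n'+1), c ^ (b ^ k)/((k:ℝ)+1)
        ≤ ((n'+1 : ℕ):ℝ) * c ^ (b ^ n') + c ^ (b ^ (n'+1)) / (((n'+1 : ℕ):ℝ)+1) := by
      rw [Finset.sum_Icc_succ_top (by omega : 1 ≤ n' + 1)]
      have hfirst : ∑ k ∈ Finset.Icc 1 n', c ^ (b ^ k)/((k:ℝ)+1)
          ≤ (n':ℝ) * c ^ (b ^ n') := by
        calc ∑ k ∈ Finset.Icc 1 n', c ^ (b ^ k)/((k:ℝ)+1)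
            ≤ ∑ _k ∈ Finset.Icc 1 n', c ^ (b ^ n') := by
              apply Finset.sum_le_sum
              intro k hk
              rw [Finset.mem_Icc] at hk
              have h1 : c ^ (b ^ k) ≤ c ^ (b ^ n') :=
                Real.rpow_le_rpow_of_exponent_le hc.le (pow_le_pow_right₀ hb.le hk.2)
              have hk1 : (1:ℝ) ≤ (k:ℝ) + 1 := by
                linarith [Nat.cast_nonneg (α := ℝ) k]
              calc c ^ (b ^ k)/((k:ℝ)+1) ≤ c ^ (b ^ k) / 1 := by
                    apply div_le_div_of_nonneg_left (by positivity) (by positivity) hk1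
                _ = c ^ (b ^ k) := div_one _
                _ ≤ c ^ (b ^ n') := h1
          _ = ((n' + 1 - 1 : ℕ):ℝ) * c ^ (b ^ n') := by
              rw [Finset.sum_const, Nat.card_Icc, nsmul_eq_mul]
          _ ≤ (n':ℝ) * c ^ (b ^ n') := by simp
      have hcbn' : (0:ℝ) < c ^ (b ^ n') := by positivity
      have h2 : (n':ℝ) * c ^ (b ^ n') ≤ ((n'+1:ℕ):ℝ) * c ^ (b ^ n') := by
        apply mul_le_mul_of_nonneg_right _ hcbn'.le
        push_cast; linarith
      push_cast at hfirst h2 ⊢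
      linarith
    -- assemble: ratio bound
    have hE : ((cfS x (n'+1) : ℝ) - φ (n'+1)) ≤
        ((n'+1:ℕ):ℝ) * c ^ (b ^ n') + c ^ (b ^ (n'+1)) / (((n'+1:ℕ):ℝ)+1)
        + 2 * ((n'+1:ℕ):ℝ) := by
      have := le_trans step1 (le_of_eq step2)
      push_cast at this step3 ⊢
      linarith
    have hratio : (cfS x (n'+1) : ℝ) / φ (n'+1) = 1 + ((cfS x (n'+1) : ℝ) - φ (n'+1)) / φ (n'+1) := by
      field_simp
      ring
    rw [hratio]
    have hnum0 : (0:ℝ) ≤ (cfS x (n'+1) : ℝ) - φ (n'+1) := by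
      linarith [hlow (n'+1) (by omega)]
    have key : ((cfS x (n'+1) : ℝ) - φ (n'+1)) / φ (n'+1) ≤
        (((n'+1:ℕ):ℝ) * c ^ (b ^ n') + c ^ (b ^ (n'+1)) / (((n'+1:ℕ):ℝ)+1)
          + 2 * ((n'+1:ℕ):ℝ)) / c ^ (b ^ (n'+1)) := by
      calc ((cfS x (n'+1) : ℝ) - φ (n'+1)) / φ (n'+1)
          ≤ ((cfS x (n'+1) : ℝ) - φ (n'+1)) / c ^ (b ^ (n'+1)) :=
            div_le_div_of_nonneg_left hnum0 hcb (hφlb (n'+1) (by omega))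
        _ ≤ _ := div_le_div_of_nonneg_right hE hcb.le
    have hid1 : c ^ (b ^ n') / c ^ (b ^ (n'+1)) = r ^ (b ^ n') := by
      rw [← Real.rpow_mul hc0.le, ← Real.rpow_sub hc0]
      congr 1
      rw [pow_succ]
      ring
    have hsplit : (((n'+1:ℕ):ℝ) * c ^ (b ^ n') + c ^ (b ^ (n'+1)) / (((n'+1:ℕ):ℝ)+1)
          + 2 * ((n'+1:ℕ):ℝ)) / c ^ (b ^ (n'+1))
        = ((n'+1:ℕ):ℝ) * r ^ (b ^ n') + 1/(((n'+1:ℕ):ℝ)+1)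
          + 2 * ((n'+1:ℕ):ℝ) * (c⁻¹) ^ (b ^ (n'+1)) := by
      rw [add_div, add_div]
      congr 1
      · congr 1
        · rw [mul_div_assoc, hid1]
        · rw [div_div, mul_comm (((n'+1:ℕ):ℝ)+1), ← div_div, div_self hcb.ne']
      · rw [Real.inv_rpow hc0.le, div_eq_mul_inv]
    rw [hsplit] at key
    linarith
  -- eventual lower bound
  have hgoal1 : ∀ᶠ n in atTop, (1:ℝ) ≤ (cfS x n : ℝ) / φ n := by
    filter_upwards [eventually_ge_atTop 1] with n hn
    rw [le_div_iff₀ (hφpos n hn), one_mul]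
    exact hlow n hn
  -- the upper function tends to 1
  have htend : Tendsto (fun n : ℕ =>
      1 + ((n:ℝ) * r ^ (b ^ (n-1)) + 1/((n:ℝ)+1) + 2 * (n:ℝ) * (c⁻¹) ^ (b ^ n)))
      atTop (nhds 1) := by
    have T1 : Tendsto (fun n : ℕ => (n:ℝ) * r ^ (b ^ (n-1))) atTop (nhds 0) := by
      apply (tendsto_add_atTop_iff_nat 1).mp
      have h := (aux_nrpow b r hb hr0 hr1).add (aux_rpow0 b r hb hr0 hr1)
      rw [add_zero] at h
      apply h.congr
      intro k
      rw [Nat.add_sub_cancel]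
      push_cast
      ring
    have T2 : Tendsto (fun n : ℕ => 1/((n:ℝ)+1)) atTop (nhds 0) :=
      tendsto_one_div_add_atTop_nhds_zero_nat
    have T3 : Tendsto (fun n : ℕ => 2 * (n:ℝ) * (c⁻¹) ^ (b ^ n)) atTop (nhds 0) := by
      have h := (aux_nrpow b c⁻¹ hb (by positivity) (inv_lt_one_of_one_lt₀ hc)).const_mul 2
      rw [mul_zero] at h
      apply h.congr
      intro k; ring
    have := ((T1.add T2).add T3).const_add 1
    simpa using this
  exact tendsto_of_tendsto_of_tendsto_of_le_of_le' tendsto_const_nhds htend hgoal1 hgoal2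

lemma ratio_tendsto :
    Tendsto (fun n => Real.log ((Mseq b c (n + 1) : ℝ)) /
      ∑ k ∈ Finset.Icc 1 n, Real.log ((Mseq b c k : ℝ))) atTop (nhds (b - 1)) := by
  have hc0 : (0:ℝ) < c := by linarith
  have hb0 : (0:ℝ) < b := by linarith
  set L : ℝ := Real.log c with hLdef
  have hL : 0 < L := Real.log_pos hc
  have hlog_lb : ∀ k, b ^ k * L ≤ Real.log ((Mseq b c k : ℝ)) := by
    intro k
    have h1 : Real.log (c ^ (b ^ k)) = b ^ k * L := Real.log_rpow hc0 _
    rw [← h1]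
    apply Real.log_le_log (by positivity) (M_lb b c hb hc k)
  have hlog_ub : ∀ k, Real.log ((Mseq b c k : ℝ)) ≤ b ^ k * L + 1 := by
    intro k
    have h3 := one_le_rpow b c hb hc k
    have h2 : (Mseq b c k : ℝ) ≤ 2 * c ^ (b ^ k) := by
      have := M_ub b c hb hc k
      linarith
    have hM0 : (0:ℝ) < (Mseq b c k : ℝ) := by
      have h4 := M_two b c hb hc k
      have : (2:ℝ) ≤ (Mseq b c k : ℝ) := by exact_mod_cast h4
      linarith
    calc Real.log ((Mseq b c k : ℝ)) ≤ Real.log (2 * c ^ (b ^ k)) := by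
          apply Real.log_le_log hM0 h2
      _ = Real.log 2 + b ^ k * L := by
          rw [Real.log_mul (by norm_num) (by positivity), Real.log_rpow hc0]
      _ ≤ b ^ k * L + 1 := by
          have := Real.log_le_sub_one_of_pos (by norm_num : (0:ℝ) < 2)
          linarith
  set D : ℕ → ℝ := fun n => ∑ k ∈ Finset.Icc 1 n, Real.log ((Mseq b c k : ℝ)) with hDdef
  set B : ℕ → ℝ := fun n => ∑ k ∈ Finset.Icc 1 n, b ^ k with hBdef
  have hBgeom : ∀ n : ℕ, B n = b * ((b ^ n - 1)/(b - 1)) := by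
    intro n
    rw [hBdef]
    simp only []
    rw [show Finset.Icc 1 n = Finset.Ico 1 (n+1) from (Finset.Ico_add_one_right_eq_Icc 1 n).symm,
      Finset.sum_Ico_eq_sum_range]
    simp only [Nat.add_sub_cancel]
    have hbb : ∀ i, b ^ (1 + i) = b * b ^ i := by
      intro i; rw [pow_add, pow_one]
    rw [Finset.sum_congr rfl (fun i _ => hbb i), ← Finset.mul_sum,
      geom_sum_eq hb.ne' n]
  have hD_lb : ∀ n, B n * L ≤ D n := by
    intro n
    rw [hDdef, hBdef]
    simp only []
    rw [Finset.sum_mul]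
    exact Finset.sum_le_sum (fun k _ => hlog_lb k)
  have hD_ub : ∀ n, D n ≤ B n * L + n := by
    intro n
    rw [hDdef, hBdef]
    simp only []
    rw [Finset.sum_mul]
    calc ∑ k ∈ Finset.Icc 1 n, Real.log ((Mseq b c k : ℝ))
        ≤ ∑ k ∈ Finset.Icc 1 n, (b ^ k * L + 1) :=
          Finset.sum_le_sum (fun k _ => hlog_ub k)
      _ = (∑ k ∈ Finset.Icc 1 n, b ^ k * L) + n := by
          rw [Finset.sum_add_distrib, Finset.sum_const, Nat.card_Icc]
          simp
  have hBpos : ∀ n, 1 ≤ n → 0 < B n := by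
    intro n hn
    have h1 : b ≤ B n := by
      rw [hBdef]
      calc b = b ^ 1 := (pow_one b).symm
        _ ≤ ∑ k ∈ Finset.Icc 1 n, b ^ k := by
          apply Finset.single_le_sum (f := fun k => b ^ k) (fun i _ => by positivity)
          simp [hn]
    linarith
  have hDpos : ∀ n, 1 ≤ n → 0 < D n := fun n hn =>
    lt_of_lt_of_le (mul_pos (hBpos n hn) hL) (hD_lb n)
  -- squeeze
  have hbpow : ∀ n : ℕ, (0:ℝ) < b ^ n := fun n => by positivity
  have hb1 : b - 1 ≠ 0 := sub_ne_zero.mpr hb.ne'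
  have hinv0 : (0:ℝ) ≤ b⁻¹ := by positivity
  have hinv1 : b⁻¹ < 1 := inv_lt_one_of_one_lt₀ hb
  have hxn : Tendsto (fun n : ℕ => (b⁻¹) ^ n) atTop (nhds 0) :=
    tendsto_pow_atTop_nhds_zero_of_lt_one hinv0 hinv1
  have hyn : Tendsto (fun n : ℕ => (n:ℝ) / b ^ n) atTop (nhds 0) := aux_ndivpow b hb
  have hdenlim : Tendsto (fun n : ℕ => b * (1 - (b⁻¹) ^ n) * L / (b-1) + ((n:ℝ) / b ^ n))
      atTop (nhds (b * L / (b-1))) := by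
    have h1 : Tendsto (fun n : ℕ => b * (1 - (b⁻¹) ^ n) * L / (b-1)) atTop
        (nhds (b * (1 - 0) * L / (b-1))) := by
      apply Tendsto.div_const
      exact (((tendsto_const_nhds.sub hxn).const_mul b).mul_const L)
    have := h1.add hyn
    simpa using this
  have hdenne : b * L / (b-1) ≠ 0 := by
    apply ne_of_gt
    apply div_pos (by positivity)
    linarith
  have hlimval : (b * L) / (b * L / (b-1)) = b - 1 := by
    field_simp
  have hmain_low : Tendsto (fun n : ℕ => (b ^ (n+1) * L) / (B n * L + n)) atTop
      (nhds (b-1)) := by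
    have h0 := Tendsto.div (tendsto_const_nhds (x := b * L)) hdenlim hdenne
    rw [hlimval] at h0
    apply h0.congr'
    filter_upwards [eventually_ge_atTop 1] with n hn
    have hden2pos : 0 < b * (1 - (b⁻¹) ^ n) * L / (b-1) + ((n:ℝ) / b ^ n) := by
      have hp1 : (b⁻¹) ^ n < 1 := pow_lt_one₀ hinv0 hinv1 (by omega)
      have : 0 < b * (1 - (b⁻¹) ^ n) * L / (b-1) := by
        apply div_pos _ (by linarith)
        apply mul_pos (mul_pos (by linarith) (by linarith)) hL
      have h2 : 0 ≤ (n:ℝ) / b ^ n := by positivity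
      linarith
    have hden1pos : 0 < B n * L + n := by
      have := hBpos n hn
      have h2 : (0:ℝ) ≤ (n:ℝ) := Nat.cast_nonneg n
      nlinarith
    simp only [Pi.div_apply]
    rw [div_eq_div_iff hden2pos.ne' hden1pos.ne', hBgeom n, inv_pow]
    field_simp
    ring
  have hmain_high : Tendsto (fun n : ℕ => (b ^ (n+1) * L + 1) / (B n * L)) atTop
      (nhds (b-1)) := by
    have hnumlim : Tendsto (fun n : ℕ => b * L + ((b⁻¹) ^ n)) atTop (nhds (b * L)) := by
      have := tendsto_const_nhds (x := b * L) |>.add hxn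
      simpa using this
    have hdenlim2 : Tendsto (fun n : ℕ => b * (1 - (b⁻¹) ^ n) * L / (b-1)) atTop
        (nhds (b * L / (b-1))) := by
      have h1 : Tendsto (fun n : ℕ => b * (1 - (b⁻¹) ^ n) * L / (b-1)) atTop
          (nhds (b * (1 - 0) * L / (b-1))) := by
        apply Tendsto.div_const
        exact (((tendsto_const_nhds.sub hxn).const_mul b).mul_const L)
      simpa using h1
    have h0 := Tendsto.div hnumlim hdenlim2 hdenne
    rw [hlimval] at h0
    apply h0.congr'
    filter_upwards [eventually_ge_atTop 1] with n hn
    have hp1 : (b⁻¹) ^ n < 1 := pow_lt_one₀ hinv0 hinv1 (by omega)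
    have hden2pos : 0 < b * (1 - (b⁻¹) ^ n) * L / (b-1) := by
      apply div_pos _ (by linarith)
      apply mul_pos (mul_pos (by linarith) (by linarith)) hL
    have hden1pos : 0 < B n * L := mul_pos (hBpos n hn) hL
    simp only [Pi.div_apply]
    rw [div_eq_div_iff hden2pos.ne' hden1pos.ne', hBgeom n, inv_pow]
    field_simp
    ring_nf
    try tauto
  apply tendsto_of_tendsto_of_tendsto_of_le_of_le' hmain_low hmain_high
  · filter_upwards [eventually_ge_atTop 1] with n hn
    apply div_le_div₀ (Real.log_nonneg ?_) ?_ (hDpos n hn) (hD_ub n)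
    · have h4 := M_two b c hb hc (n+1)
      have : (2:ℝ) ≤ (Mseq b c (n+1) : ℝ) := by exact_mod_cast h4
      linarith
    · exact hlog_lb (n+1)
  · filter_upwards [eventually_ge_atTop 1] with n hn
    apply div_le_div₀ (by positivity) (hlog_ub (n+1)) (mul_pos (hBpos n hn) hL) (hD_lb n)

end Lower

theorem stmt_11 (b c : ℝ) (hb : 1 < b) (hc : 1 < c)
    -- Łuczak / Wang–Wu: `dim_H {x : a_n(x) ≥ c₀^{b^n} i.o.} = 1/(b+1)` for any `c₀ > 1`
    (hLuczak : ∀ c₀ : ℝ, 1 < c₀ →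
      dimH {x : ℝ | x ∈ Set.Ioo (0 : ℝ) 1 ∧ Irrational x ∧
        ∃ᶠ n in atTop, c₀ ^ (b ^ n) ≤ (cfA x n : ℝ)} = ENNReal.ofReal (1 / (b + 1)))
    -- Fan–Liao–Wang–Wu lemma
    (hFLWW : ∀ s : ℕ → ℝ, (∀ n, 3 ≤ s n) → Tendsto s atTop atTop → ∀ N : ℝ, 2 ≤ N →
      dimH {x : ℝ | x ∈ Set.Ioo (0 : ℝ) 1 ∧ Irrational x ∧
          ∀ n, 1 ≤ n → s n ≤ (cfA x n : ℝ) ∧ (cfA x n : ℝ) ≤ N * s n}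
        = (ENNReal.ofReal (2 + Filter.limsup
            (fun n => Real.log (s (n + 1)) / ∑ k ∈ Finset.Icc 1 n, Real.log (s k)) atTop))⁻¹)
    -- Liao–Rams generalization
    (hLR : ∀ s t : ℕ → ℝ, (∀ n, 1 ≤ s n) → (∀ n, 1 < t n) →
      {x : ℝ | x ∈ Set.Ioo (0 : ℝ) 1 ∧ Irrational x ∧
        ∀ n, 1 ≤ n → s n ≤ (cfA x n : ℝ) ∧ (cfA x n : ℝ) ≤ s n * t n}.Nonempty →
      Tendsto s atTop atTop →
      Tendsto (fun n => Real.log (t n - 1) / Real.log (s n)) atTop (nhds 0) →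
      dimH {x : ℝ | x ∈ Set.Ioo (0 : ℝ) 1 ∧ Irrational x ∧
          ∀ n, 1 ≤ n → s n ≤ (cfA x n : ℝ) ∧ (cfA x n : ℝ) ≤ s n * t n}
        = (ENNReal.ofReal (2 + Filter.limsup
            (fun n => Real.log (s (n + 1)) / ∑ k ∈ Finset.Icc 1 n, Real.log (s k)) atTop))⁻¹) :
    dimH (levelSet (fun n => ∑ k ∈ Finset.Icc 1 n, c ^ (b ^ k)))
      = ENNReal.ofReal (1 / (b + 1)) := by
  have hc0 : (1:ℝ) < (1 + c)/2 := by linarith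
  have hL : (0:ℝ) < Real.log c := Real.log_pos hc
  apply le_antisymm
  · exact le_trans (dimH_mono (upper_incl b c hb hc)) (le_of_eq (hLuczak ((1+c)/2) hc0))
  · -- lower bound via hLR
    have hs1 : ∀ n, (1:ℝ) ≤ ((Mseq b c n : ℕ) : ℝ) := by
      intro n
      have h1 := M_two b c hb hc n
      have h2 : (2:ℝ) ≤ ((Mseq b c n : ℕ) : ℝ) := by exact_mod_cast h1
      linarith
    have ht1 : ∀ n : ℕ, (1:ℝ) < 1 + 1/((n:ℝ)+1) := by
      intro n
      have : (0:ℝ) < 1/((n:ℝ)+1) := by positivity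
      linarith
    have hne : {x : ℝ | x ∈ Set.Ioo (0 : ℝ) 1 ∧ Irrational x ∧
        ∀ n, 1 ≤ n → ((Mseq b c n : ℕ) : ℝ) ≤ (cfA x n : ℝ) ∧
          (cfA x n : ℝ) ≤ ((Mseq b c n : ℕ) : ℝ) * (1 + 1/((n:ℝ)+1))}.Nonempty := by
      obtain ⟨x, hx1, hx2, hx3⟩ := exists_cf (Mseq b c) (fun n => M_two b c hb hc n)
      refine ⟨x, hx1, hx2, fun n hn => ?_⟩
      rw [hx3 n hn]
      exact ⟨le_refl _, le_mul_of_one_le_right (Nat.cast_nonneg _) (ht1 n).le⟩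
    have hstop : Tendsto (fun n : ℕ => ((Mseq b c n : ℕ) : ℝ)) atTop atTop :=
      tendsto_atTop_mono (fun n => M_lb b c hb hc n) (aux_rpow_top b c hb hc)
    have hlog : Tendsto (fun n : ℕ =>
        Real.log ((1 + 1/((n:ℝ)+1)) - 1) / Real.log ((Mseq b c n : ℕ) : ℝ))
        atTop (nhds 0) := by
      have hlower_t : Tendsto (fun n : ℕ => -((1/Real.log c) * ((n:ℝ)/b^n)))
          atTop (nhds 0) := by
        have := ((aux_ndivpow b hb).const_mul (1/Real.log c)).neg
        simpa using this
      apply tendsto_of_tendsto_of_tendsto_of_le_of_le' hlower_t tendsto_const_nhds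
      · apply Eventually.of_forall
        intro n
        have hval : Real.log ((1 + 1/((n:ℝ)+1)) - 1) = -Real.log ((n:ℝ)+1) := by
          rw [show (1 + 1/((n:ℝ)+1)) - 1 = ((n:ℝ)+1)⁻¹ by ring, Real.log_inv]
        rw [hval]
        have hMlog : b^n * Real.log c ≤ Real.log ((Mseq b c n : ℕ) : ℝ) := by
          have h1 : Real.log (c ^ (b ^ n)) = b ^ n * Real.log c :=
            Real.log_rpow (by linarith) _
          rw [← h1]
          exact Real.log_le_log (by positivity) (M_lb b c hb hc n)
        have hbnL : (0:ℝ) < b^n * Real.log c := by positivity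
        have hlogn1 : Real.log ((n:ℝ)+1) ≤ (n:ℝ) := by
          have := Real.log_le_sub_one_of_pos (by positivity : (0:ℝ) < (n:ℝ)+1)
          linarith
        have hstep : Real.log ((n:ℝ)+1) / Real.log ((Mseq b c n : ℕ) : ℝ)
            ≤ (n:ℝ) / (b^n * Real.log c) :=
          div_le_div₀ (Nat.cast_nonneg n) hlogn1 hbnL hMlog
        have heq2 : (n:ℝ) / (b^n * Real.log c) = (1/Real.log c) * ((n:ℝ)/b^n) := by
          field_simp
        rw [neg_div]
        rw [heq2] at hstep
        linarith
      · apply Eventually.of_forall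
        intro n
        have hval : Real.log ((1 + 1/((n:ℝ)+1)) - 1) = -Real.log ((n:ℝ)+1) := by
          rw [show (1 + 1/((n:ℝ)+1)) - 1 = ((n:ℝ)+1)⁻¹ by ring, Real.log_inv]
        rw [hval, neg_div]
        apply neg_nonpos_of_nonneg
        apply div_nonneg (Real.log_nonneg (by simp [Nat.cast_nonneg]))
        apply Real.log_nonneg
        linarith [hs1 n]
    have hdim := hLR (fun n => ((Mseq b c n : ℕ) : ℝ)) (fun n => 1 + 1/((n:ℝ)+1))
      hs1 ht1 hne hstop hlog
    have hls : Filter.limsup (fun n => Real.log ((Mseq b c (n+1) : ℕ) : ℝ) /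
        ∑ k ∈ Finset.Icc 1 n, Real.log ((Mseq b c k : ℕ) : ℝ)) atTop = b - 1 :=
      (ratio_tendsto b c hb hc).limsup_eq
    rw [hls, show (2:ℝ) + (b - 1) = b + 1 by ring] at hdim
    have h3 : (ENNReal.ofReal (b+1))⁻¹ = ENNReal.ofReal (1/(b+1)) := by
      rw [one_div, ← ENNReal.ofReal_inv_of_pos (by linarith)]
    rw [h3] at hdim
    rw [← hdim]
    exact dimH_mono (lower_incl b c hb hc)
end

section
/- Let 0 < β < 1, N ∈ ℕ, n_k = k^N, and define φ(n) = e^{n_k^β} + (n − n_k) for n_k ≤ n < n_{k+1}. Then limsup_{n→∞} (log log φ(n))/(log n) = lim_{n→∞} (log log φ(n))/(log n) = β. -/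
open Filter Real

set_option maxHeartbeats 1000000

theorem stmt_13 (β : ℝ) (hβ0 : 0 < β) (hβ1 : β < 1) (N : ℕ) (hN : 1 ≤ N)
    (φ : ℕ → ℝ)
    (hφ : ∀ k : ℕ, 1 ≤ k → ∀ n : ℕ, k ^ N ≤ n → n < (k + 1) ^ N →
      φ n = Real.exp (((k : ℝ) ^ N) ^ β) + ((n : ℝ) - (k : ℝ) ^ N)) :
    Filter.limsup (fun n => Real.log (Real.log (φ n)) / Real.log n) atTop = β ∧
    Tendsto (fun n => Real.log (Real.log (φ n)) / Real.log n) atTop (nhds β) := by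
  classical
  set kf : ℕ → ℕ := fun n => Nat.findGreatest (fun k => k ^ N ≤ n) n with hkf
  have hNpos : 0 < N := hN
  have hNR : (1:ℝ) ≤ (N:ℝ) := by exact_mod_cast hN
  -- spec of kf
  have hspec : ∀ n : ℕ, 1 ≤ n → 1 ≤ kf n ∧ kf n ^ N ≤ n ∧ n < (kf n + 1) ^ N := by
    intro n hn
    have hP1 : 1 ^ N ≤ n := by simpa using hn
    have h1 : 1 ≤ kf n := Nat.le_findGreatest hn hP1
    have h2 : kf n ^ N ≤ n := by
      have := Nat.findGreatest_spec (P := fun k => k ^ N ≤ n) (m := 1) hn hP1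
      simpa [hkf] using this
    have h3 : n < (kf n + 1) ^ N := by
      by_contra h
      push_neg at h
      have hb : kf n + 1 ≤ n := le_trans (Nat.le_self_pow hNpos.ne' _) h
      exact Nat.findGreatest_is_greatest (Nat.lt_succ_self _) hb h
    exact ⟨h1, h2, h3⟩
  -- eventual fact on reals: (N+1) log 2 + N log x ≤ x ^ (N*β)
  have hr : (0:ℝ) < (N:ℝ) * β := mul_pos (by exact_mod_cast hNpos) hβ0
  have hQreal : ∀ᶠ x : ℝ in atTop,
      ((N:ℝ)+1) * Real.log 2 + (N:ℝ) * Real.log x ≤ x ^ ((N:ℝ)*β) := by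
    have hlo := (isLittleO_log_rpow_atTop hr).bound
      (show (0:ℝ) < 1/(2*(N:ℝ)) by positivity)
    have h2 := (tendsto_rpow_atTop hr).eventually_ge_atTop (2*((N:ℝ)+1)*Real.log 2)
    filter_upwards [hlo, h2, eventually_ge_atTop (1:ℝ)] with x hx1 hx2 hx3
    have hxpos : (0:ℝ) < x := lt_of_lt_of_le one_pos hx3
    have hlogx : 0 ≤ Real.log x := Real.log_nonneg hx3
    have hrp : 0 < x ^ ((N:ℝ)*β) := Real.rpow_pos_of_pos hxpos _
    rw [Real.norm_eq_abs, Real.norm_eq_abs, abs_of_nonneg hlogx, abs_of_nonneg hrp.le] at hx1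
    have hNlog : (N:ℝ) * Real.log x ≤ x ^ ((N:ℝ)*β) / 2 := by
      have hmul := mul_le_mul_of_nonneg_left hx1 (show (0:ℝ) ≤ (N:ℝ) by positivity)
      have hNne : (N:ℝ) ≠ 0 := by positivity
      calc (N:ℝ) * Real.log x ≤ (N:ℝ) * (1/(2*(N:ℝ)) * x ^ ((N:ℝ)*β)) := hmul
        _ = x ^ ((N:ℝ)*β) / 2 := by field_simp
    have hlog2 : ((N:ℝ)+1) * Real.log 2 ≤ x ^ ((N:ℝ)*β) / 2 := by linarith
    linarith
  have hQnat : ∀ᶠ k : ℕ in atTop,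
      ((N:ℝ)+1) * Real.log 2 + (N:ℝ) * Real.log (k:ℝ) ≤ (k:ℝ) ^ ((N:ℝ)*β) :=
    tendsto_natCast_atTop_atTop.eventually hQreal
  obtain ⟨K, hK⟩ := eventually_atTop.mp hQnat
  -- eventual bound on kf
  have hbig : ∀ᶠ n : ℕ in atTop, K ≤ kf n := by
    rw [eventually_atTop]
    refine ⟨(K+1)^N, fun n hn => ?_⟩
    have hn1 : 1 ≤ n := le_trans (Nat.one_le_pow _ _ (Nat.succ_pos K)) hn
    obtain ⟨hk1, hkn, hkn'⟩ := hspec n hn1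
    by_contra h
    push_neg at h
    have hle : (kf n + 1) ^ N ≤ (K+1)^N := Nat.pow_le_pow_left (by omega) N
    omega
  set C : ℝ := (N:ℝ) * Real.log 2 with hC
  have hlog2pos : (0:ℝ) < Real.log 2 := Real.log_pos (by norm_num)
  have hmain : ∀ᶠ n : ℕ in atTop,
      β - C / Real.log n ≤ Real.log (Real.log (φ n)) / Real.log n ∧
      Real.log (Real.log (φ n)) / Real.log n ≤ β + C / Real.log n := by
    filter_upwards [eventually_ge_atTop 2, hbig] with n hn2 hnK
    have hn1 : 1 ≤ n := by omega
    obtain ⟨hk1, hkn, hkn'⟩ := hspec n hn1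
    set k := kf n with hkdef
    have hk1R : (1:ℝ) ≤ (k:ℝ) := by exact_mod_cast hk1
    set a : ℝ := (k:ℝ) ^ N with ha
    set t : ℝ := a ^ β with hta
    have ha1 : (1:ℝ) ≤ a := one_le_pow₀ hk1R
    have hapos : (0:ℝ) < a := lt_of_lt_of_le one_pos ha1
    have ht1 : (1:ℝ) ≤ t := by
      have := Real.rpow_le_rpow zero_le_one ha1 hβ0.le
      simpa [hta] using this
    have htpos : (0:ℝ) < t := lt_of_lt_of_le one_pos ht1
    have hφn : φ n = Real.exp t + ((n:ℝ) - a) := hφ k hk1 n hkn hkn'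
    have hna : a ≤ (n:ℝ) := by rw [ha]; exact_mod_cast hkn
    have hn1R : (1:ℝ) ≤ (n:ℝ) := le_trans ha1 hna
    have hnR2 : (2:ℝ) ≤ (n:ℝ) := by exact_mod_cast hn2
    have hlnpos : 0 < Real.log n := Real.log_pos (by linarith)
    set ln : ℝ := Real.log n with hln
    set lk : ℝ := Real.log k with hlk
    have hlk0 : 0 ≤ lk := Real.log_nonneg hk1R
    have hloga : Real.log a = (N:ℝ) * lk := by rw [ha, Real.log_pow]
    have hφ_lb : Real.exp t ≤ φ n := by rw [hφn]; linarith
    have hφpos : 0 < φ n := lt_of_lt_of_le (Real.exp_pos t) hφ_lb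
    have hlog_lb : t ≤ Real.log (φ n) := by
      have := Real.log_le_log (Real.exp_pos t) hφ_lb
      simpa using this
    have hlogφpos : 0 < Real.log (φ n) := lt_of_lt_of_le htpos hlog_lb
    have hlogt : Real.log t = β * ((N:ℝ) * lk) := by
      rw [hta, Real.log_rpow hapos, hloga]
    have hll_lb : β * ((N:ℝ) * lk) ≤ Real.log (Real.log (φ n)) := by
      rw [← hlogt]
      exact Real.log_le_log htpos hlog_lb
    have hnlt : (n:ℝ) < ((k:ℝ) + 1) ^ N := by exact_mod_cast hkn'
    have hk2' : ((k:ℝ) + 1) ^ N ≤ (2*(k:ℝ)) ^ N := by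
      apply pow_le_pow_left₀ (by linarith)
      linarith
    have hln_ub : ln ≤ (N:ℝ) * (Real.log 2 + lk) := by
      have h1 : ln ≤ Real.log ((2*(k:ℝ))^N) := by
        apply Real.log_le_log (by linarith)
        linarith
      rw [Real.log_pow, Real.log_mul (by norm_num) (by linarith)] at h1
      exact h1
    have hln_lb : (N:ℝ) * lk ≤ ln := by
      rw [← hloga]
      exact Real.log_le_log hapos hna
    constructor
    · -- lower bound
      have key1 : β * ln - C ≤ Real.log (Real.log (φ n)) := by
        have h1 : β * (ln - (N:ℝ)*Real.log 2) ≤ β * ((N:ℝ) * lk) := by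
          have : ln - (N:ℝ)*Real.log 2 ≤ (N:ℝ) * lk := by linarith
          exact mul_le_mul_of_nonneg_left this hβ0.le
        have h2 : β * ((N:ℝ)*Real.log 2) ≤ (N:ℝ)*Real.log 2 := by
          nlinarith [hlog2pos.le, hNR]
        rw [hC]
        nlinarith
      calc β - C / ln = (β * ln - C) / ln := by
            rw [sub_div, mul_div_cancel_right₀ _ hlnpos.ne']
        _ ≤ Real.log (Real.log (φ n)) / ln := (div_le_div_iff_of_pos_right hlnpos).mpr key1
    · -- upper bound
      have hQ : ((N:ℝ)+1) * Real.log 2 + (N:ℝ) * lk ≤ t := by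
        have h := hK k hnK
        have heq : (k:ℝ) ^ ((N:ℝ)*β) = t := by
          rw [Real.rpow_mul (by linarith : (0:ℝ) ≤ (k:ℝ)), Real.rpow_natCast]
        rw [heq] at h
        exact h
      have h2N : (1:ℝ) ≤ 2^N := one_le_pow₀ (by norm_num)
      have h2a : (1:ℝ) ≤ 2^N * a := by nlinarith
      have he1 : (1:ℝ) ≤ Real.exp t := Real.one_le_exp (by linarith)
      have hφ_ub : φ n ≤ Real.exp t * (1 + 2^N * a) := by
        rw [hφn]
        have hub1 : (n:ℝ) - a ≤ 2^N * a := by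
          have : (2*(k:ℝ))^N = 2^N * a := by rw [ha, mul_pow]
          nlinarith
        nlinarith
      have hlog_ub : Real.log (φ n) ≤ t + Real.log (1 + 2^N * a) := by
        have h := Real.log_le_log hφpos hφ_ub
        rwa [Real.log_mul (Real.exp_ne_zero t) (by linarith), Real.log_exp] at h
      have hlog1 : Real.log (1 + 2^N * a) ≤ ((N:ℝ)+1)*Real.log 2 + (N:ℝ)*lk := by
        have hle : 1 + 2^N * a ≤ 2^(N+1) * a := by
          have h2 : (2:ℝ)^(N+1) = 2 * 2^N := by ring
          nlinarith
        have h := Real.log_le_log (by linarith) hle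
        rw [Real.log_mul (by positivity) (by linarith), Real.log_pow, hloga] at h
        push_cast at h
        linarith
      have hlog_ub2 : Real.log (φ n) ≤ 2 * t := by linarith
      have hll_ub : Real.log (Real.log (φ n)) ≤ Real.log 2 + β * ln := by
        have h1 := Real.log_le_log hlogφpos hlog_ub2
        rw [Real.log_mul (by norm_num) htpos.ne', hlogt] at h1
        have h2 : β * ((N:ℝ)*lk) ≤ β * ln := mul_le_mul_of_nonneg_left hln_lb hβ0.le
        linarith
      have key2 : Real.log (Real.log (φ n)) ≤ β * ln + C := by
        rw [hC]
        nlinarith [hlog2pos.le, hNR]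
      calc Real.log (Real.log (φ n)) / ln ≤ (β * ln + C)/ln :=
            (div_le_div_iff_of_pos_right hlnpos).mpr key2
        _ = β + C / ln := by rw [add_div, mul_div_cancel_right₀ _ hlnpos.ne']
  have hCln : Tendsto (fun n : ℕ => C / Real.log n) atTop (nhds 0) :=
    Tendsto.div_atTop tendsto_const_nhds
      (Real.tendsto_log_atTop.comp tendsto_natCast_atTop_atTop)
  have hg : Tendsto (fun n : ℕ => β - C / Real.log n) atTop (nhds β) := by
    simpa using tendsto_const_nhds.sub hCln
  have hh : Tendsto (fun n : ℕ => β + C / Real.log n) atTop (nhds β) := by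
    simpa using tendsto_const_nhds.add hCln
  have key : Tendsto (fun n => Real.log (Real.log (φ n)) / Real.log n) atTop (nhds β) :=
    tendsto_of_tendsto_of_tendsto_of_le_of_le' hg hh
      (hmain.mono fun n h => h.1) (hmain.mono fun n h => h.2)
  exact ⟨key.limsup_eq, key⟩
end

section
/- Let 0 < β < 1, N ∈ ℕ, n_k = k^N, M ∈ ℕ, and let H_M be the set of x with a_{n_k}(x) = ⌊e^{n_k^β} − e^{n_{k-1}^β}⌋ for k ≥ 2 and 1 ≤ a_i(x) ≤ M for all other indices i. Then H_M ⊆ E_{φ(n)}, where φ(n) = e^{n_k^β} + (n − n_k) for n_k ≤ n < n_{k+1}; i.e., every x ∈ H_M satisfies lim_{n→∞} s_n(x)/φ(n) = 1. -/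
open Filter MeasureTheory Set

theorem stmt_14 (β : ℝ) (hβ0 : 0 < β) (hβ1 : β < 1) (N : ℕ) (hN : 1 ≤ N)
    (M : ℕ) (hM : 1 ≤ M)
    (φ : ℕ → ℝ)
    (hφ : ∀ k : ℕ, 1 ≤ k → ∀ n : ℕ, k ^ N ≤ n → n < (k + 1) ^ N →
      φ n = Real.exp (((k : ℝ) ^ N) ^ β) + ((n : ℝ) - (k : ℝ) ^ N))
    (x : ℝ) (hx : x ∈ Set.Ioo (0 : ℝ) 1) (hirr : Irrational x)
    (hspec : ∀ k : ℕ, 2 ≤ k →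
      cfA x (k ^ N) = ⌊Real.exp (((k : ℝ) ^ N) ^ β) - Real.exp ((((k : ℝ) - 1) ^ N) ^ β)⌋₊)
    (hrest : ∀ i : ℕ, 1 ≤ i → (∀ k : ℕ, 1 ≤ k → i ≠ k ^ N) →
      1 ≤ cfA x i ∧ cfA x i ≤ M) :
    Tendsto (fun n => (cfS x n : ℝ) / φ n) atTop (nhds 1) := by
  classical
  obtain ⟨hx0, hx1⟩ := hx
  -- the first partial quotient
  set a1 : ℕ := cfA x 1 with ha1def
  have ha1 : 1 ≤ a1 := by
    have h1 : (1 : ℝ) ≤ x⁻¹ := (one_le_inv_iff₀.2 ⟨hx0, hx1.le⟩)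
    have : (1 : ℕ) ≤ ⌊x⁻¹⌋₊ := Nat.le_floor (by exact_mod_cast h1)
    simpa [ha1def, cfA, gaussMap] using this
  set C : ℝ := (a1 : ℝ) + M + Real.exp 1 + 2 with hCdef
  have hC0 : 0 ≤ C := by positivity
  set F : ℕ → ℝ := fun j => Real.exp (((j : ℝ) ^ N) ^ β) with hFdef
  -- the majorant
  set h : ℕ → ℝ := fun n => C * ((n : ℝ) + 1) * Real.exp (-(((n : ℝ) / 2 ^ N) ^ β)) with hhdef
  -- key estimate
  have key : ∀ n : ℕ, 1 ≤ n → |(cfS x n : ℝ) / φ n - 1| ≤ h n := by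
    intro n hn
    set k : ℕ := Nat.findGreatest (fun k => k ^ N ≤ n) n with hkdef
    have hk1 : 1 ≤ k := Nat.le_findGreatest (P := fun k => k ^ N ≤ n) hn (by simpa using hn)
    have hkn : k ^ N ≤ n := Nat.findGreatest_spec (P := fun k => k ^ N ≤ n) (m := 1) hn (by simpa using hn)
    have hlt : n < (k + 1) ^ N := by
      by_contra hcon
      push_neg at hcon
      have hk1n : k + 1 ≤ n := le_trans (Nat.le_self_pow (by omega) _) hcon
      exact Nat.findGreatest_is_greatest (P := fun k => k ^ N ≤ n) (by omega) hk1n hcon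
    have hkle : k ≤ n := le_trans (Nat.le_self_pow (by omega) _) hkn
    -- the set of special indices
    set P : Finset ℕ := (Finset.Icc 1 k).image (fun j => j ^ N) with hPdef
    have hPsub : P ⊆ Finset.Icc 1 n := by
      intro j hj
      simp only [hPdef, Finset.mem_image, Finset.mem_Icc] at hj
      obtain ⟨m, ⟨hm1, hmk⟩, rfl⟩ := hj
      refine Finset.mem_Icc.2 ⟨Nat.one_le_pow _ _ (by omega), ?_⟩
      exact le_trans (Nat.pow_le_pow_left hmk N) hkn
    have hinj : Function.Injective (fun m : ℕ => m ^ N) :=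
      Nat.pow_left_injective (by omega)
    have hsplit : (cfS x n : ℝ) =
        (∑ j ∈ Finset.Icc 1 n \ P, (cfA x j : ℝ)) + ∑ j ∈ P, (cfA x j : ℝ) := by
      rw [cfS]
      push_cast
      rw [Finset.sum_sdiff hPsub]
    have hPsum : (∑ j ∈ P, (cfA x j : ℝ)) = ∑ j ∈ Finset.Icc 1 k, (cfA x (j ^ N) : ℝ) := by
      rw [hPdef, Finset.sum_image (fun a _ b _ hab => hinj hab)]
    have hIcc : Finset.Icc 1 k = insert 1 (Finset.Icc 2 k) := by
      ext j; simp only [Finset.mem_Icc, Finset.mem_insert]; omega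
    have h1P : (∑ j ∈ Finset.Icc 1 k, (cfA x (j ^ N) : ℝ))
        = (a1 : ℝ) + ∑ j ∈ Finset.Icc 2 k, (cfA x (j ^ N) : ℝ) := by
      rw [hIcc, Finset.sum_insert (by simp), one_pow]
    -- bounds on the value at special indices
    have hval : ∀ j : ℕ, 2 ≤ j → (cfA x (j ^ N) : ℝ) ≤ F j - F (j - 1)
        ∧ F j - F (j - 1) - 1 ≤ (cfA x (j ^ N) : ℝ) := by
      intro j hj
      have hcast : ((j : ℝ) - 1) = ((j - 1 : ℕ) : ℝ) := by
        have : (1 : ℕ) ≤ j := by omega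
        push_cast [this]; ring
      have hE : cfA x (j ^ N) = ⌊F j - F (j - 1)⌋₊ := by
        rw [hspec j hj, hFdef]
        congr 2
        rw [hcast]
      have hmono : F (j - 1) ≤ F j := by
        apply Real.exp_le_exp.2
        apply Real.rpow_le_rpow (by positivity) _ hβ0.le
        have : ((j - 1 : ℕ) : ℝ) ≤ (j : ℝ) := by
          exact_mod_cast Nat.sub_le j 1
        exact pow_le_pow_left₀ (by positivity) this N
      have hnn : 0 ≤ F j - F (j - 1) := by linarith
      constructor
      · rw [hE]; exact Nat.floor_le hnn
      · rw [hE]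
        have := Nat.sub_one_lt_floor (F j - F (j - 1))
        linarith
    -- telescoping sum
    have htel : (∑ j ∈ Finset.Icc 2 k, (F j - F (j - 1))) = F k - F 1 := by
      have hIco : Finset.Icc 2 k = Finset.Ico 2 (k + 1) := by
        ext j; simp [Nat.lt_succ_iff]
      rw [hIco, Finset.sum_Ico_eq_sum_range]
      have step1 : (∑ i ∈ Finset.range (k + 1 - 2), (F (2 + i) - F (2 + i - 1)))
          = ∑ i ∈ Finset.range (k + 1 - 2), (F (1 + (i + 1)) - F (1 + i)) := by
        apply Finset.sum_congr rfl
        intro i _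
        congr 2 <;> omega
      rw [step1, Finset.sum_range_sub (fun i => F (1 + i)) (k + 1 - 2)]
      have e1 : 1 + (k + 1 - 2) = k := by omega
      have e2 : 1 + 0 = 1 := by omega
      rw [e1, e2]
    have hcard2k : (Finset.Icc 2 k).card = k - 1 := by
      rw [Nat.card_Icc]
      omega
    have hPup : (∑ j ∈ Finset.Icc 2 k, (cfA x (j ^ N) : ℝ)) ≤ F k - F 1 := by
      calc (∑ j ∈ Finset.Icc 2 k, (cfA x (j ^ N) : ℝ))
          ≤ ∑ j ∈ Finset.Icc 2 k, (F j - F (j - 1)) := by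
            apply Finset.sum_le_sum
            intro j hj
            exact (hval j (Finset.mem_Icc.1 hj).1).1
        _ = F k - F 1 := htel
    have hPlo : F k - F 1 - ((k : ℝ) - 1) ≤ ∑ j ∈ Finset.Icc 2 k, (cfA x (j ^ N) : ℝ) := by
      have : (∑ j ∈ Finset.Icc 2 k, (F j - F (j - 1) - 1))
          ≤ ∑ j ∈ Finset.Icc 2 k, (cfA x (j ^ N) : ℝ) := by
        apply Finset.sum_le_sum
        intro j hj
        exact (hval j (Finset.mem_Icc.1 hj).1).2
      calc F k - F 1 - ((k : ℝ) - 1)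
          ≤ F k - F 1 - ((k : ℝ) - 1) := le_refl _
        _ = (∑ j ∈ Finset.Icc 2 k, (F j - F (j - 1) - 1)) + ((k - 1 : ℕ) : ℝ) - ((k:ℝ) - 1) := by
            rw [Finset.sum_sub_distrib, htel, Finset.sum_const, hcard2k]
            push_cast
            ring
        _ ≤ (∑ j ∈ Finset.Icc 2 k, (cfA x (j ^ N) : ℝ)) := by
            have hcast : ((k - 1 : ℕ) : ℝ) ≤ (k : ℝ) - 1 + 1 := by
              push_cast [hk1]
              norm_num
            have hcast2 : ((k - 1 : ℕ) : ℝ) = (k : ℝ) - 1 := by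
              push_cast [hk1]
              ring
            linarith
    -- the non-special indices
    have hDmem : ∀ j ∈ Finset.Icc 1 n \ P, 1 ≤ cfA x j ∧ cfA x j ≤ M := by
      intro j hj
      rw [Finset.mem_sdiff, Finset.mem_Icc] at hj
      obtain ⟨⟨hj1, hjn⟩, hjP⟩ := hj
      refine hrest j hj1 ?_
      intro m hm hjm
      apply hjP
      rw [hPdef]
      refine Finset.mem_image.2 ⟨m, Finset.mem_Icc.2 ⟨hm, ?_⟩, hjm.symm⟩
      subst hjm
      have : m ^ N < (k + 1) ^ N := lt_of_le_of_lt hjn hlt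
      have := (Nat.pow_lt_pow_iff_left (by omega : N ≠ 0)).1 this
      omega
    have hcardD : (Finset.Icc 1 n \ P).card = n - k := by
      rw [Finset.card_sdiff_of_subset hPsub, Nat.card_Icc]
      have : P.card = k := by
        rw [hPdef, Finset.card_image_of_injective _ hinj, Nat.card_Icc]
        omega
      omega
    have hDlo : ((n : ℝ) - k) ≤ ∑ j ∈ Finset.Icc 1 n \ P, (cfA x j : ℝ) := by
      have h1 : ((Finset.Icc 1 n \ P).card) • (1 : ℝ) ≤ ∑ j ∈ Finset.Icc 1 n \ P, (cfA x j : ℝ) := by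
        apply Finset.card_nsmul_le_sum
        intro j hj
        show (1 : ℝ) ≤ (cfA x j : ℝ)
        exact_mod_cast (hDmem j hj).1
      rw [hcardD, nsmul_eq_mul, mul_one] at h1
      have h2 : ((n - k : ℕ) : ℝ) = (n : ℝ) - k := by push_cast [hkle]; ring
      linarith [h2 ▸ h1]
    have hDup : (∑ j ∈ Finset.Icc 1 n \ P, (cfA x j : ℝ)) ≤ (M : ℝ) * ((n : ℝ) - k) := by
      have h1 : (∑ j ∈ Finset.Icc 1 n \ P, (cfA x j : ℝ))
          ≤ ((Finset.Icc 1 n \ P).card : ℝ) * (M : ℝ) := by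
        have := Finset.sum_le_card_nsmul (Finset.Icc 1 n \ P) (fun j => (cfA x j : ℝ)) (M : ℝ)
          (fun j hj => by
            show (cfA x j : ℝ) ≤ (M : ℝ)
            exact_mod_cast (hDmem j hj).2)
        simpa [nsmul_eq_mul] using this
      rw [hcardD] at h1
      have : ((n - k : ℕ) : ℝ) = (n : ℝ) - k := by push_cast [hkle]; ring
      rw [this] at h1
      linarith
    -- the value of φ
    have hφn : φ n = F k + ((n : ℝ) - (k : ℝ) ^ N) := by
      rw [hφ k hk1 n hkn hlt, hFdef]
    have hkNn : ((k : ℝ) ^ N) ≤ (n : ℝ) := by exact_mod_cast hkn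
    have hFk0 : 0 < F k := Real.exp_pos _
    have hφpos : 0 < φ n := by rw [hφn]; linarith
    have hφge : F k ≤ φ n := by rw [hφn]; linarith
    -- total bound on |s_n - φ n|
    have hF1 : F 1 = Real.exp 1 := by
      simp [hFdef, Real.one_rpow]
    rw [hF1] at hPup hPlo
    have hub : (cfS x n : ℝ) - φ n ≤ C * ((n : ℝ) + 1) := by
      rw [hsplit, hPsum, h1P, hφn]
      have hkNnn : (0 : ℝ) ≤ (k : ℝ) ^ N := by positivity
      have hkr : (0 : ℝ) ≤ (k : ℝ) := by positivity
      have hMr : (1 : ℝ) ≤ (M : ℝ) := by exact_mod_cast hM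
      have hnk : (k : ℝ) ≤ (n : ℝ) := by exact_mod_cast hkle
      rw [hCdef]
      have hMk : (0 : ℝ) ≤ (M : ℝ) * k := by positivity
      have hMexp : (M : ℝ) * ((n : ℝ) - k) = (M : ℝ) * n - (M : ℝ) * k := by ring
      have ha1n : (0 : ℝ) ≤ (a1 : ℝ) * n := by positivity
      have hepos : (0 : ℝ) ≤ Real.exp 1 * ((n : ℝ) + 1) := by positivity
      have hexpand : ((a1 : ℝ) + M + Real.exp 1 + 2) * ((n : ℝ) + 1)
          = (a1 : ℝ) * n + a1 + (M : ℝ) * n + M + Real.exp 1 * ((n : ℝ) + 1)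
            + 2 * (n : ℝ) + 2 := by ring
      linarith [hDup, hPup, Real.exp_pos (1 : ℝ), hkNn,
        (by exact_mod_cast hn : (1 : ℝ) ≤ (n : ℝ))]
    have hlb : -(C * ((n : ℝ) + 1)) ≤ (cfS x n : ℝ) - φ n := by
      rw [hsplit, hPsum, h1P, hφn]
      have hkr1 : (1 : ℝ) ≤ (k : ℝ) := by exact_mod_cast hk1
      have hkN1 : (1 : ℝ) ≤ (k : ℝ) ^ N := one_le_pow₀ hkr1
      have hnk : (k : ℝ) ≤ (n : ℝ) := by exact_mod_cast hkle
      have ha1r : (1 : ℝ) ≤ (a1 : ℝ) := by exact_mod_cast ha1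
      have hMr : (0 : ℝ) ≤ (M : ℝ) := by positivity
      rw [hCdef]
      have e1 : Real.exp 1 * 1 ≤ Real.exp 1 * ((n : ℝ) + 1) := by
        apply mul_le_mul_of_nonneg_left _ (Real.exp_pos 1).le
        linarith [(by exact_mod_cast hn : (1 : ℝ) ≤ (n : ℝ))]
      have e2 : (0 : ℝ) ≤ ((a1 : ℝ) + M) * ((n : ℝ) + 1) := by positivity
      have hexpand : ((a1 : ℝ) + M + Real.exp 1 + 2) * ((n : ℝ) + 1)
          = ((a1 : ℝ) + M) * ((n : ℝ) + 1) + Real.exp 1 * ((n : ℝ) + 1)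
            + 2 * (n : ℝ) + 2 := by ring
      linarith [hDlo, hPlo, (by exact_mod_cast hn : (1 : ℝ) ≤ (n : ℝ))]
    have habs : |(cfS x n : ℝ) - φ n| ≤ C * ((n : ℝ) + 1) := abs_le.2 ⟨hlb, hub⟩
    -- lower bound on φ via exp((n/2^N)^β)
    have hn2 : (n : ℕ) < 2 ^ N * k ^ N := by
      calc n < (k + 1) ^ N := hlt
        _ ≤ (2 * k) ^ N := Nat.pow_le_pow_left (by omega) N
        _ = 2 ^ N * k ^ N := by rw [mul_pow]
    have hdivle : ((n : ℝ) / 2 ^ N) ≤ (k : ℝ) ^ N := by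
      rw [div_le_iff₀ (by positivity)]
      calc (n : ℝ) ≤ (2 ^ N * k ^ N : ℕ) := by exact_mod_cast hn2.le
        _ = (k : ℝ) ^ N * 2 ^ N := by push_cast; ring
    have hexple : Real.exp (((n : ℝ) / 2 ^ N) ^ β) ≤ F k := by
      apply Real.exp_le_exp.2
      exact Real.rpow_le_rpow (by positivity) hdivle hβ0.le
    have hexpφ : Real.exp (((n : ℝ) / 2 ^ N) ^ β) ≤ φ n := le_trans hexple hφge
    -- conclude
    have habsq : |(cfS x n : ℝ) / φ n - 1| = |(cfS x n : ℝ) - φ n| / φ n := by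
      rw [div_sub_one hφpos.ne', abs_div, abs_of_pos hφpos]
    rw [habsq, hhdef]
    calc |(cfS x n : ℝ) - φ n| / φ n
        ≤ (C * ((n : ℝ) + 1)) / Real.exp (((n : ℝ) / 2 ^ N) ^ β) := by
          apply div_le_div₀ (by positivity) habs (Real.exp_pos _) hexpφ
      _ = C * ((n : ℝ) + 1) * Real.exp (-(((n : ℝ) / 2 ^ N) ^ β)) := by
          rw [Real.exp_neg, div_eq_mul_inv]
  -- the majorant tends to zero
  have hh0 : Tendsto h atTop (nhds 0) := by
    set u : ℕ → ℝ := fun n => ((n : ℝ) / 2 ^ N) ^ β with hudef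
    have hu : Tendsto u atTop atTop := by
      apply (tendsto_rpow_atTop hβ0).comp
      exact (tendsto_natCast_atTop_atTop).atTop_div_const (by positivity)
    have hG : Tendsto (fun v : ℝ => (2 * 2 ^ N * C) * (v ^ (β⁻¹) * Real.exp (-1 * v)))
        atTop (nhds 0) := by
      have := (tendsto_rpow_mul_exp_neg_mul_atTop_nhds_zero β⁻¹ 1 one_pos).const_mul
        (2 * 2 ^ N * C)
      simpa using this
    have hcomp : Tendsto (fun n : ℕ => (2 * 2 ^ N * C) * ((u n) ^ (β⁻¹)
        * Real.exp (-1 * u n))) atTop (nhds 0) := hG.comp hu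
    apply squeeze_zero' (g := fun n : ℕ => (2 * 2 ^ N * C) * ((u n) ^ (β⁻¹)
        * Real.exp (-1 * u n))) _ _ hcomp
    · filter_upwards with n
      rw [hhdef]
      positivity
    · filter_upwards [eventually_ge_atTop (2 ^ N)] with n hn
      have hdiv1 : (1 : ℝ) ≤ (n : ℝ) / 2 ^ N := by
        rw [le_div_iff₀ (by positivity), one_mul]
        exact_mod_cast hn
      have hrr : (u n) ^ (β⁻¹) = (n : ℝ) / 2 ^ N := by
        rw [hudef]
        exact Real.rpow_rpow_inv (by positivity) hβ0.ne'
      rw [hhdef, hrr]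
      have h2N : (1 : ℝ) ≤ (2 : ℝ) ^ N := one_le_pow₀ (by norm_num)
      have hnr : (1 : ℝ) ≤ (n : ℝ) := le_trans h2N (by exact_mod_cast hn)
      have hexp : (0 : ℝ) < Real.exp (-(((n : ℝ) / 2 ^ N) ^ β)) := Real.exp_pos _
      have heq : Real.exp (-1 * u n) = Real.exp (-(((n : ℝ) / 2 ^ N) ^ β)) := by
        rw [hudef]; ring_nf
      rw [heq]
      have hle : C * ((n : ℝ) + 1) ≤ 2 * 2 ^ N * C * ((n : ℝ) / 2 ^ N) := by
        have h2 : 2 * 2 ^ N * C * ((n : ℝ) / 2 ^ N) = 2 * C * (n : ℝ) := by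
          field_simp
        rw [h2]
        nlinarith
      calc C * ((n : ℝ) + 1) * Real.exp (-(((n : ℝ) / 2 ^ N) ^ β))
          ≤ 2 * 2 ^ N * C * ((n : ℝ) / 2 ^ N) * Real.exp (-(((n : ℝ) / 2 ^ N) ^ β)) := by
            exact mul_le_mul_of_nonneg_right hle hexp.le
        _ = 2 * 2 ^ N * C * ((n : ℝ) / 2 ^ N * Real.exp (-(((n : ℝ) / 2 ^ N) ^ β))) := by ring
  -- conclude
  have hsub : Tendsto (fun n => (cfS x n : ℝ) / φ n - 1) atTop (nhds 0) := by
    apply squeeze_zero_norm' _ hh0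
    filter_upwards [eventually_ge_atTop 1] with n hn
    simpa [Real.norm_eq_abs] using key n hn
  have := hsub.add (tendsto_const_nhds (x := (1 : ℝ)) (f := atTop))
  simpa using this
end
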